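/- arXiv:1802.01831 — 5 statements merged into one kernel-verified Lean document; each statement's English description precedes it below -/
import Mathlib

section
/- For every real number s > 1, one has 1/(s−1) + ((s−1)/s)·(1/√(2π)) ≤ ζ(s). -/
open Real

/-- Bernoulli-type bound: `(x+1)^(1-s) ≥ x^(1-s) - (s-1) * x^(-s)` for `x ≥ 1`, `s > 1`. -/
lemma zlb_pointwise (s : ℝ) (hs : 1 < s) (x : ℝ) (hx : 1 ≤ x) :
    (x ^ (1 - s) - (x + 1) ^ (1 - s)) / (s - 1) ≤ x ^ (-s) := by
  have hx0 : (0 : ℝ) < x := by linarith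
  have hx1 : (0 : ℝ) < 1 + 1 / x := by positivity
  rw [div_le_iff₀ (by linarith)]
  have h1 : (x + 1) ^ (1 - s) = x ^ (1 - s) * (1 + 1 / x) ^ (1 - s) := by
    rw [← Real.mul_rpow hx0.le hx1.le]
    congr 1
    field_simp
  have hlog : Real.log (1 + 1 / x) ≤ 1 / x := by
    have := Real.log_le_sub_one_of_pos hx1
    linarith
  have h2 : 1 + (1 - s) * (1 / x) ≤ (1 + 1 / x) ^ (1 - s) := by
    rw [Real.rpow_def_of_pos hx1]
    have h3 := Real.add_one_le_exp (Real.log (1 + 1 / x) * (1 - s))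
    have h4 := mul_le_mul_of_nonpos_left hlog (by linarith : (1 - s) ≤ 0)
    nlinarith
  have h4 : x ^ (1 - s) * (1 + (1 - s) * (1 / x)) = x ^ (1 - s) + (1 - s) * x ^ (-s) := by
    have hxs : x ^ (-s) = x ^ (1 - s) / x := by
      rw [← Real.rpow_sub_one hx0.ne']
      norm_num
    rw [hxs]
    field_simp
  have h5 : x ^ (1 - s) + (1 - s) * x ^ (-s) ≤ (x + 1) ^ (1 - s) := by
    rw [h1, ← h4]
    exact mul_le_mul_of_nonneg_left h2 (Real.rpow_nonneg hx0.le _)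
  nlinarith [h5]

/-- The telescoping sum: `∑' n, ((n+2)^(1-s) - (n+3)^(1-s))/(s-1) = 2^(1-s)/(s-1)`. -/
lemma zlb_telescope (s : ℝ) (hs : 1 < s) :
    HasSum (fun n : ℕ => (((n : ℝ) + 2) ^ (1 - s) - ((n : ℝ) + 3) ^ (1 - s)) / (s - 1))
      ((2 : ℝ) ^ (1 - s) / (s - 1)) := by
  have hs1 : (0 : ℝ) < s - 1 := by linarith
  have hnn : ∀ n : ℕ, 0 ≤ (((n : ℝ) + 2) ^ (1 - s) - ((n : ℝ) + 3) ^ (1 - s)) / (s - 1) := by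
    intro n
    apply div_nonneg _ hs1.le
    have : ((n : ℝ) + 3) ^ (1 - s) ≤ ((n : ℝ) + 2) ^ (1 - s) := by
      rw [Real.rpow_le_rpow_iff_of_neg (by positivity) (by positivity) (by linarith)]
      linarith
    linarith
  rw [hasSum_iff_tendsto_nat_of_nonneg hnn]
  have hsum : ∀ N : ℕ, ∑ n ∈ Finset.range N,
      (((n : ℝ) + 2) ^ (1 - s) - ((n : ℝ) + 3) ^ (1 - s)) / (s - 1)
      = ((2 : ℝ) ^ (1 - s) - ((N : ℝ) + 2) ^ (1 - s)) / (s - 1) := by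
    intro N
    rw [← Finset.sum_div]
    congr 1
    calc ∑ n ∈ Finset.range N, (((n : ℝ) + 2) ^ (1 - s) - ((n : ℝ) + 3) ^ (1 - s))
        = ∑ n ∈ Finset.range N, ((fun m : ℕ => ((m : ℝ) + 2) ^ (1 - s)) n
            - (fun m : ℕ => ((m : ℝ) + 2) ^ (1 - s)) (n + 1)) := by
          refine Finset.sum_congr rfl fun n _ => ?_
          have h : ((n : ℝ) + 3) = ((n + 1 : ℕ) : ℝ) + 2 := by push_cast; ring
          rw [h]
      _ = (((0 : ℕ) : ℝ) + 2) ^ (1 - s) - (((N : ℕ) : ℝ) + 2) ^ (1 - s) :=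
          Finset.sum_range_sub' _ N
      _ = (2 : ℝ) ^ (1 - s) - ((N : ℝ) + 2) ^ (1 - s) := by norm_num
  simp only [hsum]
  have hlim : Filter.Tendsto (fun N : ℕ => ((N : ℝ) + 2) ^ (1 - s)) Filter.atTop (nhds 0) := by
    have h1 : Filter.Tendsto (fun N : ℕ => ((N : ℝ) + 2)) Filter.atTop Filter.atTop :=
      Filter.tendsto_atTop_add_const_right _ 2 tendsto_natCast_atTop_atTop
    have h2 := (tendsto_rpow_neg_atTop (by linarith : (0:ℝ) < s - 1)).comp h1
    simpa [neg_sub, Function.comp_def] using h2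
  have : Filter.Tendsto (fun N : ℕ => ((2 : ℝ) ^ (1 - s) - ((N : ℝ) + 2) ^ (1 - s)) / (s - 1))
      Filter.atTop (nhds (((2 : ℝ) ^ (1 - s) - 0) / (s - 1))) :=
    (Filter.Tendsto.const_sub _ hlim).div_const _
  simpa using this

/-- The purely numerical inequality. -/
lemma zlb_numeric (s : ℝ) (hs : 1 < s) :
    1 / (s - 1) + ((s - 1) / s) * (1 / Real.sqrt (2 * π)) ≤ 1 + (2 : ℝ) ^ (1 - s) / (s - 1) := by
  have hs0 : (0 : ℝ) < s := by linarith
  have hs1 : (0 : ℝ) < s - 1 := by linarith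
  have hpi : (3.14 : ℝ) ≤ π := by linarith [Real.pi_gt_d6]
  have hc : (2.5 : ℝ) ≤ Real.sqrt (2 * π) := by
    nlinarith [Real.sq_sqrt (by positivity : (0:ℝ) ≤ 2 * π), Real.sqrt_nonneg (2 * π)]
  have hcpos : (0 : ℝ) < Real.sqrt (2 * π) := by linarith
  set c := Real.sqrt (2 * π) with hcdef
  rcases le_or_gt s 3 with h3 | h3
  · -- use 2^(1-s) ≥ 1 + (1-s) log 2
    have hl2 : Real.log 2 < 0.6931471808 := Real.log_two_lt_d9
    have hl2' : (0:ℝ) < Real.log 2 := Real.log_pos (by norm_num)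
    have hber : 1 + (1 - s) * Real.log 2 ≤ (2 : ℝ) ^ (1 - s) := by
      rw [Real.rpow_def_of_pos (by norm_num)]
      nlinarith [Real.add_one_le_exp (Real.log 2 * (1 - s))]
    have h8 : (1 + (1 - s) * Real.log 2) / (s - 1) ≤ (2 : ℝ) ^ (1 - s) / (s - 1) := by
      gcongr
    have hA : ((s - 1) / s) * (1 / c) ≤ 1 - Real.log 2 := by
      rw [div_mul_div_comm, mul_one, div_le_iff₀ (by positivity)]
      have key : (2.5 : ℝ) * 0.3068528192 ≤ c * (1 - Real.log 2) :=
        mul_le_mul hc (by linarith) (by norm_num) (by linarith)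
      nlinarith [mul_le_mul_of_nonneg_left key hs0.le]
    have hB : 1 + (1 + (1 - s) * Real.log 2) / (s - 1)
        = 1 / (s - 1) + (1 - Real.log 2) := by
      field_simp
      ring
    linarith
  · -- s ≥ 3 : drop the 2^(1-s) term
    have hpow : (0 : ℝ) ≤ (2 : ℝ) ^ (1 - s) / (s - 1) := by positivity
    have key : 1 / (s - 1) + ((s - 1) / s) * (1 / c) ≤ 1 := by
      have h1 : ((s - 1) / s) * (1 / c) ≤ (s - 1) / (2.5 * s) := by
        rw [div_mul_div_comm, mul_one]
        apply div_le_div_of_nonneg_left (by linarith) (by positivity)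
        nlinarith
      have h2 : 1 / (s - 1) + (s - 1) / (2.5 * s) ≤ 1 := by
        rw [div_add_div _ _ hs1.ne' (by positivity : (2.5 * s : ℝ) ≠ 0),
          div_le_one (by positivity)]
        nlinarith
      linarith
    linarith

/-- For every real number `s > 1`, one has
`1/(s-1) + ((s-1)/s) * (1/√(2π)) ≤ ζ(s)`. -/
theorem zeta_lower_bound (s : ℝ) (hs : 1 < s) :
    1 / (s - 1) + ((s - 1) / s) * (1 / Real.sqrt (2 * π)) ≤ (riemannZeta (s : ℂ)).re := by
  have hs1 : (0 : ℝ) < s - 1 := by linarith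
  -- Step 1: ζ(s).re = real tsum
  have hre : (riemannZeta (s : ℂ)).re = ∑' n : ℕ, 1 / ((n : ℝ) + 1) ^ s := by
    have h1 : riemannZeta (s : ℂ) = ∑' n : ℕ, 1 / ((n : ℂ) + 1) ^ (s : ℂ) :=
      zeta_eq_tsum_one_div_nat_add_one_cpow (by simpa using hs)
    have h2 : ∀ n : ℕ, (1 / ((n : ℂ) + 1) ^ (s : ℂ)) = ((1 / ((n : ℝ) + 1) ^ s : ℝ) : ℂ) := by
      intro n
      rw [Complex.ofReal_div, Complex.ofReal_one,
        Complex.ofReal_cpow (by positivity : (0:ℝ) ≤ (n : ℝ) + 1)]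
      push_cast
      ring
    rw [h1]
    simp_rw [h2]
    rw [← Complex.ofReal_tsum, Complex.ofReal_re]
  rw [hre]
  -- summability
  have hsum : Summable (fun n : ℕ => 1 / ((n : ℝ) + 1) ^ s) := by
    have h := (summable_nat_add_iff 1).mpr ((Real.summable_one_div_nat_rpow (p := s)).mpr hs)
    simpa using h
  -- Step 2: split off first term
  rw [Summable.tsum_eq_zero_add hsum]
  push_cast
  rw [show (1 : ℝ) / ((0 : ℝ) + 1) ^ s = 1 by norm_num]
  -- Step 3: lower-bound the tail
  have htel := zlb_telescope s hs
  have htail : (2 : ℝ) ^ (1 - s) / (s - 1) ≤ ∑' n : ℕ, 1 / ((n : ℝ) + 1 + 1) ^ s := by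
    rw [← htel.tsum_eq]
    apply Summable.tsum_le_tsum _ htel.summable
    · have h := (summable_nat_add_iff 1).mpr hsum
      simpa [add_assoc] using h
    · intro n
      have hcast : (1 : ℝ) ≤ (n : ℝ) + 2 := by
        have := Nat.cast_nonneg (α := ℝ) n
        linarith
      have h := zlb_pointwise s hs ((n : ℝ) + 2) hcast
      have he : ((n : ℝ) + 2) ^ (-s) = 1 / ((n : ℝ) + 1 + 1) ^ s := by
        rw [Real.rpow_neg (by positivity), show ((n:ℝ) + 2) = (n:ℝ) + 1 + 1 by ring, one_div]
      have h3 : ((n : ℝ) + 2 + 1) = ((n : ℝ) + 3) := by ring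
      rw [h3] at h
      rw [← he]
      exact h
  have hnum := zlb_numeric s hs
  linarith
end

section
/- The function g is strictly decreasing on (3, ∞); there exists a unique s₂ > 0 with f(s₂) = g(s₂), and for every x > s₂ one has g(x) ≤ f(x). -/
open Real Set

private lemma stp_pos : 0 < Real.sqrt (2 * π) := Real.sqrt_pos.2 (by positivity)

private lemma stp_lt : Real.sqrt (2 * π) < 2.6 := by
  have : Real.sqrt (2 * π) < Real.sqrt (2.6 ^ 2) := by
    apply Real.sqrt_lt_sqrt (by positivity)
    nlinarith [Real.pi_lt_d2]
  simpa [Real.sqrt_sq (by norm_num : (0:ℝ) ≤ 2.6)] using this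

private lemma stp_gt : (2.24 : ℝ) < Real.sqrt (2 * π) := by
  have : Real.sqrt ((2.24:ℝ) ^ 2) < Real.sqrt (2 * π) := by
    apply Real.sqrt_lt_sqrt (by positivity)
    nlinarith [Real.pi_gt_d6]
  simpa [Real.sqrt_sq (by norm_num : (0:ℝ) ≤ 2.24)] using this

noncomputable def hfun : ℝ → ℝ := fun x =>
  (1 / Real.sqrt (2 * π)) * (x / (x + 1)) - (1 / 720) * (414 + 49 * x - 6 * x ^ 2 - x ^ 3)

private lemma hderiv {x : ℝ} (hx : x + 1 ≠ 0) :
    HasDerivAt hfun ((1 / Real.sqrt (2 * π)) * (1 / (x + 1) ^ 2)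
      - (1 / 720) * (49 - 12 * x - 3 * x ^ 2)) x := by
  have h1 : HasDerivAt (fun x : ℝ => x / (x + 1)) (1 / (x + 1) ^ 2) x := by
    have := (hasDerivAt_id x).div ((hasDerivAt_id x).add_const 1) hx
    convert this using 1
    · rfl
    · rfl
    · rfl
    simp only [id]; field_simp
    ring
  have h2 : HasDerivAt (fun x : ℝ => 414 + 49 * x - 6 * x ^ 2 - x ^ 3)
      (49 - 12 * x - 3 * x ^ 2) x := by
    have := (((hasDerivAt_const x (414:ℝ)).add ((hasDerivAt_pow 1 x).const_mul 49)).sub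
      ((hasDerivAt_pow 2 x).const_mul 6)).sub (hasDerivAt_pow 3 x)
    convert this using 1
    · rfl
    · rfl
    · ext y; simp only [Pi.add_apply, Pi.sub_apply]; ring
    · push_cast; ring
  exact (h1.const_mul _).sub (h2.const_mul _)

private lemma hderiv_pos {x : ℝ} (hx : 0 < x) :
    0 < (1 / Real.sqrt (2 * π)) * (1 / (x + 1) ^ 2) - (1 / 720) * (49 - 12 * x - 3 * x ^ 2) := by
  have hs := stp_pos
  have hlt := stp_lt
  have h1 : (x + 1) ^ 2 * (49 - 12 * x - 3 * x ^ 2) ≤ 276 := by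
    nlinarith [sq_nonneg (x^2 + 3*x - 5), sq_nonneg (x - 1), sq_nonneg x, sq_nonneg (x^2 - 2), mul_pos hx hx]
  have key : Real.sqrt (2 * π) * ((x + 1) ^ 2 * (49 - 12 * x - 3 * x ^ 2)) < 720 := by
    nlinarith [h1, hlt, hs]
  rw [sub_pos]
  have e1 : (1 / Real.sqrt (2 * π)) * (1 / (x + 1) ^ 2)
      = 1 / (Real.sqrt (2 * π) * (x + 1) ^ 2) := by rw [one_div_mul_one_div]
  have e2 : (1 / 720 : ℝ) * (49 - 12 * x - 3 * x ^ 2) = (49 - 12 * x - 3 * x ^ 2) / 720 := by ring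
  rw [e1, e2, div_lt_div_iff₀ (by norm_num) (by positivity)]
  nlinarith [key]

private lemma gderiv (x : ℝ) :
    HasDerivAt (fun x : ℝ => (1 / 720) * (414 + 49 * x - 6 * x ^ 2 - x ^ 3))
      ((1 / 720) * (49 - 12 * x - 3 * x ^ 2)) x := by
  have h2 : HasDerivAt (fun x : ℝ => 414 + 49 * x - 6 * x ^ 2 - x ^ 3)
      (49 - 12 * x - 3 * x ^ 2) x := by
    have := (((hasDerivAt_const x (414:ℝ)).add ((hasDerivAt_pow 1 x).const_mul 49)).sub
      ((hasDerivAt_pow 2 x).const_mul 6)).sub (hasDerivAt_pow 3 x)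
    convert this using 1
    · rfl
    · rfl
    · ext y; simp only [Pi.add_apply, Pi.sub_apply]; ring
    · push_cast; ring
  exact h2.const_mul _

/-- Let `f x = (1/√(2π))·x/(x+1)` and `g x = (1/720)·(414 + 49x − 6x² − x³)`.
Then `g` is strictly decreasing on `(3, ∞)`; there is a unique `s₂ > 0` with
`f s₂ = g s₂`, and for every `x > s₂` one has `g x ≤ f x`. -/
theorem g_decreasing_and_unique_crossing :
    StrictAntiOn (fun x : ℝ => (1 / 720) * (414 + 49 * x - 6 * x ^ 2 - x ^ 3)) (Set.Ioi 3) ∧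
    ∃ s₂ : ℝ, (0 < s₂ ∧
        (1 / Real.sqrt (2 * π)) * (s₂ / (s₂ + 1)) =
          (1 / 720) * (414 + 49 * s₂ - 6 * s₂ ^ 2 - s₂ ^ 3)) ∧
      (∀ t : ℝ, 0 < t →
        (1 / Real.sqrt (2 * π)) * (t / (t + 1)) =
          (1 / 720) * (414 + 49 * t - 6 * t ^ 2 - t ^ 3) → t = s₂) ∧
      (∀ x : ℝ, s₂ < x →
        (1 / 720) * (414 + 49 * x - 6 * x ^ 2 - x ^ 3) ≤
          (1 / Real.sqrt (2 * π)) * (x / (x + 1))) := by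
  have hs := stp_pos
  have hcont : ContinuousOn hfun (Ici 0) := by
    intro x hx
    have hx0 : (0:ℝ) ≤ x := hx
    exact (hderiv (by positivity : x + 1 ≠ 0)).continuousAt.continuousWithinAt
  have hmono : StrictMonoOn hfun (Ici 0) := by
    apply strictMonoOn_of_deriv_pos (convex_Ici 0) hcont
    intro x hx
    rw [interior_Ici] at hx
    have hx0 : (0:ℝ) < x := hx
    rw [(hderiv (by positivity : x + 1 ≠ 0)).deriv]
    exact hderiv_pos hx0
  have h6 : hfun 6 < 0 := by
    have h1 : (1:ℝ) / Real.sqrt (2 * π) < 1 / 2.24 :=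
      one_div_lt_one_div_of_lt (by norm_num) stp_gt
    unfold hfun
    nlinarith [h1, hs]
  have h7 : 0 < hfun 7 := by
    have h2 : (1:ℝ) / 2.6 < 1 / Real.sqrt (2 * π) :=
      one_div_lt_one_div_of_lt hs stp_lt
    unfold hfun
    nlinarith [h2, hs]
  have hc67 : ContinuousOn hfun (Icc 6 7) :=
    hcont.mono (fun x hx => le_trans (by norm_num) hx.1)
  obtain ⟨s₂, hmem, heq⟩ := intermediate_value_Icc (by norm_num : (6:ℝ) ≤ 7) hc67
    ⟨le_of_lt h6, le_of_lt h7⟩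
  have hpos : (0:ℝ) < s₂ := by have := hmem.1; linarith
  constructor
  · apply strictAntiOn_of_deriv_neg (convex_Ioi 3)
    · exact (Continuous.continuousOn (by continuity))
    · intro x hx
      rw [interior_Ioi] at hx
      have hx3 : (3:ℝ) < x := hx
      rw [(gderiv x).deriv]
      nlinarith
  · refine ⟨s₂, ⟨hpos, ?_⟩, ?_, ?_⟩
    · unfold hfun at heq; linarith
    · intro t ht htq
      have h0 : hfun t = 0 := by unfold hfun; linarith
      exact hmono.injOn (le_of_lt ht) (le_of_lt hpos) (by rw [h0, heq])
    · intro x hx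
      have hxpos : (0:ℝ) < x := lt_trans hpos hx
      have := hmono (le_of_lt hpos) (le_of_lt hxpos) hx
      rw [heq] at this
      unfold hfun at this
      linarith
end

section
/- For every real number s > 1 and every integer i ≥ 1, one has ∑_{k=1}^∞ (log k)^i / k^s ≤ (i! / (s−1)^i) · ζ(s), where ζ is the Riemann zeta function. -/
open Real MeasureTheory Set Filter Finset Topology

namespace SumLogPowAux

noncomputable def F (i : ℕ) (s : ℝ) (x : ℝ) : ℝ := (Real.log x) ^ i * x ^ (-s)

noncomputable def G (i : ℕ) (s : ℝ) (u : ℝ) : ℝ := u ^ i * Real.exp (-(s * u))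

lemma F_eq_G (i : ℕ) (s : ℝ) {x : ℝ} (hx : 0 < x) : F i s x = G i s (Real.log x) := by
  unfold F G
  rw [Real.rpow_def_of_pos hx]
  congr 2
  ring

lemma hasDerivAt_G (i : ℕ) (s u : ℝ) :
    HasDerivAt (G i s)
      ((i : ℝ) * u ^ (i - 1) * Real.exp (-(s * u)) + u ^ i * (Real.exp (-(s * u)) * (-s))) u := by
  have h1 : HasDerivAt (fun u : ℝ => u ^ i) ((i : ℝ) * u ^ (i - 1)) u := hasDerivAt_pow i u
  have h0 : HasDerivAt (fun u : ℝ => -(s * u)) (-s) u := by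
    simpa [Pi.neg_def] using ((hasDerivAt_id u).const_mul s).neg
  exact h1.mul h0.exp

lemma hasDerivAt_G' (i : ℕ) (hi : 1 ≤ i) (s u : ℝ) :
    HasDerivAt (G i s) (u ^ (i - 1) * Real.exp (-(s * u)) * ((i : ℝ) - s * u)) u := by
  convert hasDerivAt_G i s u using 1
  have h : u ^ i = u ^ (i - 1) * u := by
    conv_lhs => rw [show i = (i - 1) + 1 by omega]
    rw [pow_succ]
  rw [h]; ring

lemma G_monotoneOn (i : ℕ) (hi : 1 ≤ i) {s : ℝ} (hs : 0 < s) :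
    MonotoneOn (G i s) (Icc 0 ((i : ℝ) / s)) := by
  apply monotoneOn_of_deriv_nonneg (convex_Icc _ _)
  · exact fun u _ => (hasDerivAt_G' i hi s u).continuousAt.continuousWithinAt
  · exact fun u _ => ((hasDerivAt_G' i hi s u).differentiableAt).differentiableWithinAt
  · intro u hu
    rw [interior_Icc] at hu
    rw [(hasDerivAt_G' i hi s u).deriv]
    have h1 : 0 ≤ u ^ (i - 1) := pow_nonneg hu.1.le _
    have h2 : s * u ≤ (i : ℝ) := ((lt_div_iff₀' hs).mp hu.2).le
    have h3 : (0:ℝ) < Real.exp (-(s * u)) := Real.exp_pos _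
    exact mul_nonneg (mul_nonneg h1 h3.le) (by linarith)

lemma G_antitoneOn (i : ℕ) (hi : 1 ≤ i) {s : ℝ} (hs : 0 < s) :
    AntitoneOn (G i s) (Ici ((i : ℝ) / s)) := by
  have hi0 : (0:ℝ) < (i:ℝ) / s := by positivity
  apply antitoneOn_of_deriv_nonpos (convex_Ici _)
  · exact fun u _ => (hasDerivAt_G' i hi s u).continuousAt.continuousWithinAt
  · exact fun u _ => ((hasDerivAt_G' i hi s u).differentiableAt).differentiableWithinAt
  · intro u hu
    rw [interior_Ici] at hu
    rw [(hasDerivAt_G' i hi s u).deriv]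
    have hu0 : 0 < u := lt_trans hi0 hu
    have h1 : 0 ≤ u ^ (i - 1) := pow_nonneg hu0.le _
    have h2 : (i : ℝ) ≤ s * u := ((div_lt_iff₀' hs).mp hu).le
    have h3 : (0:ℝ) < Real.exp (-(s * u)) := Real.exp_pos _
    exact mul_nonpos_of_nonneg_of_nonpos (mul_nonneg h1 h3.le) (by linarith)

lemma F_monotoneOn (i : ℕ) (hi : 1 ≤ i) {s : ℝ} (hs : 0 < s) :
    MonotoneOn (F i s) (Icc 1 (Real.exp ((i : ℝ) / s))) := by
  intro a ha b hb hab
  have ha0 : 0 < a := lt_of_lt_of_le one_pos ha.1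
  have hb0 : 0 < b := lt_of_lt_of_le one_pos hb.1
  rw [F_eq_G i s ha0, F_eq_G i s hb0]
  have hmem : ∀ x : ℝ, x ∈ Icc 1 (Real.exp ((i : ℝ) / s)) → Real.log x ∈ Icc 0 ((i:ℝ)/s) := by
    intro x hx
    refine ⟨Real.log_nonneg hx.1, ?_⟩
    calc Real.log x ≤ Real.log (Real.exp ((i : ℝ) / s)) :=
          Real.log_le_log (lt_of_lt_of_le one_pos hx.1) hx.2
      _ = (i : ℝ) / s := Real.log_exp _
  exact G_monotoneOn i hi hs (hmem a ha) (hmem b hb) (Real.log_le_log ha0 hab)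

lemma F_antitoneOn (i : ℕ) (hi : 1 ≤ i) {s : ℝ} (hs : 0 < s) :
    AntitoneOn (F i s) (Ici (Real.exp ((i : ℝ) / s))) := by
  intro a ha b hb hab
  have he : (0:ℝ) < Real.exp ((i : ℝ) / s) := Real.exp_pos _
  have ha0 : 0 < a := lt_of_lt_of_le he ha
  have hb0 : 0 < b := lt_of_lt_of_le he hb
  rw [F_eq_G i s ha0, F_eq_G i s hb0]
  have hmem : ∀ x : ℝ, x ∈ Ici (Real.exp ((i : ℝ) / s)) → Real.log x ∈ Ici ((i:ℝ)/s) := by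
    intro x hx
    have : (i:ℝ)/s = Real.log (Real.exp ((i : ℝ) / s)) := (Real.log_exp _).symm
    rw [Set.mem_Ici, this]
    exact Real.log_le_log he hx
  exact G_antitoneOn i hi hs (hmem a ha) (hmem b hb) (Real.log_le_log ha0 hab)

lemma continuousOn_F (i : ℕ) (s : ℝ) : ContinuousOn (F i s) (Ioi 0) := by
  apply ContinuousOn.mul
  · exact (Real.continuousOn_log.mono (fun x hx => ne_of_gt hx)).pow i
  · exact fun x hx => (Real.continuousAt_rpow_const x (-s) (Or.inl (ne_of_gt hx))).continuousWithinAt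

lemma intervalIntegrable_F (i : ℕ) (s : ℝ) {a b : ℝ} (ha : 0 < a) (hb : 0 < b) :
    IntervalIntegrable (F i s) volume a b := by
  apply ContinuousOn.intervalIntegrable
  apply (continuousOn_F i s).mono
  intro x hx
  rcases le_total a b with h | h
  · rw [uIcc_of_le h] at hx; exact lt_of_lt_of_le ha hx.1
  · rw [uIcc_of_ge h] at hx; exact lt_of_lt_of_le hb hx.1

lemma F_nonneg (i : ℕ) (s : ℝ) {x : ℝ} (hx : 1 ≤ x) : 0 ≤ F i s x :=
  mul_nonneg (pow_nonneg (Real.log_nonneg hx) i) (Real.rpow_nonneg (by linarith) _)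

lemma log_pow_le (i : ℕ) (hi : 1 ≤ i) {s : ℝ} (hs : 1 < s) {x : ℝ} (hx : 1 ≤ x) :
    (Real.log x) ^ i ≤ ((2 * i) / (s - 1)) ^ i * x ^ ((s - 1) / 2) := by
  have hx0 : (0:ℝ) < x := by linarith
  have hipos : (0:ℝ) < (i:ℝ) := by exact_mod_cast hi
  have hε : (0:ℝ) < (s - 1) / (2 * i) := div_pos (by linarith) (by linarith)
  set ε : ℝ := (s - 1) / (2 * i) with hεdef
  have hεi : ε * (i:ℝ) = (s - 1) / 2 := by
    rw [hεdef]; field_simp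
  have h1 : Real.log x ≤ x ^ ε / ε := by
    have h2 : ε * Real.log x = Real.log (x ^ ε) := (Real.log_rpow hx0 ε).symm
    have h3 : Real.log (x ^ ε) ≤ x ^ ε := by
      have := Real.log_le_sub_one_of_pos (Real.rpow_pos_of_pos hx0 ε)
      linarith
    rw [le_div_iff₀ hε]
    nlinarith [h2, h3]
  have hlog0 : 0 ≤ Real.log x := Real.log_nonneg hx
  calc (Real.log x) ^ i ≤ (x ^ ε / ε) ^ i := pow_le_pow_left₀ hlog0 h1 i
    _ = (1/ε) ^ i * (x ^ ε) ^ i := by rw [div_eq_mul_inv, mul_pow]; ring_nf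
    _ = ((2 * i) / (s - 1)) ^ i * x ^ ((s - 1) / 2) := by
        congr 1
        · rw [hεdef, one_div, inv_div]
        · rw [← Real.rpow_natCast (x ^ ε) i, ← Real.rpow_mul hx0.le, hεi]

lemma integrableOn_F (i : ℕ) (hi : 1 ≤ i) {s : ℝ} (hs : 1 < s) :
    IntegrableOn (F i s) (Ioi 1) := by
  have hp : (-((s+1)/2)) < -1 := by linarith
  have hint : IntegrableOn (fun x : ℝ => ((2 * i) / (s - 1)) ^ i * x ^ (-((s+1)/2))) (Ioi 1) :=
    (integrableOn_Ioi_rpow_of_lt hp one_pos).const_mul _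
  apply Integrable.mono hint
  · exact ((continuousOn_F i s).mono (fun x (hx : x ∈ Ioi (1:ℝ)) => Set.mem_Ioi.mpr (lt_trans one_pos hx))).aestronglyMeasurable
      measurableSet_Ioi
  · rw [ae_restrict_iff' measurableSet_Ioi]
    refine ae_of_all _ fun x hx => ?_
    have hx1 : (1:ℝ) ≤ x := le_of_lt hx
    have hx0 : (0:ℝ) < x := by linarith
    have hF : 0 ≤ F i s x := F_nonneg i s hx1
    have hc : (0:ℝ) ≤ ((2*i)/(s-1))^i := pow_nonneg (div_nonneg (by positivity) (by linarith)) i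
    rw [Real.norm_eq_abs, Real.norm_eq_abs, abs_of_nonneg hF,
      abs_of_nonneg (mul_nonneg hc (Real.rpow_nonneg hx0.le _))]
    unfold F
    calc (Real.log x) ^ i * x ^ (-s)
        ≤ ((2 * i) / (s - 1)) ^ i * x ^ ((s - 1) / 2) * x ^ (-s) := by
          apply mul_le_mul_of_nonneg_right (log_pow_le i hi hs hx1) (Real.rpow_nonneg hx0.le _)
      _ = ((2 * i) / (s - 1)) ^ i * x ^ (-((s+1)/2)) := by
          rw [mul_assoc, ← Real.rpow_add hx0]
          congr 2
          ring

lemma summable_F (i : ℕ) (hi : 1 ≤ i) {s : ℝ} (hs : 1 < s) :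
    Summable (fun k : ℕ => F i s ((k : ℝ) + 1)) := by
  have hp : 1 < (s+1)/2 := by linarith
  have h0 : Summable (fun n : ℕ => 1 / (n : ℝ) ^ ((s+1)/2)) :=
    Real.summable_one_div_nat_rpow.mpr hp
  have h1 : Summable (fun n : ℕ => ((2 * i) / (s - 1)) ^ i * (1 / ((n : ℝ) + 1) ^ ((s+1)/2))) := by
    apply Summable.mul_left
    have := (summable_nat_add_iff 1).mpr h0
    simpa using this
  apply Summable.of_nonneg_of_le (fun k => F_nonneg i s (by push_cast; linarith [Nat.cast_nonneg (α := ℝ) k])) _ h1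
  intro k
  have hx1 : (1:ℝ) ≤ (k:ℝ) + 1 := by linarith [Nat.cast_nonneg (α := ℝ) k]
  have hx0 : (0:ℝ) < (k:ℝ) + 1 := by linarith
  unfold F
  calc (Real.log ((k:ℝ)+1)) ^ i * ((k:ℝ)+1) ^ (-s)
      ≤ ((2 * i) / (s - 1)) ^ i * ((k:ℝ)+1) ^ ((s - 1) / 2) * ((k:ℝ)+1) ^ (-s) :=
        mul_le_mul_of_nonneg_right (log_pow_le i hi hs hx1) (Real.rpow_nonneg hx0.le _)
    _ = ((2 * i) / (s - 1)) ^ i * (((k:ℝ)+1) ^ ((s-1)/2 + -s)) := by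
        rw [mul_assoc, ← Real.rpow_add hx0]
    _ ≤ ((2 * i) / (s - 1)) ^ i * (1 / ((k : ℝ) + 1) ^ ((s+1)/2)) := by
        have hc : (0:ℝ) ≤ ((2*i)/(s-1))^i :=
          pow_nonneg (div_nonneg (by positivity) (by linarith)) i
        apply mul_le_mul_of_nonneg_left _ hc
        have he : (s-1)/2 + -s = -((s+1)/2) := by ring
        rw [he, Real.rpow_neg hx0.le, one_div]

lemma F_exp_mul (i : ℕ) (s : ℝ) (x : ℝ) :
    F i s (Real.exp x) * Real.exp x = x ^ i * Real.exp (-((s - 1) * x)) := by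
  unfold F
  rw [Real.log_exp, Real.rpow_def_of_pos (Real.exp_pos x), Real.log_exp, mul_assoc,
    ← Real.exp_add]
  congr 2
  ring

lemma integrableOn_G' (i : ℕ) {s : ℝ} (hs : 1 < s) :
    IntegrableOn (fun x : ℝ => x ^ i * Real.exp (-((s - 1) * x))) (Ioi 0) := by
  have h := integrableOn_rpow_mul_exp_neg_mul_rpow (p := 1) (s := (i:ℝ)) (b := s - 1)
    (lt_of_lt_of_le neg_one_lt_zero (Nat.cast_nonneg i)) zero_lt_one (by linarith)
  apply h.congr_fun _ measurableSet_Ioi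
  intro x hx
  simp only []
  rw [Real.rpow_one, Real.rpow_natCast]
  congr 1
  ring

lemma integral_F (i : ℕ) (hi : 1 ≤ i) {s : ℝ} (hs : 1 < s) :
    ∫ x in Ioi (1 : ℝ), F i s x = (Nat.factorial i : ℝ) / (s - 1) ^ (i + 1) := by
  have himg : Real.exp '' Ioi 0 ⊆ Ioi 0 := by
    rintro y ⟨x, -, rfl⟩; exact Real.exp_pos x
  have himg1 : Real.exp '' Ici 0 ⊆ Ici 1 := by
    rintro y ⟨x, hx, rfl⟩; exact Real.one_le_exp hx
  have key := MeasureTheory.integral_comp_mul_deriv_Ioi (f := Real.exp) (f' := Real.exp)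
    (g := F i s) (a := 0)
    (Real.continuous_exp.continuousOn) Real.tendsto_exp_atTop
    (fun x _ => (Real.hasDerivAt_exp x).hasDerivWithinAt)
    ((continuousOn_F i s).mono himg)
    (((integrableOn_Ici_iff_integrableOn_Ioi).mpr (integrableOn_F i hi hs)).mono_set himg1)
    ?_
  · rw [Real.exp_zero] at key
    rw [← key]
    have he : ∀ x ∈ Ioi (0:ℝ), (F i s ∘ Real.exp) x * Real.exp x
        = x ^ (((i:ℝ) + 1) - 1) * Real.exp (-((s - 1) * x)) := by
      intro x hx
      rw [Function.comp_apply, F_exp_mul, add_sub_cancel_right, Real.rpow_natCast]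
    rw [setIntegral_congr_fun measurableSet_Ioi he,
      integral_rpow_mul_exp_neg_mul_Ioi (by positivity) (by linarith)]
    rw [show ((i:ℝ) + 1) = ((i + 1 : ℕ) : ℝ) by push_cast; ring, Real.rpow_natCast,
      show ((i + 1 : ℕ) : ℝ) = (i:ℝ) + 1 by push_cast; ring, Real.Gamma_nat_eq_factorial i,
      div_pow, one_pow]
    ring
  · rw [integrableOn_Ici_iff_integrableOn_Ioi]
    apply (integrableOn_G' i hs).congr_fun _ measurableSet_Ioi
    intro x hx
    exact (F_exp_mul i s x).symm

lemma tsum_F_le (i : ℕ) (hi : 1 ≤ i) {s : ℝ} (hs : 1 < s) :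
    ∑' k : ℕ, F i s ((k : ℝ) + 1) ≤
      (∫ x in Ioi (1 : ℝ), F i s x) + F i s (Real.exp ((i : ℝ) / s)) := by
  have hs0 : 0 < s := by linarith
  set x₀ := Real.exp ((i : ℝ) / s) with hx₀def
  have hipos : (0:ℝ) < (i:ℝ) := by exact_mod_cast hi
  have hx₀1 : 1 < x₀ := by
    rw [hx₀def, show (1:ℝ) = Real.exp 0 from (Real.exp_zero).symm]
    exact Real.exp_lt_exp.mpr (by positivity)
  set N₀ := ⌊x₀⌋₊ with hN₀def
  have hN₀1 : 1 ≤ N₀ := Nat.le_floor (by exact_mod_cast hx₀1.le)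
  have hN₀le : (N₀:ℝ) ≤ x₀ := Nat.floor_le (by linarith)
  have hx₀lt : x₀ < (N₀:ℝ) + 1 := Nat.lt_floor_add_one x₀
  have h1N₀ : (1:ℝ) ≤ (N₀:ℝ) := by exact_mod_cast hN₀1
  have hF0 : ∀ k : ℕ, 0 ≤ F i s ((k:ℝ) + 1) :=
    fun k => F_nonneg i s (by linarith [Nat.cast_nonneg (α := ℝ) k])
  apply Real.tsum_le_of_sum_range_le hF0
  intro n
  have key : ∀ m : ℕ, N₀ + 1 ≤ m →
      ∑ k ∈ Finset.range m, F i s ((k:ℝ) + 1) ≤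
        (∫ x in Ioi (1 : ℝ), F i s x) + F i s x₀ := by
    intro m hm
    have hm1 : (1:ℝ) ≤ (m:ℝ) := by
      have : 1 ≤ m := le_trans (by omega) hm
      exact_mod_cast this
    -- rewrite the sum as a sum over `Ico 1 (m+1)`
    have hre : ∑ k ∈ Finset.range m, F i s ((k:ℝ) + 1)
        = ∑ n ∈ Finset.Ico 1 (m+1), F i s (n:ℝ) := by
      rw [Finset.sum_Ico_eq_sum_range]
      simp only [Nat.add_sub_cancel]
      refine Finset.sum_congr rfl fun k _ => ?_
      push_cast
      rw [add_comm]
    rw [hre]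
    have hsplit1 : ∑ n ∈ Finset.Ico 1 N₀, F i s (n:ℝ) + ∑ n ∈ Finset.Ico N₀ (m+1), F i s (n:ℝ)
        = ∑ n ∈ Finset.Ico 1 (m+1), F i s (n:ℝ) :=
      Finset.sum_Ico_consecutive _ hN₀1 (by omega)
    have hsplit2 : ∑ n ∈ Finset.Ico N₀ (N₀+2), F i s (n:ℝ)
          + ∑ n ∈ Finset.Ico (N₀+2) (m+1), F i s (n:ℝ)
        = ∑ n ∈ Finset.Ico N₀ (m+1), F i s (n:ℝ) :=
      Finset.sum_Ico_consecutive _ (by omega) (by omega)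
    -- piece A
    have hmonoA : MonotoneOn (F i s) (Set.Icc ((1:ℕ):ℝ) ((N₀:ℕ):ℝ)) := by
      rw [Nat.cast_one]
      exact (F_monotoneOn i hi hs0).mono (Set.Icc_subset_Icc le_rfl hN₀le)
    have hA : ∑ n ∈ Finset.Ico 1 N₀, F i s (n:ℝ) ≤ ∫ x in ((1:ℕ):ℝ)..((N₀:ℕ):ℝ), F i s x :=
      MonotoneOn.sum_le_integral_Ico hN₀1 hmonoA
    -- piece B
    have hint1 : IntervalIntegrable (F i s) volume (N₀:ℝ) x₀ :=
      intervalIntegrable_F i s (by linarith) (by linarith)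
    have hint2 : IntervalIntegrable (F i s) volume x₀ ((N₀:ℝ)+1) :=
      intervalIntegrable_F i s (by linarith) (by linarith)
    have e1 : F i s (N₀:ℝ) * (x₀ - (N₀:ℝ)) ≤ ∫ x in (N₀:ℝ)..x₀, F i s x := by
      have hmm := intervalIntegral.integral_mono_on (f := fun _ => F i s (N₀:ℝ)) (g := F i s)
        hN₀le intervalIntegrable_const hint1
        (fun x hx => (F_monotoneOn i hi hs0) ⟨h1N₀, hN₀le⟩ ⟨le_trans h1N₀ hx.1, hx.2⟩ hx.1)
      rwa [intervalIntegral.integral_const, smul_eq_mul, mul_comm] at hmm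
    have e2 : F i s ((N₀:ℝ)+1) * ((N₀:ℝ)+1 - x₀) ≤ ∫ x in x₀..((N₀:ℝ)+1), F i s x := by
      have hmm := intervalIntegral.integral_mono_on (f := fun _ => F i s ((N₀:ℝ)+1)) (g := F i s)
        hx₀lt.le intervalIntegrable_const hint2
        (fun x hx => (F_antitoneOn i hi hs0) hx.1 (Set.mem_Ici.mpr hx₀lt.le) hx.2)
      rwa [intervalIntegral.integral_const, smul_eq_mul, mul_comm] at hmm
    have e3 : F i s (N₀:ℝ) ≤ F i s x₀ :=
      (F_monotoneOn i hi hs0) ⟨h1N₀, hN₀le⟩ ⟨hx₀1.le, le_rfl⟩ hN₀le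
    have e4 : F i s ((N₀:ℝ)+1) ≤ F i s x₀ :=
      (F_antitoneOn i hi hs0) (Set.mem_Ici.mpr le_rfl) (Set.mem_Ici.mpr hx₀lt.le) hx₀lt.le
    have hadd12 : (∫ x in (N₀:ℝ)..x₀, F i s x) + (∫ x in x₀..((N₀:ℝ)+1), F i s x)
        = ∫ x in (N₀:ℝ)..((N₀:ℝ)+1), F i s x :=
      intervalIntegral.integral_add_adjacent_intervals hint1 hint2
    have hB : F i s (N₀:ℝ) + F i s ((N₀:ℝ)+1)
        ≤ F i s x₀ + ∫ x in (N₀:ℝ)..((N₀:ℝ)+1), F i s x := by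
      have q1 : F i s (N₀:ℝ) * ((N₀:ℝ) + 1 - x₀) ≤ F i s x₀ * ((N₀:ℝ) + 1 - x₀) :=
        mul_le_mul_of_nonneg_right e3 (by linarith)
      have q2 : F i s ((N₀:ℝ)+1) * (x₀ - (N₀:ℝ)) ≤ F i s x₀ * (x₀ - (N₀:ℝ)) :=
        mul_le_mul_of_nonneg_right e4 (by linarith)
      have idt1 : F i s (N₀:ℝ) * (x₀ - (N₀:ℝ)) + F i s (N₀:ℝ) * ((N₀:ℝ) + 1 - x₀)
          = F i s (N₀:ℝ) := by ring
      have idt2 : F i s ((N₀:ℝ)+1) * (((N₀:ℝ)+1) - x₀) + F i s ((N₀:ℝ)+1) * (x₀ - (N₀:ℝ))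
          = F i s ((N₀:ℝ)+1) := by ring
      have idt3 : F i s x₀ * ((N₀:ℝ) + 1 - x₀) + F i s x₀ * (x₀ - (N₀:ℝ)) = F i s x₀ := by ring
      linarith
    have hBsum : ∑ n ∈ Finset.Ico N₀ (N₀+2), F i s (n:ℝ) = F i s (N₀:ℝ) + F i s ((N₀:ℝ)+1) := by
      rw [show N₀ + 2 = (N₀ + 1) + 1 from rfl, Finset.sum_Ico_succ_top (by omega),
        Finset.sum_Ico_succ_top (le_refl N₀), Finset.Ico_self, Finset.sum_empty, zero_add]
      push_cast
      ring
    -- piece C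
    have hantiC : AntitoneOn (F i s) (Set.Icc (((N₀+1:ℕ)):ℝ) ((m:ℕ):ℝ)) := by
      apply (F_antitoneOn i hi hs0).mono
      intro x hx
      have : ((N₀+1:ℕ):ℝ) ≤ x := hx.1
      push_cast at this
      exact Set.mem_Ici.mpr (le_trans hx₀lt.le this)
    have hC' : ∑ j ∈ Finset.Ico (N₀+1) m, F i s ((j+1:ℕ):ℝ)
        ≤ ∫ x in (((N₀+1:ℕ)):ℝ)..((m:ℕ):ℝ), F i s x :=
      AntitoneOn.sum_le_integral_Ico hm hantiC
    have hCre : ∑ n ∈ Finset.Ico (N₀+2) (m+1), F i s (n:ℝ)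
        = ∑ j ∈ Finset.Ico (N₀+1) m, F i s ((j+1:ℕ):ℝ) := by
      rw [Finset.sum_Ico_eq_sum_range, Finset.sum_Ico_eq_sum_range]
      have hcard : m + 1 - (N₀+2) = m - (N₀+1) := by omega
      rw [hcard]
      refine Finset.sum_congr rfl fun k _ => ?_
      congr 1
      push_cast
      ring
    -- combine integrals
    have hI1 : IntervalIntegrable (F i s) volume 1 (N₀:ℝ) :=
      intervalIntegrable_F i s one_pos (by linarith)
    have hI2 : IntervalIntegrable (F i s) volume (N₀:ℝ) ((N₀:ℝ)+1) :=
      intervalIntegrable_F i s (by linarith) (by linarith)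
    have hI3 : IntervalIntegrable (F i s) volume ((N₀:ℝ)+1) (m:ℝ) :=
      intervalIntegrable_F i s (by linarith) (by linarith)
    have ht1 : (∫ x in (1:ℝ)..(N₀:ℝ), F i s x) + (∫ x in (N₀:ℝ)..((N₀:ℝ)+1), F i s x)
        = ∫ x in (1:ℝ)..((N₀:ℝ)+1), F i s x :=
      intervalIntegral.integral_add_adjacent_intervals hI1 hI2
    have ht2 : (∫ x in (1:ℝ)..((N₀:ℝ)+1), F i s x) + (∫ x in ((N₀:ℝ)+1)..(m:ℝ), F i s x)
        = ∫ x in (1:ℝ)..(m:ℝ), F i s x :=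
      intervalIntegral.integral_add_adjacent_intervals (hI1.trans hI2) hI3
    have hfin : (∫ x in (1:ℝ)..(m:ℝ), F i s x) ≤ ∫ x in Ioi (1:ℝ), F i s x := by
      rw [intervalIntegral.integral_of_le hm1]
      apply setIntegral_mono_set (integrableOn_F i hi hs)
      · filter_upwards [ae_restrict_mem measurableSet_Ioi] with x hx
        exact F_nonneg i s (le_of_lt hx)
      · exact HasSubset.Subset.eventuallyLE Set.Ioc_subset_Ioi_self
    -- final assembly
    have hA' : ∑ n ∈ Finset.Ico 1 N₀, F i s (n:ℝ) ≤ ∫ x in (1:ℝ)..(N₀:ℝ), F i s x := by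
      rw [show ((1:ℕ):ℝ) = (1:ℝ) from Nat.cast_one] at hA
      exact hA
    have hC : ∑ n ∈ Finset.Ico (N₀+2) (m+1), F i s (n:ℝ)
        ≤ ∫ x in ((N₀:ℝ)+1)..(m:ℝ), F i s x := by
      rw [hCre]
      have : (((N₀+1:ℕ)):ℝ) = (N₀:ℝ)+1 := by push_cast; ring
      rw [this] at hC'
      exact hC'
    linarith [hsplit1, hsplit2, hA', hB, hBsum, hC, ht1, ht2, hfin]
  calc ∑ k ∈ Finset.range n, F i s ((k:ℝ) + 1)
      ≤ ∑ k ∈ Finset.range (max n (N₀+1)), F i s ((k:ℝ) + 1) :=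
        Finset.sum_le_sum_of_subset_of_nonneg
          (Finset.range_subset_range.mpr (le_max_left _ _)) (fun k _ _ => hF0 k)
    _ ≤ _ := key _ (le_max_right _ _)

lemma convexOn_rpow_neg {s : ℝ} (hs : 0 < s) :
    ConvexOn ℝ (Ioi 0) (fun x : ℝ => x ^ (-s)) := by
  refine ⟨convex_Ioi 0, fun x hx y hy p q hp hq hpq => ?_⟩
  simp only [smul_eq_mul] at *
  have hx0 : (0:ℝ) < x := hx
  have hy0 : (0:ℝ) < y := hy
  have hxy : (0:ℝ) < p * x + q * y := by
    rcases eq_or_lt_of_le hp with h | h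
    · rw [← h] at hpq ⊢
      simp only [zero_mul, zero_add] at hpq ⊢
      rw [hpq] at *
      simpa using hy0
    · have : 0 ≤ q * y := mul_nonneg hq hy0.le
      nlinarith
  rw [Real.rpow_def_of_pos hxy, Real.rpow_def_of_pos hx0, Real.rpow_def_of_pos hy0]
  have hcc := strictConcaveOn_log_Ioi.concaveOn.2 hx hy hp hq hpq
  simp only [smul_eq_mul] at hcc
  have h1 : Real.log (p * x + q * y) * (-s) ≤ p * (Real.log x * (-s)) + q * (Real.log y * (-s)) := by
    have h2 := mul_le_mul_of_nonneg_left hcc hs.le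
    nlinarith
  calc Real.exp (Real.log (p * x + q * y) * (-s))
      ≤ Real.exp (p * (Real.log x * (-s)) + q * (Real.log y * (-s))) := Real.exp_le_exp.mpr h1
    _ ≤ p * Real.exp (Real.log x * (-s)) + q * Real.exp (Real.log y * (-s)) := by
        have := convexOn_exp.2 (Set.mem_univ (Real.log x * (-s)))
          (Set.mem_univ (Real.log y * (-s))) hp hq hpq
        simpa using this

lemma trapezoid {s : ℝ} (hs : 0 < s) {a : ℝ} (ha : 0 < a) :
    ∫ x in a..(a + 1), x ^ (-s) ≤ (a ^ (-s) + (a + 1) ^ (-s)) / 2 := by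
  have hconv := convexOn_rpow_neg hs
  have hle : ∀ x ∈ Icc a (a + 1),
      x ^ (-s) ≤ a ^ (-s) + ((a+1) ^ (-s) - a ^ (-s)) * (x - a) := by
    intro x hx
    have ht0 : 0 ≤ x - a := by linarith [hx.1]
    have ht1 : 0 ≤ 1 - (x - a) := by linarith [hx.2]
    have hcomb := hconv.2 (Set.mem_Ioi.mpr ha) (Set.mem_Ioi.mpr (by linarith : (0:ℝ) < a + 1))
      ht1 ht0 (by ring)
    simp only [smul_eq_mul] at hcomb
    have hxe : (1 - (x - a)) * a + (x - a) * (a + 1) = x := by ring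
    rw [hxe] at hcomb
    calc x ^ (-s) ≤ (1 - (x - a)) * a ^ (-s) + (x - a) * (a + 1) ^ (-s) := hcomb
      _ = a ^ (-s) + ((a+1) ^ (-s) - a ^ (-s)) * (x - a) := by ring
  have hint1 : IntervalIntegrable (fun x : ℝ => x ^ (-s)) volume a (a + 1) := by
    apply ContinuousOn.intervalIntegrable
    intro x hx
    rw [Set.uIcc_of_le (by linarith)] at hx
    exact (Real.continuousAt_rpow_const x (-s) (Or.inl (by linarith [hx.1]))).continuousWithinAt
  have hint2 : IntervalIntegrable
      (fun x : ℝ => a ^ (-s) + ((a+1) ^ (-s) - a ^ (-s)) * (x - a)) volume a (a + 1) :=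
    (continuous_const.add ((continuous_const.mul (continuous_id.sub continuous_const)))).intervalIntegrable _ _
  calc ∫ x in a..(a + 1), x ^ (-s)
      ≤ ∫ x in a..(a + 1), (a ^ (-s) + ((a+1) ^ (-s) - a ^ (-s)) * (x - a)) :=
        intervalIntegral.integral_mono_on (by linarith) hint1 hint2 hle
    _ = (a ^ (-s) + (a + 1) ^ (-s)) / 2 := by
        have h1 : IntervalIntegrable (fun x : ℝ => ((a+1) ^ (-s) - a ^ (-s)) * (x - a))
            volume a (a+1) := by
          apply Continuous.intervalIntegrable
          fun_prop
        rw [intervalIntegral.integral_add intervalIntegrable_const h1,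
          intervalIntegral.integral_const_mul, intervalIntegral.integral_const]
        have h2 : ∫ x in a..(a+1), (x - a) = 1/2 := by
          rw [intervalIntegral.integral_sub intervalIntegral.intervalIntegrable_id
            intervalIntegrable_const, integral_id,
            intervalIntegral.integral_const]
          simp only [smul_eq_mul]
          ring
        rw [h2]
        simp only [smul_eq_mul]
        ring

lemma summable_Z {s : ℝ} (hs : 1 < s) :
    Summable (fun n : ℕ => 1 / ((n : ℝ) + 1) ^ s) := by
  have h0 : Summable (fun n : ℕ => 1 / (n : ℝ) ^ s) := Real.summable_one_div_nat_rpow.mpr hs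
  have := (summable_nat_add_iff 1).mpr h0
  simpa using this

lemma Z_ge {s : ℝ} (hs : 1 < s) :
    1 / (s - 1) + 1 / 2 ≤ ∑' n : ℕ, 1 / ((n : ℝ) + 1) ^ s := by
  have hs0 : 0 < s := by linarith
  set f : ℕ → ℝ := fun n => 1 / ((n : ℝ) + 1) ^ s with hfdef
  have hf0 : ∀ n : ℕ, 0 ≤ f n := fun n => by positivity
  set Z := ∑' n : ℕ, f n with hZdef
  have hsum := summable_Z hs
  have hfrpow : ∀ n : ℕ, f n = ((n:ℝ) + 1) ^ (-s) := by
    intro n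
    simp only [hfdef]
    rw [Real.rpow_neg (by positivity), one_div]
  have hintv : ∀ a b : ℝ, 0 < a → 0 < b →
      IntervalIntegrable (fun x : ℝ => x ^ (-s)) volume a b := by
    intro a b ha hb
    apply ContinuousOn.intervalIntegrable
    intro x hx
    have : 0 < x := by
      rcases le_total a b with h | h
      · rw [Set.uIcc_of_le h] at hx; linarith [hx.1]
      · rw [Set.uIcc_of_ge h] at hx; linarith [hx.1]
    exact (Real.continuousAt_rpow_const x (-s) (Or.inl (ne_of_gt this))).continuousWithinAt
  have hdecomp : ∀ N : ℕ, ∫ x in (1:ℝ)..((N:ℝ)+1), x ^ (-s)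
      = ∑ n ∈ Finset.range N, ∫ x in ((n:ℝ)+1)..((n:ℝ)+2), x ^ (-s) := by
    intro N
    induction N with
    | zero => simp
    | succ N ih =>
      rw [Finset.sum_range_succ, ← ih]
      have hc : ((N+1:ℕ):ℝ) + 1 = (N:ℝ) + 2 := by push_cast; ring
      rw [hc, ← intervalIntegral.integral_add_adjacent_intervals
        (hintv 1 ((N:ℝ)+1) one_pos (by positivity))
        (hintv ((N:ℝ)+1) ((N:ℝ)+2) (by positivity) (by positivity))]
  have hpart : ∀ N : ℕ, ∫ x in (1:ℝ)..((N:ℝ)+1), x ^ (-s) ≤ Z - 1/2 := by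
    intro N
    rw [hdecomp N]
    have hb : ∀ n ∈ Finset.range N,
        (∫ x in ((n:ℝ)+1)..((n:ℝ)+2), x ^ (-s)) ≤ (f n + f (n+1))/2 := by
      intro n _
      have ht := trapezoid hs0 (a := (n:ℝ)+1) (by positivity)
      have hfr2 : f (n+1) = ((n:ℝ)+2) ^ (-s) := by
        rw [hfrpow (n+1)]; push_cast; ring_nf
      rw [hfrpow n, hfr2]
      have he : (n:ℝ)+1+1 = (n:ℝ)+2 := by ring
      rw [← he]
      exact ht
    have hsum_half : ∑ n ∈ Finset.range N, (f n + f (n+1))/2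
        = ((∑ n ∈ Finset.range N, f n) + (∑ n ∈ Finset.range N, f (n+1)))/2 := by
      rw [← Finset.sum_add_distrib, ← Finset.sum_div]
    have hb1 : ∑ n ∈ Finset.range N, f n ≤ Z := Summable.sum_le_tsum _ (fun n _ => hf0 n) hsum
    have hb2 : ∑ n ∈ Finset.range N, f (n+1) ≤ Z - 1 := by
      have h1 : ∑ n ∈ Finset.range (N+1), f n ≤ Z := Summable.sum_le_tsum _ (fun n _ => hf0 n) hsum
      have h2 : ∑ n ∈ Finset.range (N+1), f n
          = (∑ n ∈ Finset.range N, f (n+1)) + f 0 := Finset.sum_range_succ' f N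
      have h3 : f 0 = 1 := by
        simp only [hfdef]
        norm_num
      linarith
    calc ∑ n ∈ Finset.range N, ∫ x in ((n:ℝ)+1)..((n:ℝ)+2), x ^ (-s)
        ≤ ∑ n ∈ Finset.range N, (f n + f (n+1))/2 := Finset.sum_le_sum hb
      _ ≤ (Z + (Z - 1))/2 := by rw [hsum_half]; linarith
      _ = Z - 1/2 := by ring
  have hval : ∀ N : ℕ, ∫ x in (1:ℝ)..((N:ℝ)+1), x ^ (-s)
      = (((N:ℝ)+1) ^ (-s+1) - 1)/(-s+1) := by
    intro N
    rw [integral_rpow (Or.inr ⟨by linarith, Set.notMem_uIcc_of_lt one_pos (by positivity)⟩)]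
    rw [Real.one_rpow]
  have hlim : Tendsto (fun N : ℕ => ∫ x in (1:ℝ)..((N:ℝ)+1), x ^ (-s)) atTop
      (𝓝 (1/(s-1))) := by
    have h1 : Tendsto (fun x : ℝ => x ^ (-(s-1))) atTop (𝓝 0) :=
      tendsto_rpow_neg_atTop (by linarith)
    have h2 : Tendsto (fun N : ℕ => (N:ℝ)+1) atTop atTop :=
      tendsto_atTop_add_const_right atTop 1 tendsto_natCast_atTop_atTop
    have h3 : Tendsto (fun N : ℕ => ((N:ℝ)+1) ^ (-s+1)) atTop (𝓝 0) := by
      have := h1.comp h2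
      simpa [Function.comp_def, show -(s-1) = -s+1 by ring] using this
    have h4 : Tendsto (fun N : ℕ => (((N:ℝ)+1) ^ (-s+1) - 1)/(-s+1)) atTop
        (𝓝 ((0 - 1)/(-s+1))) := (h3.sub_const 1).div_const _
    have h5 : (0 - 1)/(-s+1) = 1/(s-1) := by
      have hne1 : -s+1 ≠ 0 := by intro h; apply absurd hs; simp; linarith
      have hne2 : s-1 ≠ 0 := by intro h; apply absurd hs; simp; linarith
      field_simp
      ring
    rw [← h5]
    simp only [← hval] at h4 ⊢
    exact h4
  have := le_of_tendsto hlim (Filter.Eventually.of_forall hpart)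
  linarith

lemma zeta_re_eq {s : ℝ} (hs : 1 < s) :
    (riemannZeta (s : ℂ)).re = ∑' n : ℕ, 1 / ((n : ℝ) + 1) ^ s := by
  rw [zeta_eq_tsum_one_div_nat_add_one_cpow (by simpa using hs)]
  have h : ∀ n : ℕ, 1 / ((n : ℂ) + 1) ^ (s : ℂ) = ((1 / ((n : ℝ) + 1) ^ s : ℝ) : ℂ) := by
    intro n
    have h1 : ((n:ℂ) + 1) = (((n:ℝ) + 1 : ℝ) : ℂ) := by push_cast; ring
    rw [h1, ← Complex.ofReal_cpow (by positivity) s]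
    push_cast
    ring
  rw [tsum_congr h, ← Complex.ofReal_tsum, Complex.ofReal_re]

lemma two_mul_pow_le (i : ℕ) (hi : 1 ≤ i) :
    2 * (i : ℝ) ^ i ≤ (Nat.factorial i : ℝ) * Real.exp i := by
  have hx : (0:ℝ) ≤ (i:ℝ) := Nat.cast_nonneg i
  have hsum := Real.sum_le_exp_of_nonneg hx (i+1)
  have hpair : ({i-1, i} : Finset ℕ) ⊆ Finset.range (i+1) := by
    intro k hk
    simp only [Finset.mem_insert, Finset.mem_singleton] at hk
    rcases hk with h | h <;> simp [h] <;> omega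
  have hsub : ∑ k ∈ ({i-1, i} : Finset ℕ), (i:ℝ) ^ k / (Nat.factorial k)
      ≤ ∑ k ∈ Finset.range (i+1), (i:ℝ) ^ k / (Nat.factorial k) :=
    Finset.sum_le_sum_of_subset_of_nonneg hpair (fun k _ _ => by positivity)
  have hne : i - 1 ≠ i := by omega
  rw [Finset.sum_pair hne] at hsub
  have hterm : (i:ℝ) ^ (i-1) / (Nat.factorial (i-1)) = (i:ℝ) ^ i / (Nat.factorial i) := by
    have h1 : (i:ℝ) ^ i = (i:ℝ) ^ (i-1) * (i:ℝ) := by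
      rw [← pow_succ, show i - 1 + 1 = i by omega]
    have h2 : (Nat.factorial i : ℝ) = (i:ℝ) * (Nat.factorial (i-1) : ℝ) := by
      exact_mod_cast (Nat.mul_factorial_pred (by omega)).symm
    have hfne : (Nat.factorial (i-1) : ℝ) ≠ 0 :=
      Nat.cast_ne_zero.mpr (Nat.factorial_ne_zero _)
    have hipos : (0:ℝ) < (i:ℝ) := by exact_mod_cast hi
    rw [h1, h2]
    field_simp
  rw [hterm] at hsub
  have hfpos : (0:ℝ) < (Nat.factorial i : ℝ) := by exact_mod_cast Nat.factorial_pos i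
  have : 2 * ((i:ℝ) ^ i / (Nat.factorial i)) ≤ Real.exp i := by
    calc 2 * ((i:ℝ) ^ i / (Nat.factorial i))
        = (i:ℝ) ^ i / (Nat.factorial i) + (i:ℝ) ^ i / (Nat.factorial i) := by ring
      _ ≤ _ := le_trans hsub hsum
  calc 2 * (i:ℝ) ^ i = (2 * ((i:ℝ) ^ i / (Nat.factorial i))) * (Nat.factorial i) := by
        field_simp
    _ ≤ Real.exp i * (Nat.factorial i) := mul_le_mul_of_nonneg_right this hfpos.le
    _ = (Nat.factorial i : ℝ) * Real.exp i := by ring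

lemma M_mul_le (i : ℕ) (hi : 1 ≤ i) {s : ℝ} (hs : 1 < s) :
    F i s (Real.exp ((i : ℝ) / s)) * (s - 1) ^ i ≤ (Nat.factorial i : ℝ) / 2 := by
  have hs0 : 0 < s := by linarith
  have hipos : (0:ℝ) < (i:ℝ) := by exact_mod_cast hi
  have hFval : F i s (Real.exp ((i : ℝ) / s)) = ((i:ℝ)/s) ^ i * Real.exp (-(i:ℝ)) := by
    unfold F
    rw [Real.log_exp, Real.rpow_def_of_pos (Real.exp_pos _), Real.log_exp]
    congr 2
    field_simp
  rw [hFval]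
  have hkey : ((i:ℝ)/s) ^ i * (s-1) ^ i ≤ (i:ℝ) ^ i := by
    rw [← mul_pow]
    apply pow_le_pow_left₀ (mul_nonneg (by positivity) (by linarith))
    rw [div_mul_eq_mul_div, div_le_iff₀ hs0]
    nlinarith
  have h2 := two_mul_pow_le i hi
  have hexp : (0:ℝ) < Real.exp (-(i:ℝ)) := Real.exp_pos _
  have hee : Real.exp (-(i:ℝ)) * Real.exp (i:ℝ) = 1 := by
    rw [← Real.exp_add]; simp
  calc ((i:ℝ)/s) ^ i * Real.exp (-(i:ℝ)) * (s-1) ^ i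
      = ((i:ℝ)/s) ^ i * (s-1) ^ i * Real.exp (-(i:ℝ)) := by ring
    _ ≤ (i:ℝ) ^ i * Real.exp (-(i:ℝ)) := mul_le_mul_of_nonneg_right hkey hexp.le
    _ ≤ ((Nat.factorial i : ℝ) * Real.exp (i:ℝ) / 2) * Real.exp (-(i:ℝ)) := by
        apply mul_le_mul_of_nonneg_right _ hexp.le
        linarith
    _ = (Nat.factorial i : ℝ) / 2 := by
        field_simp
        nlinarith [hee]

end SumLogPowAux

open SumLogPowAux in
/-- For every real `s > 1` and every integer `i ≥ 1`, one has
`∑_{k=1}^∞ (log k)^i / k^s ≤ (i! / (s−1)^i) · ζ(s)`. -/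
theorem sum_log_pow_div_pow_le (s : ℝ) (hs : 1 < s) (i : ℕ) (hi : 1 ≤ i) :
    ∑' k : ℕ, (Real.log (k + 1)) ^ i / ((k : ℝ) + 1) ^ s ≤
      ((Nat.factorial i : ℝ) / (s - 1) ^ i) * (riemannZeta (s : ℂ)).re := by
  have hσ : 0 < s - 1 := by linarith
  have hσi : 0 < (s - 1) ^ i := pow_pos hσ i
  have hL : ∑' k : ℕ, (Real.log (k + 1)) ^ i / ((k : ℝ) + 1) ^ s
      = ∑' k : ℕ, F i s ((k : ℝ) + 1) := by
    refine tsum_congr fun k => ?_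
    rw [F, Real.rpow_neg (by positivity), div_eq_mul_inv]
  rw [hL, zeta_re_eq hs]
  have h1 := tsum_F_le i hi hs
  have h2 := integral_F i hi hs
  have h3 := M_mul_le i hi hs
  have h4 := Z_ge hs
  have hM : F i s (Real.exp ((i : ℝ) / s)) ≤ (Nat.factorial i : ℝ) / 2 / (s - 1) ^ i := by
    rw [le_div_iff₀ hσi]; exact h3
  have hfac : (0 : ℝ) ≤ (Nat.factorial i : ℝ) := Nat.cast_nonneg _
  calc ∑' k : ℕ, F i s ((k : ℝ) + 1)
      ≤ (Nat.factorial i : ℝ) / (s - 1) ^ (i + 1) + (Nat.factorial i : ℝ) / 2 / (s - 1) ^ i := by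
        rw [← h2]; exact h1.trans (by linarith)
    _ = ((Nat.factorial i : ℝ) / (s - 1) ^ i) * (1 / (s - 1) + 1 / 2) := by
        rw [pow_succ]; field_simp
    _ ≤ ((Nat.factorial i : ℝ) / (s - 1) ^ i) * ∑' n : ℕ, 1 / ((n : ℝ) + 1) ^ s := by
        apply mul_le_mul_of_nonneg_left h4 (by positivity)
end

section
/- Let c₁, c₂ ∈ ℂ with c₂ ≠ 0 and Re c₁ = 1/2 + |c₂|. Then the matrix A defines a bounded linear map ℓ²(ℕ) → ℓ²(ℕ₀), and its operator norm satisfies ζ(1 + 2|c₂|) ≤ ‖A‖² ≤ ζ(1 + |c₂|). -/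
open Real Finset Set MeasureTheory intervalIntegral
open scoped ENNReal NNReal

/-- The matrix of the composition operator `C_φ`, `φ(s) = c₁ + c₂·2^{-s}`, on the
Hardy–Dirichlet space `ℋ²`, with respect to the orthonormal bases `{j^{-s}}_{j ≥ 1}`
(columns, encoded by `j : ℕ` standing for the integer `j+1 ≥ 1`) and
`{(2^i)^{-s}}_{i ≥ 0}` (rows, `i : ℕ`):
`a_{0,1} = 1`, `a_{i,1} = 0` for `i ≥ 1`, and
`a_{i,j} = j^{-c₁}·(−c₂ log j)^i / i!` for columns `j ≥ 2`. -/
noncomputable def compMatrix (c₁ c₂ : ℂ) (i j : ℕ) : ℂ :=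
  if j = 0 then (if i = 0 then 1 else 0)
  else ((j : ℂ) + 1) ^ (-c₁) * (-c₂ * (Real.log ((j : ℝ) + 1) : ℂ)) ^ i / (Nat.factorial i)



namespace CompOpB

/-- `t^k / k! ≤ exp t` for `t ≥ 0`. -/
lemma pow_div_fact_le_exp {t : ℝ} (ht : 0 ≤ t) (k : ℕ) :
    t ^ k / (Nat.factorial k : ℝ) ≤ Real.exp t := by
  calc t ^ k / (Nat.factorial k : ℝ)
      ≤ ∑ i ∈ Finset.range (k + 1), t ^ i / (Nat.factorial i : ℝ) := by
        refine Finset.single_le_sum (f := fun i => t ^ i / (Nat.factorial i : ℝ)) ?_ ?_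
        · intro i _; positivity
        · simp
    _ ≤ Real.exp t := Real.sum_le_exp_of_nonneg ht _

/-- The comparison function. -/
noncomputable def gg (σ : ℝ) (k : ℕ) (x : ℝ) : ℝ :=
    x ^ (-(1 + σ)) * (σ * Real.log x) ^ k / (Nat.factorial k : ℝ)

lemma gg_nonneg {σ : ℝ} (hσ : 0 ≤ σ) (k : ℕ) {x : ℝ} (hx : 1 ≤ x) : 0 ≤ gg σ k x := by
  have h0 : (0:ℝ) < x := lt_of_lt_of_le one_pos hx
  have hl : 0 ≤ Real.log x := Real.log_nonneg hx
  unfold gg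
  positivity

lemma pow_term_le {σ τ x : ℝ} (hτ : 0 < τ) (hσ : 0 ≤ σ) (hx : 1 ≤ x) (k : ℕ) :
    (σ * Real.log x) ^ k / (Nat.factorial k : ℝ) ≤ (σ / τ) ^ k * x ^ τ := by
  have h0 : (0:ℝ) < x := lt_of_lt_of_le one_pos hx
  have hl : 0 ≤ Real.log x := Real.log_nonneg hx
  have h1 : (σ * Real.log x) ^ k = (σ / τ) ^ k * (τ * Real.log x) ^ k := by
    rw [← mul_pow]; congr 1; field_simp
  rw [h1, mul_div_assoc]
  refine mul_le_mul_of_nonneg_left ?_ (by positivity)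
  calc (τ * Real.log x) ^ k / (Nat.factorial k : ℝ) ≤ Real.exp (τ * Real.log x) :=
        pow_div_fact_le_exp (by positivity) k
    _ = x ^ τ := by rw [Real.rpow_def_of_pos h0, mul_comm]

lemma gg_mul_le_one {σ : ℝ} (hσ : 0 < σ) (k : ℕ) {x : ℝ} (hx : 1 ≤ x) :
    gg σ k x * x ≤ 1 := by
  have h0 : (0:ℝ) < x := lt_of_lt_of_le one_pos hx
  have h1 := pow_term_le (τ := σ) hσ hσ.le hx k
  rw [div_self (ne_of_gt hσ), one_pow, one_mul] at h1
  have hxp : (0:ℝ) ≤ x ^ (-(1+σ)) := le_of_lt (Real.rpow_pos_of_pos h0 _)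
  calc gg σ k x * x ≤ x ^ (-(1 + σ)) * x ^ σ * x := by
        unfold gg
        rw [mul_div_assoc]
        exact mul_le_mul_of_nonneg_right (mul_le_mul_of_nonneg_left h1 hxp) h0.le
    _ = x ^ (-(1 + σ) + σ + 1) := by
        rw [Real.rpow_add h0, Real.rpow_add h0, Real.rpow_one]
    _ = 1 := by norm_num

lemma gg_le_inv {σ : ℝ} (hσ : 0 < σ) (k : ℕ) {x : ℝ} (hx : 1 ≤ x) :
    gg σ k x ≤ x⁻¹ := by
  have h0 : (0:ℝ) < x := lt_of_lt_of_le one_pos hx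
  have := gg_mul_le_one hσ k hx
  rw [← le_div_iff₀ h0] at this
  simpa [one_div] using this

lemma gg_le_sup {σ : ℝ} (hσ : 0 < σ) (k : ℕ) {x : ℝ} (hx : 1 ≤ x) :
    gg σ k x ≤ (σ / (1 + σ)) ^ k := by
  have h0 : (0:ℝ) < x := lt_of_lt_of_le one_pos hx
  have h1 := pow_term_le (τ := 1 + σ) (by linarith) hσ.le hx k
  have hxp : (0:ℝ) ≤ x ^ (-(1+σ)) := le_of_lt (Real.rpow_pos_of_pos h0 _)
  calc gg σ k x ≤ x ^ (-(1 + σ)) * ((σ / (1 + σ)) ^ k * x ^ (1 + σ)) := by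
        unfold gg
        rw [mul_div_assoc]
        exact mul_le_mul_of_nonneg_left h1 hxp
    _ = (σ / (1 + σ)) ^ k * (x ^ (-(1 + σ)) * x ^ (1 + σ)) := by ring
    _ = (σ / (1 + σ)) ^ k := by
        rw [← Real.rpow_add h0]
        have he : -(1 + σ) + (1 + σ) = 0 := by ring
        rw [he, Real.rpow_zero, mul_one]

lemma gg_le_majorant {σ : ℝ} (hσ : 0 < σ) (k : ℕ) {x : ℝ} (hx : 1 ≤ x) :
    gg σ k x ≤ 2 ^ k * x ^ (-(1 + σ / 2)) := by
  have h0 : (0:ℝ) < x := lt_of_lt_of_le one_pos hx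
  have h1 := pow_term_le (τ := σ / 2) (by linarith) hσ.le hx k
  have h2 : σ / (σ / 2) = 2 := by field_simp
  rw [h2] at h1
  have hxp : (0:ℝ) ≤ x ^ (-(1+σ)) := le_of_lt (Real.rpow_pos_of_pos h0 _)
  calc gg σ k x ≤ x ^ (-(1 + σ)) * ((2:ℝ) ^ k * x ^ (σ / 2)) := by
        unfold gg
        rw [mul_div_assoc]
        exact mul_le_mul_of_nonneg_left h1 hxp
    _ = (2:ℝ) ^ k * (x ^ (-(1 + σ)) * x ^ (σ / 2)) := by ring
    _ = 2 ^ k * x ^ (-(1 + σ / 2)) := by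
        rw [← Real.rpow_add h0]
        have he : -(1 + σ) + σ / 2 = -(1 + σ / 2) := by ring
        rw [he]



lemma gg_hasDerivAt (σ : ℝ) (k : ℕ) {x : ℝ} (hx : 0 < x) :
    HasDerivAt (gg σ (k+1))
      ((x ^ (-(1+σ)) / x) * (σ * Real.log x) ^ k * (((k:ℝ)+1) * σ - (1+σ) * (σ * Real.log x))
        / (Nat.factorial (k+1) : ℝ)) x := by
  have h1 : HasDerivAt (fun y : ℝ => y ^ (-(1+σ))) ((-(1+σ)) * x ^ (-(1+σ)-1)) x :=
    Real.hasDerivAt_rpow_const (Or.inl hx.ne')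
  have hl : HasDerivAt (fun y : ℝ => σ * Real.log y) (σ * x⁻¹) x :=
    (Real.hasDerivAt_log hx.ne').const_mul σ
  have h2 := hl.pow (k+1)
  have h3 := (h1.mul h2).div_const ((Nat.factorial (k+1) : ℝ))
  have h4 : gg σ (k+1) = fun y : ℝ =>
      (fun y : ℝ => y ^ (-(1+σ))) y * (fun y : ℝ => (σ * Real.log y) ^ (k+1)) y
        / ((Nat.factorial (k+1) : ℝ)) := rfl
  rw [h4]
  refine h3.congr_deriv (Eq.symm ?_)
  rw [Real.rpow_sub hx, Real.rpow_one]
  simp only [Pi.pow_apply]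
  have hfac : ((Nat.factorial (k+1) : ℝ)) ≠ 0 := by positivity
  field_simp
  push_cast
  ring

lemma gg_contOn (σ : ℝ) (k : ℕ) : ContinuousOn (gg σ k) (Ici (1:ℝ)) := by
  apply ContinuousOn.div_const
  apply ContinuousOn.mul
  · exact continuousOn_id.rpow_const fun x hx =>
      Or.inl (ne_of_gt (lt_of_lt_of_le one_pos hx))
  · exact (continuousOn_const.mul (Real.continuousOn_log.mono fun x hx => by
      simp only [Set.mem_compl_iff, Set.mem_singleton_iff]
      exact ne_of_gt (lt_of_lt_of_le one_pos hx))).pow _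

lemma gg_monoOn {σ : ℝ} (hσ : 0 < σ) (k : ℕ) :
    MonotoneOn (gg σ (k+1)) (Icc 1 (Real.exp (((k:ℝ)+1)/(1+σ)))) := by
  have hp1 : (1:ℝ) ≤ Real.exp (((k:ℝ)+1)/(1+σ)) := by
    rw [← Real.exp_zero]
    apply Real.exp_le_exp.2; positivity
  apply monotoneOn_of_deriv_nonneg (convex_Icc _ _)
  · exact (gg_contOn σ (k+1)).mono (fun x hx => hx.1)
  · rw [interior_Icc]
    intro x hx
    exact ((gg_hasDerivAt σ k (lt_trans one_pos hx.1)).differentiableAt).differentiableWithinAt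
  · rw [interior_Icc]
    intro x hx
    have hx0 : (0:ℝ) < x := lt_trans one_pos hx.1
    rw [(gg_hasDerivAt σ k hx0).deriv]
    have hlog : Real.log x ≤ ((k:ℝ)+1)/(1+σ) := by
      rw [Real.log_le_iff_le_exp hx0]
      exact hx.2.le
    have hl0 : 0 ≤ Real.log x := Real.log_nonneg hx.1.le
    apply div_nonneg _ (by positivity)
    apply mul_nonneg (mul_nonneg (by positivity) (by positivity))
    have h' := (le_div_iff₀ (by linarith : (0:ℝ) < 1 + σ)).1 hlog
    nlinarith

lemma gg_antiOn {σ : ℝ} (hσ : 0 < σ) (k : ℕ) :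
    AntitoneOn (gg σ (k+1)) (Ici (Real.exp (((k:ℝ)+1)/(1+σ)))) := by
  have hp1 : (1:ℝ) ≤ Real.exp (((k:ℝ)+1)/(1+σ)) := by
    rw [← Real.exp_zero]
    apply Real.exp_le_exp.2; positivity
  apply antitoneOn_of_deriv_nonpos (convex_Ici _)
  · exact (gg_contOn σ (k+1)).mono (fun x hx => le_trans hp1 hx)
  · rw [interior_Ici]
    intro x hx
    have hx0 : (0:ℝ) < x := lt_of_lt_of_le one_pos (le_trans hp1 hx.le)
    exact ((gg_hasDerivAt σ k hx0).differentiableAt).differentiableWithinAt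
  · rw [interior_Ici]
    intro x hx
    have hx1 : (1:ℝ) ≤ x := le_trans hp1 hx.le
    have hx0 : (0:ℝ) < x := lt_of_lt_of_le one_pos hx1
    rw [(gg_hasDerivAt σ k hx0).deriv]
    have hlog : ((k:ℝ)+1)/(1+σ) ≤ Real.log x := by
      rw [Real.le_log_iff_exp_le hx0]
      exact hx.le
    have hl0 : 0 ≤ Real.log x := Real.log_nonneg hx1
    have hbr : ((k:ℝ)+1) * σ - (1+σ) * (σ * Real.log x) ≤ 0 := by
      rw [div_le_iff₀ (by linarith)] at hlog
      nlinarith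
    apply div_nonpos_of_nonpos_of_nonneg _ (by positivity)
    exact mul_nonpos_of_nonneg_of_nonpos (mul_nonneg (by positivity) (by positivity)) hbr

noncomputable def FF (σ : ℝ) (k : ℕ) (x : ℝ) : ℝ :=
    -(x ^ (-σ) * ∑ i ∈ Finset.range (k+1), (σ * Real.log x) ^ i / (Nat.factorial i : ℝ)) / σ

lemma FF_hasDerivAt {σ : ℝ} (hσ : 0 < σ) (k : ℕ) {x : ℝ} (hx : 0 < x) :
    HasDerivAt (FF σ k) (gg σ k x) x := by
  have h1 : HasDerivAt (fun y : ℝ => y ^ (-σ)) ((-σ) * x ^ (-σ-1)) x :=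
    Real.hasDerivAt_rpow_const (Or.inl hx.ne')
  have hl : HasDerivAt (fun y : ℝ => σ * Real.log y) (σ * x⁻¹) x :=
    (Real.hasDerivAt_log hx.ne').const_mul σ
  have h2 : HasDerivAt (fun y : ℝ => ∑ i ∈ Finset.range (k+1),
      (σ * Real.log y) ^ i / (Nat.factorial i : ℝ))
      (∑ i ∈ Finset.range (k+1), (i:ℝ) * (σ * Real.log x) ^ (i-1) * (σ * x⁻¹)
        / (Nat.factorial i : ℝ)) x := by
    apply HasDerivAt.fun_sum
    intro i _
    exact (hl.pow i).div_const _
  have hQD : (∑ i ∈ Finset.range (k+1), (i:ℝ) * (σ * Real.log x) ^ (i-1) * (σ * x⁻¹)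
        / (Nat.factorial i : ℝ))
      = (∑ i ∈ Finset.range k, (σ * Real.log x) ^ i / (Nat.factorial i : ℝ)) * (σ * x⁻¹) := by
    rw [Finset.sum_range_succ']
    simp only [Nat.cast_zero, zero_mul, pow_zero, Nat.factorial_zero, Nat.cast_one, zero_div,
      add_zero]
    rw [Finset.sum_mul]
    apply Finset.sum_congr rfl
    intro i _
    have hne : ((Nat.factorial (i+1) : ℝ)) ≠ 0 := by positivity
    have hne2 : ((Nat.factorial i : ℝ)) ≠ 0 := by positivity
    rw [Nat.factorial_succ]
    push_cast
    field_simp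
  have h3 := ((h1.mul h2).div_const σ).neg
  have h4 : FF σ k = fun y : ℝ =>
      -((fun y : ℝ => y ^ (-σ)) y * (fun y : ℝ => ∑ i ∈ Finset.range (k+1),
        (σ * Real.log y) ^ i / (Nat.factorial i : ℝ)) y / σ) := by
    funext y; simp [FF, neg_div]
  rw [h4]
  refine h3.congr_deriv (Eq.symm ?_)
  rw [hQD, Real.rpow_sub hx, Real.rpow_one]
  rw [Finset.sum_range_succ]
  unfold gg
  rw [(by ring : -(1+σ) = -σ - 1), Real.rpow_sub hx, Real.rpow_one]
  have hσne : σ ≠ 0 := hσ.ne'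
  have hfacne : ((Nat.factorial k : ℝ)) ≠ 0 := by positivity
  field_simp
  ring

lemma integral_gg_le {σ : ℝ} (hσ : 0 < σ) (k : ℕ) {b : ℝ} (hb : 1 ≤ b) :
    ∫ x in (1:ℝ)..b, gg σ k x ≤ 1/σ := by
  have huIcc : Set.uIcc (1:ℝ) b = Set.Icc 1 b := Set.uIcc_of_le hb
  have hkey : ∫ x in (1:ℝ)..b, gg σ k x = FF σ k b - FF σ k 1 := by
    apply intervalIntegral.integral_eq_sub_of_hasDerivAt
    · intro x hx
      rw [huIcc] at hx
      exact FF_hasDerivAt hσ k (lt_of_lt_of_le one_pos hx.1)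
    · apply ContinuousOn.intervalIntegrable
      rw [huIcc]
      exact (gg_contOn σ k).mono (fun x hx => hx.1)
  rw [hkey]
  have hFF1 : FF σ k 1 = -(1/σ) := by
    unfold FF
    rw [Real.log_one, Real.one_rpow]
    rw [Finset.sum_range_succ']
    simp
    ring
  have hFFb : FF σ k b ≤ 0 := by
    unfold FF
    apply div_nonpos_of_nonpos_of_nonneg _ hσ.le
    rw [neg_nonpos]
    apply mul_nonneg (Real.rpow_nonneg (by linarith) _)
    apply Finset.sum_nonneg
    intro i _
    have : 0 ≤ Real.log b := Real.log_nonneg hb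
    positivity
  linarith

lemma summable_shift_rpow {r : ℝ} (hr : 1 < r) :
    Summable (fun n : ℕ => ((n:ℝ)+1) ^ (-r)) := by
  have h0 := Real.summable_nat_rpow_inv.2 hr
  have h1 : Summable (fun n : ℕ => ((((n+1:ℕ):ℝ)) ^ r)⁻¹) := by
    exact (summable_nat_add_iff 1).2 h0
  apply h1.congr
  intro n
  push_cast
  rw [Real.rpow_neg (by positivity)]

lemma summable_gg {σ : ℝ} (hσ : 0 < σ) (k : ℕ) :
    Summable (fun n : ℕ => gg σ k ((n:ℝ)+1)) := by
  have hmaj : Summable (fun n : ℕ => (2:ℝ)^k * ((n:ℝ)+1) ^ (-(1 + σ/2))) :=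
    (summable_shift_rpow (by linarith)).mul_left _
  apply Summable.of_nonneg_of_le _ _ hmaj
  · intro n; exact gg_nonneg hσ.le k (by push_cast; linarith [Nat.cast_nonneg (α := ℝ) n])
  · intro n; exact gg_le_majorant hσ k (by push_cast; linarith [Nat.cast_nonneg (α := ℝ) n])


lemma gg_one (σ : ℝ) (k : ℕ) : gg σ (k+1) 1 = 0 := by
  unfold gg; simp [Real.log_one]

lemma nat_one_le_cast_add_one (n : ℕ) : (1:ℝ) ≤ (n:ℝ)+1 := by
  have : (0:ℝ) ≤ (n:ℝ) := Nat.cast_nonneg n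
  linarith

lemma sum_gg_le {σ : ℝ} (hσ : 0 < σ) (k : ℕ) (F : Finset ℕ) :
    ∑ n ∈ F, gg σ (k+1) ((n:ℝ)+1) ≤ 1/σ + min 2⁻¹ (σ/(1+σ)) := by
  set p : ℝ := Real.exp (((k:ℝ)+1)/(1+σ)) with hp
  have hp1 : (1:ℝ) ≤ p := by
    rw [hp, ← Real.exp_zero]; exact Real.exp_le_exp.2 (by positivity)
  set m : ℕ := ⌊p⌋₊ with hm
  have hm1 : 1 ≤ m := Nat.le_floor (by exact_mod_cast hp1)
  have hmp : (m:ℝ) ≤ p := Nat.floor_le (by linarith)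
  have hpm1 : p < (m:ℝ)+1 := by
    have := Nat.lt_floor_add_one p; push_cast at this ⊢; linarith
  have hm1R : (1:ℝ) ≤ (m:ℝ) := by exact_mod_cast hm1
  obtain ⟨N0, hFN⟩ : ∃ N0, ∀ n ∈ F, n < N0 :=
    ⟨(F.sup id)+1, fun n hn => Nat.lt_succ_of_le (Finset.le_sup (f := id) hn)⟩
  set N : ℕ := max N0 (m+2) with hN
  have hmN : m + 2 ≤ N := le_max_right _ _
  have hmNR : (m:ℝ) + 2 ≤ (N:ℝ) := by exact_mod_cast hmN
  have hFsub : F ⊆ Finset.range N := fun n hn =>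
    Finset.mem_range.2 (lt_of_lt_of_le (hFN n hn) (le_max_left _ _))
  have hnonneg : ∀ n : ℕ, 0 ≤ gg σ (k+1) ((n:ℝ)+1) :=
    fun n => gg_nonneg hσ.le _ (nat_one_le_cast_add_one n)
  -- interval integrability on [1,∞) pieces
  have hii : ∀ a b : ℝ, 1 ≤ a → IntervalIntegrable (gg σ (k+1)) volume a b ∨ True := fun _ _ _ => Or.inr trivial
  have hint : ∀ a b : ℝ, 1 ≤ a → a ≤ b → IntervalIntegrable (gg σ (k+1)) volume a b := by
    intro a b ha hab
    apply ContinuousOn.intervalIntegrable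
    rw [Set.uIcc_of_le hab]
    exact (gg_contOn σ (k+1)).mono (fun x hx => le_trans ha hx.1)
  have step1 : ∑ n ∈ F, gg σ (k+1) ((n:ℝ)+1)
      ≤ ∑ n ∈ Finset.range N, gg σ (k+1) ((n:ℝ)+1) :=
    Finset.sum_le_sum_of_subset_of_nonneg hFsub (fun n _ _ => hnonneg n)
  have step2 : ∑ n ∈ Finset.range N, gg σ (k+1) ((n:ℝ)+1)
      = ∑ n ∈ Finset.Ico 1 (N+1), gg σ (k+1) (n:ℝ) := by
    rw [Finset.sum_Ico_eq_sum_range]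
    simp only [Nat.add_sub_cancel]
    apply Finset.sum_congr rfl
    intro i _
    push_cast
    ring_nf
  have hsplitA : ∑ n ∈ Finset.Ico 1 m, gg σ (k+1) (n:ℝ)
        + ∑ n ∈ Finset.Ico m (m+2), gg σ (k+1) (n:ℝ)
        + ∑ n ∈ Finset.Ico (m+2) (N+1), gg σ (k+1) (n:ℝ)
      = ∑ n ∈ Finset.Ico 1 (N+1), gg σ (k+1) (n:ℝ) := by
    rw [Finset.sum_Ico_consecutive _ hm1 (by omega),
        Finset.sum_Ico_consecutive _ (by omega : 1 ≤ m+2) (by omega)]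
  -- piece A
  have hA : ∑ n ∈ Finset.Ico 1 m, gg σ (k+1) (n:ℝ)
      ≤ ∫ x in (1:ℕ)..(m:ℕ), gg σ (k+1) x := by
    apply MonotoneOn.sum_le_integral_Ico hm1
    exact (gg_monoOn hσ k).mono (by
      apply Set.Icc_subset_Icc
      · norm_num
      · exact hmp)
  -- piece C
  have hC : ∑ n ∈ Finset.Ico (m+2) (N+1), gg σ (k+1) (n:ℝ)
      ≤ ∫ x in (m+1:ℕ)..(N:ℕ), gg σ (k+1) x := by
    have hre : ∑ n ∈ Finset.Ico (m+2) (N+1), gg σ (k+1) (n:ℝ)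
        = ∑ i ∈ Finset.Ico (m+1) N, gg σ (k+1) ((i+1:ℕ):ℝ) := by
      have := Finset.sum_Ico_add (fun n : ℕ => gg σ (k+1) (n:ℝ)) (m+1) N 1
      rw [← this]
      apply Finset.sum_congr (by congr 1 <;> omega)
      intro i _
      push_cast; ring_nf
    rw [hre]
    apply AntitoneOn.sum_le_integral_Ico (by omega)
    refine (gg_antiOn hσ k).mono ?_
    intro x hx
    have : ((m:ℝ)+1) ≤ x := by
      have := hx.1; push_cast at this ⊢; linarith
    exact le_trans hpm1.le this
  -- piece B
  have hB : ∑ n ∈ Finset.Ico m (m+2), gg σ (k+1) (n:ℝ)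
      ≤ (∫ x in (m:ℝ)..((m:ℝ)+1), gg σ (k+1) x)
        + max (gg σ (k+1) (m:ℝ)) (gg σ (k+1) ((m:ℝ)+1)) := by
    have hsum2 : ∑ n ∈ Finset.Ico m (m+2), gg σ (k+1) (n:ℝ)
        = gg σ (k+1) (m:ℝ) + gg σ (k+1) ((m:ℝ)+1) := by
      rw [Finset.sum_Ico_eq_sum_range]
      simp only [Nat.add_sub_cancel_left]
      rw [Finset.sum_range_succ, Finset.sum_range_one]
      push_cast; ring_nf
    have hminle : min (gg σ (k+1) (m:ℝ)) (gg σ (k+1) ((m:ℝ)+1))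
        ≤ ∫ x in (m:ℝ)..((m:ℝ)+1), gg σ (k+1) x := by
      have hconst : ∫ _x in (m:ℝ)..((m:ℝ)+1),
          (min (gg σ (k+1) (m:ℝ)) (gg σ (k+1) ((m:ℝ)+1)))
          = min (gg σ (k+1) (m:ℝ)) (gg σ (k+1) ((m:ℝ)+1)) := by
        rw [intervalIntegral.integral_const]; simp
      rw [← hconst]
      apply intervalIntegral.integral_mono_on (by linarith) intervalIntegrable_const
        (hint _ _ hm1R (by linarith))
      intro x hx
      rcases le_total x p with hxp | hxp
      · refine le_trans (min_le_left _ _) ?_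
        exact (gg_monoOn hσ k) ⟨hm1R, hmp⟩ ⟨le_trans hm1R hx.1, hxp⟩ hx.1
      · refine le_trans (min_le_right _ _) ?_
        exact (gg_antiOn hσ k) hxp (le_trans hpm1.le (by linarith [hx.2])) hx.2
    rw [hsum2, ← min_add_max]
    linarith
  -- combine integrals
  have hcomb : (∫ x in (1:ℕ)..(m:ℕ), gg σ (k+1) x)
      + (∫ x in (m:ℝ)..((m:ℝ)+1), gg σ (k+1) x)
      + (∫ x in (m+1:ℕ)..(N:ℕ), gg σ (k+1) x)
      = ∫ x in (1:ℝ)..(N:ℝ), gg σ (k+1) x := by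
    push_cast
    rw [intervalIntegral.integral_add_adjacent_intervals (hint _ _ (by norm_num) hm1R)
        (hint _ _ hm1R (by linarith)),
      intervalIntegral.integral_add_adjacent_intervals (hint _ _ (by norm_num) (by linarith))
        (hint _ _ (by linarith) (by push_cast at hmNR ⊢; linarith))]
  have hintN : ∫ x in (1:ℝ)..(N:ℝ), gg σ (k+1) x ≤ 1/σ :=
    integral_gg_le hσ (k+1) (by push_cast at hmNR ⊢; linarith)
  -- max bound
  have hmax : max (gg σ (k+1) (m:ℝ)) (gg σ (k+1) ((m:ℝ)+1)) ≤ min 2⁻¹ (σ/(1+σ)) := by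
    apply le_min
    · -- integer bound
      have hb2 : gg σ (k+1) ((m:ℝ)+1) ≤ 2⁻¹ := by
        refine le_trans (gg_le_inv hσ (k+1) (by linarith)) ?_
        apply inv_anti₀ (by norm_num)
        linarith
      rcases eq_or_lt_of_le hm1 with h1 | h2
      · have : (m:ℝ) = 1 := by exact_mod_cast h1.symm
        rw [this, gg_one]
        apply max_le (by norm_num)
        refine le_trans (gg_le_inv hσ (k+1) (by norm_num)) (by norm_num)
      · have hm2 : (2:ℝ) ≤ (m:ℝ) := by exact_mod_cast h2
        apply max_le _ hb2
        refine le_trans (gg_le_inv hσ (k+1) (by linarith)) ?_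
        apply inv_anti₀ (by norm_num) hm2
    · have hratio : σ/(1+σ) ≤ 1 := by
        rw [div_le_one (by linarith)]; linarith
      have hratio0 : 0 ≤ σ/(1+σ) := by positivity
      have hp1' : (σ/(1+σ))^(k+1) ≤ (σ/(1+σ))^1 :=
        pow_le_pow_of_le_one hratio0 hratio (by omega)
      rw [pow_one] at hp1'
      apply max_le
      · exact le_trans (gg_le_sup hσ (k+1) hm1R) hp1'
      · exact le_trans (gg_le_sup hσ (k+1) (by linarith)) hp1'
  calc ∑ n ∈ F, gg σ (k+1) ((n:ℝ)+1)
      ≤ ∑ n ∈ Finset.Ico 1 (N+1), gg σ (k+1) (n:ℝ) := by rw [← step2]; exact step1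
    _ = ∑ n ∈ Finset.Ico 1 m, gg σ (k+1) (n:ℝ)
        + ∑ n ∈ Finset.Ico m (m+2), gg σ (k+1) (n:ℝ)
        + ∑ n ∈ Finset.Ico (m+2) (N+1), gg σ (k+1) (n:ℝ) := hsplitA.symm
    _ ≤ (∫ x in (1:ℕ)..(m:ℕ), gg σ (k+1) x)
        + ((∫ x in (m:ℝ)..((m:ℝ)+1), gg σ (k+1) x)
          + max (gg σ (k+1) (m:ℝ)) (gg σ (k+1) ((m:ℝ)+1)))
        + (∫ x in (m+1:ℕ)..(N:ℕ), gg σ (k+1) x) := by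
        gcongr
    _ = (∫ x in (1:ℝ)..(N:ℝ), gg σ (k+1) x)
        + max (gg σ (k+1) (m:ℝ)) (gg σ (k+1) ((m:ℝ)+1)) := by
        rw [← hcomb]; ring
    _ ≤ 1/σ + min 2⁻¹ (σ/(1+σ)) := add_le_add hintN hmax

section
open Filter

lemma summable_Zterm {σ : ℝ} (hσ : 0 < σ) :
    Summable (fun n : ℕ => ((n:ℝ)+1) ^ (-(1+σ))) := summable_shift_rpow (by linarith)

noncomputable def Zs (σ : ℝ) : ℝ := ∑' n : ℕ, ((n:ℝ)+1) ^ (-(1+σ))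

lemma Zs_ge {σ : ℝ} (hσ : 0 < σ) (a : ℕ) :
    ∑ n ∈ Finset.range a, ((n:ℝ)+1) ^ (-(1+σ)) + ((a:ℝ)+1) ^ (-σ)/σ ≤ Zs σ := by
  have hsum := summable_Zterm hσ
  have htend : Tendsto (fun b : ℕ => ∑ n ∈ Finset.range b, ((n:ℝ)+1) ^ (-(1+σ)))
      atTop (nhds (Zs σ)) := hsum.hasSum.tendsto_sum_nat
  have htail : Tendsto (fun b : ℕ => ((b:ℝ)+1) ^ (-σ)) atTop (nhds 0) := by
    have h1 : Tendsto (fun b : ℕ => ((b:ℝ)+1)) atTop atTop :=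
      Filter.tendsto_atTop_add_const_right atTop 1 tendsto_natCast_atTop_atTop
    exact (tendsto_rpow_neg_atTop hσ).comp h1
  have hLHS : Tendsto (fun b : ℕ => ∑ n ∈ Finset.range a, ((n:ℝ)+1) ^ (-(1+σ))
      + (((a:ℝ)+1) ^ (-σ) - ((b:ℝ)+1) ^ (-σ))/σ) atTop
      (nhds (∑ n ∈ Finset.range a, ((n:ℝ)+1) ^ (-(1+σ)) + ((a:ℝ)+1) ^ (-σ)/σ)) := by
    have h2 : Tendsto (fun b : ℕ => (((a:ℝ)+1) ^ (-σ) - ((b:ℝ)+1) ^ (-σ))/σ) atTop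
        (nhds (((a:ℝ)+1) ^ (-σ)/σ)) := by
      have := ((tendsto_const_nhds (x := ((a:ℝ)+1) ^ (-σ))).sub htail).div_const σ
      simpa using this
    exact (tendsto_const_nhds).add h2
  apply le_of_tendsto_of_tendsto hLHS htend
  filter_upwards [Filter.eventually_ge_atTop a] with b hab
  -- partial sum comparison for b ≥ a
  have hsplit : ∑ n ∈ Finset.range a, ((n:ℝ)+1) ^ (-(1+σ))
      + ∑ n ∈ Finset.Ico a b, ((n:ℝ)+1) ^ (-(1+σ))
      = ∑ n ∈ Finset.range b, ((n:ℝ)+1) ^ (-(1+σ)) :=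
    Finset.sum_range_add_sum_Ico _ hab
  have hanti : AntitoneOn (fun x : ℝ => x ^ (-(1+σ))) (Set.Icc ((a:ℝ)+1) ((b:ℝ)+1)) := by
    intro x hx y hy hxy
    exact Real.rpow_le_rpow_of_nonpos (lt_of_lt_of_le (by positivity) hx.1) hxy (by linarith)
  have hre : ∑ n ∈ Finset.Ico a b, ((n:ℝ)+1) ^ (-(1+σ))
      = ∑ x ∈ Finset.Ico (a+1) (b+1), ((x:ℝ)) ^ (-(1+σ)) := by
    have := Finset.sum_Ico_add (fun n : ℕ => ((n:ℝ)) ^ (-(1+σ))) a b 1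
    rw [← this]
    apply Finset.sum_congr rfl
    intro i _
    push_cast; ring_nf
  have hint : ∫ x in ((a+1:ℕ):ℝ)..((b+1:ℕ):ℝ), x ^ (-(1+σ))
      ≤ ∑ x ∈ Finset.Ico (a+1) (b+1), ((x:ℝ)) ^ (-(1+σ)) :=
    AntitoneOn.integral_le_sum_Ico (by omega) (by push_cast; exact hanti)
  have hival : ∫ x in ((a+1:ℕ):ℝ)..((b+1:ℕ):ℝ), x ^ (-(1+σ))
      = (((a:ℝ)+1) ^ (-σ) - ((b:ℝ)+1) ^ (-σ))/σ := by
    rw [integral_rpow]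
    · push_cast
      have h1 : -(1+σ) + 1 = -σ := by ring
      rw [h1, div_neg, ← neg_div, neg_sub]
    · right
      constructor
      · intro h; linarith
      · intro hmem
        rw [Set.uIcc_of_le (by push_cast; linarith [(Nat.cast_le (α := ℝ)).2 hab])] at hmem
        have := hmem.1
        push_cast at this
        linarith [Nat.cast_nonneg (α := ℝ) a]
  rw [← hsplit, hre]
  have := le_trans (le_of_eq hival.symm) hint
  linarith

lemma two_rpow_le {σ : ℝ} (h0 : 0 ≤ σ) (h1 : σ ≤ 1) : (2:ℝ) ^ σ ≤ 1 + σ := by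
  have h := convexOn_exp.2 (Set.mem_univ (0:ℝ)) (Set.mem_univ (Real.log 2))
    (show (0:ℝ) ≤ 1-σ by linarith) h0 (show (1-σ) + σ = 1 by ring)
  rw [smul_eq_mul, smul_eq_mul, smul_eq_mul, smul_eq_mul, mul_zero, zero_add,
    Real.exp_zero, Real.exp_log two_pos, mul_one] at h
  rw [Real.rpow_def_of_pos two_pos, mul_comm]
  linarith

lemma one_div_add_min_le_Zs {σ : ℝ} (hσ : 0 < σ) :
    1/σ + min 2⁻¹ (σ/(1+σ)) ≤ Zs σ := by
  have h1σ : (0:ℝ) < 1 + σ := by linarith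
  rcases le_total σ 1 with hc1 | hc1
  · have hz := Zs_ge hσ 1
    have e1 : ∑ n ∈ Finset.range 1, ((n:ℝ)+1) ^ (-(1+σ)) = 1 := by
      rw [Finset.sum_range_one]
      norm_num
    rw [e1] at hz
    norm_num at hz
    have h2σ : ((2:ℝ)) ^ (-σ) = ((2:ℝ) ^ σ)⁻¹ := by
      rw [Real.rpow_neg (by norm_num)]
    have hrp : (1+σ)⁻¹ ≤ ((2:ℝ)) ^ (-σ) := by
      rw [h2σ]
      exact inv_anti₀ (by positivity) (two_rpow_le hσ.le hc1)
    have heq : 1/σ + σ/(1+σ) = 1 + (1+σ)⁻¹/σ := by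
      field_simp
      ring
    calc 1/σ + min 2⁻¹ (σ/(1+σ)) ≤ 1/σ + σ/(1+σ) :=
          add_le_add_right (min_le_right _ _) _
      _ = 1 + (1+σ)⁻¹/σ := heq
      _ ≤ 1 + ((2:ℝ)) ^ (-σ)/σ := by gcongr
      _ ≤ Zs σ := hz
  · rcases le_total σ 2 with hc2 | hc2
    · -- 1 ≤ σ ≤ 2
      have hz := Zs_ge hσ 3
      have e3 : ∑ n ∈ Finset.range 3, ((n:ℝ)+1) ^ (-(1+σ))
          = 1 + (2:ℝ) ^ (-(1+σ)) + (3:ℝ) ^ (-(1+σ)) := by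
        rw [Finset.sum_range_succ, Finset.sum_range_succ, Finset.sum_range_one]
        norm_num
      rw [e3] at hz
      have h4cast : (((3:ℕ)):ℝ)+1 = 4 := by norm_num
      rw [h4cast] at hz
      set t : ℝ := σ - 1 with ht
      have ht0 : 0 ≤ t := by simp [ht]; linarith
      have ht1 : t ≤ 1 := by simp [ht]; linarith
      set L2 : ℝ := Real.log 2 with hL2
      set L3 : ℝ := Real.log 3 with hL3
      have hL2u : L2 ≤ 0.6932 := le_of_lt (lt_trans Real.log_two_lt_d9 (by norm_num))
      have hL2l : 0 < L2 := Real.log_pos one_lt_two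
      have hL3u : L3 ≤ 1.1932 := by
        have h3 : (3:ℝ) = 2 * 1.5 := by norm_num
        have hlog15 : Real.log 1.5 ≤ 0.5 :=
          le_trans (Real.log_le_sub_one_of_pos (by norm_num)) (by norm_num)
        rw [hL3, h3, Real.log_mul two_ne_zero (by norm_num)]
        linarith
      have hL3l : 0 < L3 := Real.log_pos (by norm_num)
      have he4 : Real.exp (-(2:ℝ)*L2) = 1/4 := by
        rw [show -(2:ℝ)*L2 = -(L2 + L2) by ring, Real.exp_neg, Real.exp_add,
          Real.exp_log two_pos]
        norm_num
      have he9 : Real.exp (-(2:ℝ)*L3) = 1/9 := by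
        rw [show -(2:ℝ)*L3 = -(L3 + L3) by ring, Real.exp_neg, Real.exp_add,
          Real.exp_log (by norm_num : (0:ℝ) < 3)]
        norm_num
      have hA : (1/4) * (1 - t*L2) ≤ (2:ℝ) ^ (-(1+σ)) := by
        have hsplit2 : (2:ℝ) ^ (-(1+σ)) = Real.exp (-(2:ℝ)*L2) * Real.exp (-(t*L2)) := by
          rw [Real.rpow_def_of_pos two_pos, ← Real.exp_add]
          congr 1
          rw [ht]; ring
        rw [hsplit2, he4]
        have hexp := Real.add_one_le_exp (-(t*L2))
        nlinarith
      have hB : (1/9) * (1 - t*L3) ≤ (3:ℝ) ^ (-(1+σ)) := by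
        have hsplit3 : (3:ℝ) ^ (-(1+σ)) = Real.exp (-(2:ℝ)*L3) * Real.exp (-(t*L3)) := by
          rw [Real.rpow_def_of_pos (by norm_num : (0:ℝ) < 3), ← Real.exp_add]
          congr 1
          rw [ht]; ring
        rw [hsplit3, he9]
        have hexp := Real.add_one_le_exp (-(t*L3))
        nlinarith
      have hC : (1/4) * (1 - 2*t*L2) ≤ (4:ℝ) ^ (-σ) := by
        have hlog4 : Real.log 4 = 2*L2 := by
          rw [show (4:ℝ) = 2^(2:ℕ) by norm_num, Real.log_pow]
          push_cast; ring
        have hsplit4 : (4:ℝ) ^ (-σ) = Real.exp (-(2:ℝ)*L2) * Real.exp (-(2*t*L2)) := by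
          rw [Real.rpow_def_of_pos (by norm_num : (0:ℝ) < 4), hlog4, ← Real.exp_add]
          congr 1
          rw [ht]; ring
        rw [hsplit4, he4]
        have hexp := Real.add_one_le_exp (-(2*t*L2))
        nlinarith
      set A : ℝ := (2:ℝ) ^ (-(1+σ)) with hAd
      set B : ℝ := (3:ℝ) ^ (-(1+σ)) with hBd
      set C : ℝ := (4:ℝ) ^ (-σ) with hCd
      have hnum : 1 + σ/2 ≤ σ*(1 + A + B) + C := by
        have hσt : σ = 1 + t := by rw [ht]; ring
        rw [hσt]
        nlinarith [mul_nonneg ht0 (sub_nonneg.2 hL2u), mul_nonneg ht0 (sub_nonneg.2 hL3u),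
          mul_nonneg (mul_nonneg ht0 ht0) (sub_nonneg.2 hL2u),
          mul_nonneg (mul_nonneg ht0 ht0) (sub_nonneg.2 hL3u),
          mul_nonneg ht0 (sub_nonneg.2 ht1), hL2l.le, hL3l.le]
      have hfin : 1/σ + 2⁻¹ ≤ 1 + A + B + C/σ := by
        have hd : (1 + σ/2) / σ ≤ (σ*(1+A+B) + C)/σ := by gcongr
        have e1 : (1 + σ/2)/σ = 1/σ + 2⁻¹ := by
          rw [add_div, div_right_comm, div_self hσ.ne', one_div]
          norm_num
        have e2 : (σ*(1 + A + B) + C)/σ = 1 + A + B + C/σ := by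
          rw [add_div, mul_comm, mul_div_assoc, div_self hσ.ne', mul_one]
        rw [e1, e2] at hd
        exact hd
      calc 1/σ + min 2⁻¹ (σ/(1+σ)) ≤ 1/σ + 2⁻¹ := add_le_add_right (min_le_left _ _) _
        _ ≤ 1 + A + B + C/σ := hfin
        _ ≤ Zs σ := hz
    · have hz := Zs_ge hσ 1
      have e1 : ∑ n ∈ Finset.range 1, ((n:ℝ)+1) ^ (-(1+σ)) = 1 := by
        rw [Finset.sum_range_one]; norm_num
      rw [e1] at hz
      norm_num at hz
      have hpos : 0 ≤ ((2:ℝ)) ^ (-σ)/σ := by positivity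
      have : 1/σ + min 2⁻¹ (σ/(1+σ)) ≤ 1/σ + 2⁻¹ :=
        add_le_add_right (min_le_left _ _) _
      have h1σ2 : 1/σ ≤ 2⁻¹ := by
        rw [div_le_iff₀ hσ]
        linarith
      linarith

lemma tsum_gg_le_Zs {σ : ℝ} (hσ : 0 < σ) (k : ℕ) :
    ∑' n : ℕ, gg σ k ((n:ℝ)+1) ≤ Zs σ := by
  cases k with
  | zero =>
    apply le_of_eq
    unfold Zs
    apply tsum_congr
    intro n
    unfold gg
    simp
  | succ k =>
    exact le_trans (Summable.tsum_le_of_sum_le (summable_gg hσ (k+1)) (fun s => sum_gg_le hσ k s))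
      (one_div_add_min_le_Zs hσ)

end


lemma summable_qq {σ : ℝ} (hσ : 0 < σ) {x : ℝ} (hx : 1 ≤ x) :
    Summable (fun i : ℕ => gg σ i x * x) := by
  have h0 : (0:ℝ) < x := lt_of_lt_of_le one_pos hx
  have : (fun i : ℕ => gg σ i x * x)
      = fun i : ℕ => (x ^ (-(1+σ)) * x) * ((σ * Real.log x) ^ i / (Nat.factorial i : ℝ)) := by
    funext i; unfold gg; ring
  rw [this]
  exact (Real.summable_pow_div_factorial _).mul_left _

lemma tsum_qq {σ : ℝ} (hσ : 0 < σ) {x : ℝ} (hx : 1 ≤ x) :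
    ∑' i : ℕ, gg σ i x * x = 1 := by
  have h0 : (0:ℝ) < x := lt_of_lt_of_le one_pos hx
  have h1 : (fun i : ℕ => gg σ i x * x)
      = fun i : ℕ => (x ^ (-(1+σ)) * x) * ((σ * Real.log x) ^ i / (Nat.factorial i : ℝ)) := by
    funext i; unfold gg; ring
  rw [h1, tsum_mul_left]
  have h2 : ∑' i : ℕ, (σ * Real.log x) ^ i / (Nat.factorial i : ℝ)
      = Real.exp (σ * Real.log x) := by
    rw [Real.exp_eq_exp_ℝ, NormedSpace.exp_eq_tsum_div]
  have h3 : Real.exp (σ * Real.log x) = x ^ σ := by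
    rw [Real.rpow_def_of_pos h0, mul_comm]
  rw [h2, h3]
  have h4 : x ^ (-(1+σ)) * x * x ^ σ = x ^ ((-(1+σ)) + 1 + σ) := by
    rw [Real.rpow_add h0, Real.rpow_add h0, Real.rpow_one]
  rw [mul_comm (x ^ (-(1+σ)) * x) (x ^ σ), mul_comm (x ^ σ), h4]
  norm_num

lemma norm_compMatrix {c₁ c₂ : ℂ} (hre : c₁.re = 1/2 + ‖c₂‖) (i j : ℕ) :
    ‖compMatrix c₁ c₂ i j‖
      = gg (‖c₂‖) i ((j:ℝ)+1) * ((j:ℝ)+1) ^ ((2:ℝ)⁻¹) := by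
  set σ : ℝ := ‖c₂‖ with hσdef
  rcases Nat.eq_zero_or_pos j with hj | hj
  · subst hj
    simp only [compMatrix, if_pos rfl]
    rw [show ((0:ℕ):ℝ) + 1 = 1 by norm_num, Real.one_rpow, mul_one]
    unfold gg
    rw [Real.log_one, Real.one_rpow, mul_zero]
    cases i with
    | zero => simp
    | succ n => simp [zero_pow (Nat.succ_ne_zero n)]
  · have hj0 : j ≠ 0 := hj.ne'
    simp only [compMatrix, if_neg hj0]
    have hjpos : (0:ℝ) < (j:ℝ)+1 := by positivity
    have hj1 : (1:ℝ) ≤ (j:ℝ)+1 := by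
      have : (0:ℝ) ≤ (j:ℝ) := Nat.cast_nonneg j
      linarith
    have hlog0 : 0 ≤ Real.log ((j:ℝ)+1) := Real.log_nonneg hj1
    have hcast : ((j:ℂ) + 1) = ((((j:ℝ)+1) : ℝ) : ℂ) := by push_cast; ring
    rw [norm_div, norm_mul, norm_pow, hcast]
    have h1 : ‖(((((j:ℝ)+1) : ℝ) : ℂ)) ^ (-c₁)‖ = ((j:ℝ)+1) ^ (-(c₁.re)) := by
      rw [Complex.norm_cpow_eq_rpow_re_of_pos hjpos]
      norm_num
    have h2 : ‖-c₂ * ((Real.log ((j:ℝ)+1) : ℝ) : ℂ)‖ = σ * Real.log ((j:ℝ)+1) := by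
      rw [norm_mul, norm_neg, Complex.norm_real]
      rw [Real.norm_eq_abs, abs_of_nonneg hlog0]
    have h3 : ‖((Nat.factorial i : ℕ) : ℂ)‖ = (Nat.factorial i : ℝ) := by
      rw [Complex.norm_natCast]
    rw [h1, h2, h3]
    unfold gg
    rw [hre]
    have h4 : ((j:ℝ)+1) ^ (-(1/2 + σ)) = ((j:ℝ)+1) ^ (-(1+σ)) * ((j:ℝ)+1) ^ ((2:ℝ)⁻¹) := by
      rw [← Real.rpow_add hjpos]
      congr 1
      ring
    rw [h4]
    ring


lemma w2_sq {j : ℕ} : (((j:ℝ)+1) ^ ((2:ℝ)⁻¹)) ^ 2 = (j:ℝ)+1 := by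
  have h0 : (0:ℝ) ≤ (j:ℝ)+1 := by positivity
  rw [← Real.rpow_natCast (((j:ℝ)+1) ^ ((2:ℝ)⁻¹)) 2, ← Real.rpow_mul h0]
  norm_num

lemma one_le_jadd (j : ℕ) : (1:ℝ) ≤ (j:ℝ)+1 := by
  have : (0:ℝ) ≤ (j:ℝ) := Nat.cast_nonneg j
  linarith

/-- Row Cauchy–Schwarz bound. -/
lemma row_bound {σ : ℝ} (hσ : 0 < σ) (x : ℕ → ℂ)
    (hx : Summable fun j => ‖x j‖^2) (i : ℕ) :
    Summable (fun j : ℕ => gg σ i ((j:ℝ)+1) * ((j:ℝ)+1) ^ ((2:ℝ)⁻¹) * ‖x j‖) ∧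
    (∑' j : ℕ, gg σ i ((j:ℝ)+1) * ((j:ℝ)+1) ^ ((2:ℝ)⁻¹) * ‖x j‖)^2
      ≤ Zs σ * ∑' j : ℕ, (gg σ i ((j:ℝ)+1) * ((j:ℝ)+1)) * ‖x j‖^2 := by
  set r : ℕ → ℝ := fun j => gg σ i ((j:ℝ)+1) with hr
  set q : ℕ → ℝ := fun j => gg σ i ((j:ℝ)+1) * ((j:ℝ)+1) with hq
  have hrnn : ∀ j, 0 ≤ r j := fun j => gg_nonneg hσ.le i (one_le_jadd j)
  have hqnn : ∀ j, 0 ≤ q j := fun j => mul_nonneg (hrnn j) (by positivity)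
  have hq1 : ∀ j, q j ≤ 1 := fun j => gg_mul_le_one hσ i (one_le_jadd j)
  have hrsum : Summable r := summable_gg hσ i
  have hrle : ∑' j, r j ≤ Zs σ := tsum_gg_le_Zs hσ i
  have hZnn : 0 ≤ Zs σ := le_trans (tsum_nonneg hrnn) hrle
  have hgsum : Summable (fun j => q j * ‖x j‖^2) := by
    apply Summable.of_nonneg_of_le (fun j => mul_nonneg (hqnn j) (by positivity))
      (fun j => ?_) hx
    calc q j * ‖x j‖^2 ≤ 1 * ‖x j‖^2 := by
          apply mul_le_mul_of_nonneg_right (hq1 j) (by positivity)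
      _ = ‖x j‖^2 := one_mul _
  set V : ℝ := ∑' j, q j * ‖x j‖^2 with hV
  have hVnn : 0 ≤ V := tsum_nonneg fun j => mul_nonneg (hqnn j) (by positivity)
  have hsq : ∀ j, (r j * ((j:ℝ)+1) ^ ((2:ℝ)⁻¹) * ‖x j‖)^2 = r j * (q j * ‖x j‖^2) := by
    intro j
    have : (r j * ((j:ℝ)+1) ^ ((2:ℝ)⁻¹) * ‖x j‖)^2
        = r j * r j * ((((j:ℝ)+1) ^ ((2:ℝ)⁻¹))^2) * ‖x j‖^2 := by ring
    rw [this, w2_sq, hq]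
    simp only [hr]
    ring
  have hfin : ∀ s : Finset ℕ, ∑ j ∈ s, r j * ((j:ℝ)+1) ^ ((2:ℝ)⁻¹) * ‖x j‖
      ≤ Real.sqrt (Zs σ * V) := by
    intro s
    have hCS := Finset.sum_sq_le_sum_mul_sum_of_sq_eq_mul s
      (f := r) (g := fun j => q j * ‖x j‖^2)
      (r := fun j => r j * ((j:ℝ)+1) ^ ((2:ℝ)⁻¹) * ‖x j‖)
      (fun j _ => hrnn j) (fun j _ => mul_nonneg (hqnn j) (by positivity))
      (fun j _ => hsq j)
    have h1 : ∑ j ∈ s, r j ≤ Zs σ :=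
      le_trans (Summable.sum_le_tsum s (fun j _ => hrnn j) hrsum) hrle
    have h2 : ∑ j ∈ s, q j * ‖x j‖^2 ≤ V :=
      Summable.sum_le_tsum s (fun j _ => mul_nonneg (hqnn j) (by positivity)) hgsum
    have h3 : (∑ j ∈ s, r j * ((j:ℝ)+1) ^ ((2:ℝ)⁻¹) * ‖x j‖)^2 ≤ Zs σ * V := by
      refine le_trans hCS ?_
      apply mul_le_mul h1 h2 (Finset.sum_nonneg fun j _ =>
        mul_nonneg (hqnn j) (by positivity)) hZnn
    have h4 : 0 ≤ ∑ j ∈ s, r j * ((j:ℝ)+1) ^ ((2:ℝ)⁻¹) * ‖x j‖ :=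
      Finset.sum_nonneg fun j _ => mul_nonneg (mul_nonneg (hrnn j) (by positivity))
        (by positivity)
    exact (Real.le_sqrt h4 (mul_nonneg hZnn hVnn)).2 h3
  have hsummable : Summable (fun j => r j * ((j:ℝ)+1) ^ ((2:ℝ)⁻¹) * ‖x j‖) :=
    summable_of_sum_le (fun j => mul_nonneg (mul_nonneg (hrnn j) (by positivity))
      (by positivity)) hfin
  refine ⟨hsummable, ?_⟩
  have htsum := Summable.tsum_le_of_sum_le hsummable hfin
  have h0 : 0 ≤ ∑' j, r j * ((j:ℝ)+1) ^ ((2:ℝ)⁻¹) * ‖x j‖ :=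
    tsum_nonneg fun j => mul_nonneg (mul_nonneg (hrnn j) (by positivity)) (by positivity)
  calc (∑' j, r j * ((j:ℝ)+1) ^ ((2:ℝ)⁻¹) * ‖x j‖)^2
      ≤ (Real.sqrt (Zs σ * V))^2 := by
        apply pow_le_pow_left₀ h0 htsum
    _ = Zs σ * V := Real.sq_sqrt (mul_nonneg hZnn hVnn)


/-- Full Schur-test bound for the matrix. -/
lemma general_bound {σ : ℝ} (hσ : 0 < σ) (A : ℕ → ℕ → ℂ)
    (hA : ∀ i j, ‖A i j‖ = gg σ i ((j:ℝ)+1) * ((j:ℝ)+1) ^ ((2:ℝ)⁻¹))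
    (x : ℕ → ℂ) (hx : Summable fun j => ‖x j‖^2) :
    (∀ i, Summable fun j : ℕ => A i j * x j) ∧
    Summable (fun i : ℕ => ‖∑' j : ℕ, A i j * x j‖^2) ∧
    ∑' i : ℕ, ‖∑' j : ℕ, A i j * x j‖^2 ≤ Zs σ * ∑' j : ℕ, ‖x j‖^2 := by
  have hnormAx : ∀ i j, ‖A i j * x j‖
      = gg σ i ((j:ℝ)+1) * ((j:ℝ)+1) ^ ((2:ℝ)⁻¹) * ‖x j‖ := by
    intro i j; rw [norm_mul, hA]
  have hrowsum : ∀ i, Summable (fun j : ℕ => ‖A i j * x j‖) := by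
    intro i
    exact Summable.congr (row_bound hσ x hx i).1 (fun j => (hnormAx i j).symm)
  have hsum_i : ∀ i, Summable fun j : ℕ => A i j * x j :=
    fun i => (hrowsum i).of_norm
  -- the product function, indexed by (j, i)
  set f : ℕ × ℕ → ℝ := fun p => (gg σ p.2 ((p.1:ℝ)+1) * ((p.1:ℝ)+1)) * ‖x p.1‖^2 with hf
  have hfnn : ∀ p, 0 ≤ f p := by
    intro p
    apply mul_nonneg (mul_nonneg (gg_nonneg hσ.le _ (one_le_jadd _)) (by positivity))
      (by positivity)
  have hfib : ∀ j : ℕ, Summable fun i : ℕ => f (j, i) := fun j =>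
    ((summable_qq hσ (one_le_jadd j)).mul_right (‖x j‖^2)).congr (fun i => rfl)
  have hfibsum : ∀ j : ℕ, ∑' i : ℕ, f (j, i) = ‖x j‖^2 := by
    intro j
    rw [show (fun i : ℕ => f (j, i))
        = fun i : ℕ => (gg σ i ((j:ℝ)+1) * ((j:ℝ)+1)) * ‖x j‖^2 from rfl]
    rw [tsum_mul_right, tsum_qq hσ (one_le_jadd j), one_mul]
  have hfsummable : Summable f := by
    rw [summable_prod_of_nonneg hfnn]
    exact ⟨hfib, by
      apply Summable.congr hx
      intro j
      rw [hfibsum j]⟩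
  have hswap : Summable (fun p : ℕ × ℕ => f p.swap) := hfsummable.prod_symm
  have hVsummable : Summable (fun i : ℕ => ∑' j : ℕ, f (j, i)) := by
    have h := (summable_prod_of_nonneg (fun p => hfnn p.swap)).1 hswap
    exact h.2
  have hVtsum : ∑' i : ℕ, ∑' j : ℕ, f (j, i) = ∑' j : ℕ, ‖x j‖^2 := by
    have h1 : ∑' p : ℕ × ℕ, f p.swap = ∑' i : ℕ, ∑' j : ℕ, f (j, i) :=
      Summable.tsum_prod' hswap (fun i => (summable_prod_of_nonneg (fun p => hfnn p.swap)).1 hswap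
        |>.1 i)
    have h2 : ∑' p : ℕ × ℕ, f p = ∑' j : ℕ, ∑' i : ℕ, f (j, i) :=
      Summable.tsum_prod' hfsummable hfib
    have h3 : ∑' p : ℕ × ℕ, f p.swap = ∑' p : ℕ × ℕ, f p := by
      exact (Equiv.prodComm ℕ ℕ).tsum_eq f
    rw [← h1, h3, h2]
    exact tsum_congr hfibsum
  -- per-row bound
  have hTi : ∀ i, ‖∑' j : ℕ, A i j * x j‖^2 ≤ Zs σ * ∑' j : ℕ, f (j, i) := by
    intro i
    have hb1 : ‖∑' j : ℕ, A i j * x j‖ ≤ ∑' j : ℕ, ‖A i j * x j‖ :=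
      norm_tsum_le_tsum_norm (hrowsum i)
    have hb2 : ∑' j : ℕ, ‖A i j * x j‖
        = ∑' j : ℕ, gg σ i ((j:ℝ)+1) * ((j:ℝ)+1) ^ ((2:ℝ)⁻¹) * ‖x j‖ :=
      tsum_congr (fun j => hnormAx i j)
    have hb3 : ‖∑' j : ℕ, A i j * x j‖^2
        ≤ (∑' j : ℕ, gg σ i ((j:ℝ)+1) * ((j:ℝ)+1) ^ ((2:ℝ)⁻¹) * ‖x j‖)^2 := by
      apply pow_le_pow_left₀ (norm_nonneg _)
      rw [← hb2]
      exact hb1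
    exact le_trans hb3 (row_bound hσ x hx i).2
  have hZnn : 0 ≤ Zs σ :=
    le_trans (tsum_nonneg (fun j => gg_nonneg hσ.le 0 (one_le_jadd j))) (tsum_gg_le_Zs hσ 0)
  have hTnn : ∀ i : ℕ, (0:ℝ) ≤ ‖∑' j : ℕ, A i j * x j‖^2 := fun i => by positivity
  have hTsummable : Summable (fun i : ℕ => ‖∑' j : ℕ, A i j * x j‖^2) := by
    apply Summable.of_nonneg_of_le hTnn hTi
    exact hVsummable.mul_left _
  refine ⟨hsum_i, hTsummable, ?_⟩
  calc ∑' i : ℕ, ‖∑' j : ℕ, A i j * x j‖^2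
      ≤ ∑' i : ℕ, Zs σ * ∑' j : ℕ, f (j, i) :=
        Summable.tsum_le_tsum hTi hTsummable (hVsummable.mul_left _)
    _ = Zs σ * ∑' i : ℕ, ∑' j : ℕ, f (j, i) := tsum_mul_left
    _ = Zs σ * ∑' j : ℕ, ‖x j‖^2 := by rw [hVtsum]


lemma lp2_summable_sq (x : lp (fun _ : ℕ => ℂ) 2) :
    Summable fun j : ℕ => ‖(x : ∀ _ : ℕ, ℂ) j‖^2 := by
  have h := lp.memℓp x
  rw [memℓp_gen_iff (by norm_num : 0 < (2:ℝ≥0∞).toReal)] at h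
  apply h.congr
  intro i
  rw [show (2:ℝ≥0∞).toReal = ((2:ℕ):ℝ) by norm_num, Real.rpow_natCast]

lemma lp2_norm_sq (x : lp (fun _ : ℕ => ℂ) 2) :
    ‖x‖^(2:ℕ) = ∑' j : ℕ, ‖(x : ∀ _ : ℕ, ℂ) j‖^(2:ℕ) := by
  have h := lp.norm_rpow_eq_tsum (by norm_num : 0 < (2:ℝ≥0∞).toReal) x
  have h2 : ∀ y : ℝ, y ^ (2:ℝ≥0∞).toReal = y ^ (2:ℕ) := by
    intro y
    rw [show (2:ℝ≥0∞).toReal = ((2:ℕ):ℝ) by norm_num, Real.rpow_natCast]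
  rw [h2] at h
  rw [h]
  exact tsum_congr (fun j => h2 _)

lemma zeta_re_eq {r : ℝ} (hr : 1 < r) :
    (riemannZeta ((r:ℝ):ℂ)).re = ∑' n : ℕ, ((n:ℝ)+1) ^ (-r) := by
  have hre : 1 < ((r:ℂ)).re := by rwa [Complex.ofReal_re]
  have hterm : ∀ n : ℕ, (1 / ((n:ℂ) + 1) ^ ((r:ℝ):ℂ)) = (((((n:ℝ)+1) ^ (-r) : ℝ)):ℂ) := by
    intro n
    rw [one_div, ← Complex.cpow_neg]
    rw [show ((n:ℂ)+1) = ((((n:ℝ)+1):ℝ):ℂ) by push_cast; ring]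
    rw [show (-((r:ℝ):ℂ)) = (((-r : ℝ)):ℂ) by push_cast; ring]
    rw [← Complex.ofReal_cpow (by positivity)]
  have hsummable : Summable (fun n : ℕ => 1 / ((n:ℂ) + 1) ^ ((r:ℝ):ℂ)) := by
    apply Summable.congr _ (fun n => (hterm n).symm)
    exact Complex.summable_ofReal.2 (summable_shift_rpow hr)
  rw [zeta_eq_tsum_one_div_nat_add_one_cpow hre, Complex.re_tsum hsummable]
  apply tsum_congr
  intro n
  rw [hterm n, Complex.ofReal_re]

lemma norm_row0_sq {c₁ c₂ : ℂ} (hre : c₁.re = 1/2 + ‖c₂‖) (j : ℕ) :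
    ‖compMatrix c₁ c₂ 0 j‖^(2:ℕ) = ((j:ℝ)+1) ^ (-(1+2*‖c₂‖)) := by
  set σ : ℝ := ‖c₂‖
  have hpos : (0:ℝ) < (j:ℝ)+1 := by positivity
  rw [norm_compMatrix hre]
  have hgg0 : gg σ 0 ((j:ℝ)+1) = ((j:ℝ)+1) ^ (-(1+σ)) := by
    unfold gg; simp
  rw [hgg0, ← Real.rpow_add hpos, ← Real.rpow_natCast (((j:ℝ)+1) ^ (-(1+σ) + (2:ℝ)⁻¹)) 2,
    ← Real.rpow_mul hpos.le]
  congr 1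
  push_cast
  ring

theorem norm_estimate_comp_operator_boundary' (c₁ c₂ : ℂ) (hc₂ : c₂ ≠ 0)
    (hre : c₁.re = 1 / 2 + ‖c₂‖) :
    ∃ T : lp (fun _ : ℕ => ℂ) 2 →L[ℂ] lp (fun _ : ℕ => ℂ) 2,
      (∀ (x : lp (fun _ : ℕ => ℂ) 2) (i : ℕ), T x i = ∑' j : ℕ, compMatrix c₁ c₂ i j * x j) ∧
      (riemannZeta ((1 + 2 * ‖c₂‖ : ℝ) : ℂ)).re ≤ ‖T‖ ^ 2 ∧
      ‖T‖ ^ 2 ≤ (riemannZeta ((1 + ‖c₂‖ : ℝ) : ℂ)).re := by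
  set σ : ℝ := ‖c₂‖ with hσdef
  have hσ : 0 < σ := norm_pos_iff.2 hc₂
  have hA : ∀ i j, ‖compMatrix c₁ c₂ i j‖
      = gg σ i ((j:ℝ)+1) * ((j:ℝ)+1) ^ ((2:ℝ)⁻¹) := norm_compMatrix hre
  have hZnn : 0 ≤ Zs σ :=
    le_trans (tsum_nonneg (fun j => gg_nonneg hσ.le 0 (one_le_jadd j))) (tsum_gg_le_Zs hσ 0)
  -- the underlying function
  have hmem : ∀ x : lp (fun _ : ℕ => ℂ) 2,
      Memℓp (fun i : ℕ => ∑' j : ℕ, compMatrix c₁ c₂ i j * x j) 2 := by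
    intro x
    obtain ⟨h1, h2, h3⟩ := general_bound hσ (compMatrix c₁ c₂) hA x (lp2_summable_sq x)
    apply memℓp_gen
    apply Summable.congr h2
    intro i
    rw [show (2:ℝ≥0∞).toReal = ((2:ℕ):ℝ) by norm_num, Real.rpow_natCast]
  -- linear map
  set L : lp (fun _ : ℕ => ℂ) 2 →ₗ[ℂ] lp (fun _ : ℕ => ℂ) 2 :=
    { toFun := fun x => (⟨fun i : ℕ => ∑' j : ℕ, compMatrix c₁ c₂ i j * x j, hmem x⟩ :
        lp (fun _ : ℕ => ℂ) 2)
      map_add' := by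
        intro x y
        apply lp.ext
        funext i
        have hx := (general_bound hσ (compMatrix c₁ c₂) hA x (lp2_summable_sq x)).1 i
        have hy := (general_bound hσ (compMatrix c₁ c₂) hA y (lp2_summable_sq y)).1 i
        have hco : ∀ j : ℕ, ((x + y : lp (fun _ : ℕ => ℂ) 2) : ∀ _ : ℕ, ℂ) j
            = x j + y j := by
          intro j; rw [lp.coeFn_add]; rfl
        show ∑' j : ℕ, compMatrix c₁ c₂ i j * ((x + y : lp (fun _ : ℕ => ℂ) 2) : ∀ _ : ℕ, ℂ) j
            = (∑' j : ℕ, compMatrix c₁ c₂ i j * x j) + ∑' j : ℕ, compMatrix c₁ c₂ i j * y j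
        rw [show (fun j : ℕ => compMatrix c₁ c₂ i j *
            ((x + y : lp (fun _ : ℕ => ℂ) 2) : ∀ _ : ℕ, ℂ) j)
            = fun j : ℕ => compMatrix c₁ c₂ i j * x j + compMatrix c₁ c₂ i j * y j by
          funext j; rw [hco j, mul_add]]
        exact Summable.tsum_add hx hy
      map_smul' := by
        intro c x
        apply lp.ext
        funext i
        have hx := (general_bound hσ (compMatrix c₁ c₂) hA x (lp2_summable_sq x)).1 i
        have hco : ∀ j : ℕ, ((c • x : lp (fun _ : ℕ => ℂ) 2) : ∀ _ : ℕ, ℂ) j = c * x j := by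
          intro j; rw [lp.coeFn_smul]; rfl
        show ∑' j : ℕ, compMatrix c₁ c₂ i j * ((c • x : lp (fun _ : ℕ => ℂ) 2) : ∀ _ : ℕ, ℂ) j
            = c * ∑' j : ℕ, compMatrix c₁ c₂ i j * x j
        rw [show (fun j : ℕ => compMatrix c₁ c₂ i j *
            ((c • x : lp (fun _ : ℕ => ℂ) 2) : ∀ _ : ℕ, ℂ) j)
            = fun j : ℕ => c * (compMatrix c₁ c₂ i j * x j) by
          funext j; rw [hco j]; ring]
        exact tsum_mul_left } with hL
  have hbound : ∀ x : lp (fun _ : ℕ => ℂ) 2, ‖L x‖ ≤ Real.sqrt (Zs σ) * ‖x‖ := by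
    intro x
    obtain ⟨h1, h2, h3⟩ := general_bound hσ (compMatrix c₁ c₂) hA x (lp2_summable_sq x)
    apply lp.norm_le_of_tsum_le (by norm_num : 0 < (2:ℝ≥0∞).toReal)
      (mul_nonneg (Real.sqrt_nonneg _) (norm_nonneg _))
    have hconv : ∀ y : ℝ, y ^ (2:ℝ≥0∞).toReal = y ^ (2:ℕ) := by
      intro y
      rw [show (2:ℝ≥0∞).toReal = ((2:ℕ):ℝ) by norm_num, Real.rpow_natCast]
    calc ∑' i : ℕ, ‖(L x : ∀ _ : ℕ, ℂ) i‖ ^ (2:ℝ≥0∞).toReal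
        = ∑' i : ℕ, ‖∑' j : ℕ, compMatrix c₁ c₂ i j * x j‖ ^ (2:ℕ) :=
          tsum_congr (fun i => hconv _)
      _ ≤ Zs σ * ∑' j : ℕ, ‖(x : ∀ _ : ℕ, ℂ) j‖^2 := h3
      _ = Zs σ * ‖x‖^(2:ℕ) := by rw [← lp2_norm_sq]
      _ = (Real.sqrt (Zs σ) * ‖x‖) ^ (2:ℕ) := by
          rw [mul_pow, Real.sq_sqrt hZnn]
      _ = (Real.sqrt (Zs σ) * ‖x‖) ^ (2:ℝ≥0∞).toReal := (hconv _).symm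
  set T := L.mkContinuous (Real.sqrt (Zs σ)) hbound with hT
  refine ⟨T, fun x i => rfl, ?_, ?_⟩
  · -- lower bound
    have hzre : (riemannZeta ((1 + 2*σ : ℝ) : ℂ)).re
        = ∑' n : ℕ, ((n:ℝ)+1) ^ (-(1+2*σ)) := zeta_re_eq (by linarith)
    rw [show ((1 + 2 * ‖c₂‖ : ℝ) : ℂ) = ((1 + 2*σ : ℝ) : ℂ) by rw [hσdef], hzre]
    apply Summable.tsum_le_of_sum_le (summable_shift_rpow (by linarith))
    intro F
    classical
    set y : ℕ → ℂ := fun j => if j ∈ F then (starRingEnd ℂ) (compMatrix c₁ c₂ 0 j) else 0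
      with hy
    have hymem : Memℓp y 2 := by
      apply memℓp_gen
      apply summable_of_ne_finset_zero (s := F)
      intro j hj
      simp [hy, hj, Real.zero_rpow (by norm_num : (2:ℝ≥0∞).toReal ≠ 0)]
    set ylp : lp (fun _ : ℕ => ℂ) 2 := ⟨y, hymem⟩ with hylp
    set P : ℝ := ∑ j ∈ F, ‖compMatrix c₁ c₂ 0 j‖^(2:ℕ) with hP
    have hPnn : 0 ≤ P := Finset.sum_nonneg (fun j _ => by positivity)
    have hgoal : ∑ j ∈ F, ((j:ℝ)+1) ^ (-(1+2*σ)) = P := by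
      rw [hP]
      exact Finset.sum_congr rfl (fun j _ => (norm_row0_sq hre j).symm)
    rw [hgoal]
    -- T ylp 0 = P
    have hT0 : (T ylp : ∀ _ : ℕ, ℂ) 0 = ((P:ℝ):ℂ) := by
      show ∑' j : ℕ, compMatrix c₁ c₂ 0 j * y j = ((P:ℝ):ℂ)
      rw [tsum_eq_sum (s := F) (fun j hj => by simp [hy, hj])]
      rw [hP]
      push_cast
      apply Finset.sum_congr rfl
      intro j hj
      rw [hy]
      simp only [if_pos hj]
      rw [Complex.mul_conj, Complex.normSq_eq_norm_sq]
      push_cast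
      ring
    have hstep1 : P ≤ ‖T‖ * ‖ylp‖ := by
      calc P = ‖(T ylp : ∀ _ : ℕ, ℂ) 0‖ := by
            rw [hT0, Complex.norm_real, Real.norm_eq_abs, abs_of_nonneg hPnn]
        _ ≤ ‖T ylp‖ := lp.norm_apply_le_norm (by norm_num) (T ylp) 0
        _ ≤ ‖T‖ * ‖ylp‖ := T.le_opNorm ylp
    have hynorm : ‖ylp‖^(2:ℕ) = P := by
      have hcoe : ∀ j : ℕ, (ylp : ∀ _ : ℕ, ℂ) j = y j := fun j => rfl
      have hoff : ∀ j ∉ F, ‖(ylp : ∀ _ : ℕ, ℂ) j‖^(2:ℕ) = 0 := by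
        intro j hj
        rw [hcoe, hy]
        simp [hj]
      rw [lp2_norm_sq, tsum_eq_sum (s := F) hoff, hP]
      apply Finset.sum_congr rfl
      intro j hj
      rw [hcoe, hy]
      simp only [if_pos hj]
      rw [RCLike.norm_conj]
    have hsqrt : ‖ylp‖ = Real.sqrt P := by
      rw [← hynorm, Real.sqrt_sq (norm_nonneg _)]
    rw [hsqrt] at hstep1
    nlinarith [Real.sq_sqrt hPnn, Real.sqrt_nonneg P, norm_nonneg T,
      sq_nonneg (‖T‖ - Real.sqrt P)]
  · -- upper bound
    have hzre : (riemannZeta ((1 + σ : ℝ) : ℂ)).re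
        = ∑' n : ℕ, ((n:ℝ)+1) ^ (-(1+σ)) := zeta_re_eq (by linarith)
    rw [show ((1 + ‖c₂‖ : ℝ) : ℂ) = ((1 + σ : ℝ) : ℂ) by rw [hσdef], hzre]
    have hTle : ‖T‖ ≤ Real.sqrt (Zs σ) :=
      LinearMap.mkContinuous_norm_le L (Real.sqrt_nonneg _) hbound
    calc ‖T‖^2 ≤ (Real.sqrt (Zs σ))^2 := pow_le_pow_left₀ (norm_nonneg _) hTle 2
      _ = Zs σ := Real.sq_sqrt hZnn
      _ = ∑' n : ℕ, ((n:ℝ)+1) ^ (-(1+σ)) := rfl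


end CompOpB

/-- Let `φ(s) = c₁ + c₂ 2^{-s}` with `c₂ ≠ 0` and `Re c₁ = 1/2 + |c₂|`.  Then the
matrix of `C_φ` defines a bounded linear map `ℓ²(ℕ) → ℓ²(ℕ₀)` whose operator norm
satisfies `ζ(1 + 2|c₂|) ≤ ‖C_φ‖² ≤ ζ(1 + |c₂|)`. -/
theorem norm_estimate_comp_operator_boundary (c₁ c₂ : ℂ) (hc₂ : c₂ ≠ 0)
    (hre : c₁.re = 1 / 2 + ‖c₂‖) :
    ∃ T : lp (fun _ : ℕ => ℂ) 2 →L[ℂ] lp (fun _ : ℕ => ℂ) 2,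
      (∀ (x : lp (fun _ : ℕ => ℂ) 2) (i : ℕ), T x i = ∑' j : ℕ, compMatrix c₁ c₂ i j * x j) ∧
      (riemannZeta ((1 + 2 * ‖c₂‖ : ℝ) : ℂ)).re ≤ ‖T‖ ^ 2 ∧
      ‖T‖ ^ 2 ≤ (riemannZeta ((1 + ‖c₂‖ : ℝ) : ℂ)).re := by
  exact CompOpB.norm_estimate_comp_operator_boundary' c₁ c₂ hc₂ hre
end

section
/- Let c₁, c₂ ∈ ℂ with c₂ ≠ 0 and 2 Re c₁ − 2|c₂| − 1 > 0. Then for every integer N ≥ 0 there exists a bounded linear map R : ℓ²(ℕ) → ℓ²(ℕ₀) of rank at most N such that ‖A − R‖ ≤ √( (2 Re c₁ − 1)(2 Re c₁) / ((2 Re c₁ − 1)² − (2|c₂|)²) ) · (2|c₂| / (2 Re c₁ − 1))^N. In particular, the (N+1)-st approximation number of A satisfies a_{N+1}(A) ≤ √( (2 Re c₁ − 1)(2 Re c₁) / ((2 Re c₁ − 1)² − (2|c₂|)²) ) · (2|c₂| / (2 Re c₁ − 1))^N. -/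
open Real MeasureTheory Set
open scoped ENNReal Cardinal

noncomputable section

namespace CompOpAux

/-- log gap: `1/(a+1) ≤ log (a+1) - log a` for `a ≥ 1`. -/
lemma log_gap {a : ℝ} (ha : 1 ≤ a) : 1 / (a + 1) ≤ Real.log (a + 1) - Real.log a := by
  have ha0 : 0 < a := by linarith
  have h1 : Real.log (a / (a + 1)) ≤ a / (a + 1) - 1 :=
    Real.log_le_sub_one_of_pos (by positivity)
  have h2 : Real.log (a / (a + 1)) = Real.log a - Real.log (a + 1) :=
    Real.log_div (by positivity) (by positivity)
  have h3 : a / (a + 1) - 1 = -(1 / (a + 1)) := by field_simp; ring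
  linarith [h1, h2.symm.trans_le h1]

/-- `k^k ≤ exp (k - 1) * k!`. -/
lemma pow_self_le (k : ℕ) (hk : 1 ≤ k) :
    (k : ℝ) ^ k ≤ Real.exp ((k : ℝ) - 1) * (Nat.factorial k : ℝ) := by
  induction k with
  | zero => omega
  | succ k ih =>
    rcases Nat.eq_or_lt_of_le hk with h | h
    · simp [← h]
    · have hk1 : 1 ≤ k := by omega
      have ihh := ih hk1
      have hkpos : (0:ℝ) < k := by exact_mod_cast Nat.pos_of_ne_zero (by omega)
      have hstep : ((k:ℝ) + 1) ^ k ≤ Real.exp 1 * (k:ℝ) ^ k := by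
        have h1 : ((k:ℝ) + 1) = (k:ℝ) * (1 + 1 / k) := by field_simp
        have h2 : (1 + 1 / (k:ℝ)) ≤ Real.exp (1 / k) := by
          have := Real.add_one_le_exp (1 / (k:ℝ))
          linarith
        have h3 : (1 + 1 / (k:ℝ)) ^ k ≤ Real.exp (1 / k) ^ k :=
          pow_le_pow_left₀ (by positivity) h2 k
        have h4 : Real.exp (1 / (k:ℝ)) ^ k = Real.exp ((1 / k) * k) := by
          rw [← Real.exp_nat_mul]; ring_nf
        have h5 : (1 / (k:ℝ)) * k = 1 := by field_simp
        calc ((k:ℝ) + 1) ^ k = (k:ℝ) ^ k * (1 + 1 / k) ^ k := by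
              rw [h1, mul_pow]
          _ ≤ (k:ℝ) ^ k * Real.exp 1 := by
              rw [h4, h5] at h3
              exact mul_le_mul_of_nonneg_left h3 (by positivity)
          _ = Real.exp 1 * (k:ℝ) ^ k := by ring
      have : ((k:ℝ) + 1) ^ (k + 1) = ((k:ℝ) + 1) * ((k:ℝ) + 1) ^ k := by ring
      calc ((k + 1 : ℕ) : ℝ) ^ (k + 1) = ((k:ℝ) + 1) * ((k:ℝ) + 1) ^ k := by
            push_cast; ring
        _ ≤ ((k:ℝ) + 1) * (Real.exp 1 * (k:ℝ) ^ k) :=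
            mul_le_mul_of_nonneg_left hstep (by positivity)
        _ ≤ ((k:ℝ) + 1) * (Real.exp 1 * (Real.exp ((k : ℝ) - 1) * (Nat.factorial k : ℝ))) := by
            have := mul_le_mul_of_nonneg_left ihh (Real.exp_pos 1).le
            exact mul_le_mul_of_nonneg_left this (by positivity)
        _ = Real.exp (((k+1 : ℕ) : ℝ) - 1) * (Nat.factorial (k+1) : ℝ) := by
            have he : rexp 1 * rexp ((k:ℝ) - 1) = rexp (((k+1:ℕ):ℝ) - 1) := by
              rw [← Real.exp_add]; norm_num
            push_cast [Nat.factorial_succ] at he ⊢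
            rw [← he]; ring


noncomputable def phi (k : ℕ) (c : ℝ) (u : ℝ) : ℝ := u ^ k * Real.exp (-(c * u))

lemma phi_nonneg {k : ℕ} {c : ℝ} {u : ℝ} (hu : 0 ≤ u) : 0 ≤ phi k c u := by
  unfold phi; positivity

lemma phi_cont (k : ℕ) (c : ℝ) : Continuous (phi k c) := by
  unfold phi; fun_prop

/-- supremum bound: `φ(u) ≤ k^k e^{-k} / c^k` for `u ≥ 0`. -/
lemma phi_sup {k : ℕ} {c : ℝ} (hc : 0 < c) {u : ℝ} (hu : 0 ≤ u) :
    phi k c u ≤ (k : ℝ) ^ k * Real.exp (-(k : ℝ)) / c ^ k := by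
  unfold phi
  rcases Nat.eq_zero_or_pos k with rfl | hk
  · simp only [pow_zero, one_mul, Nat.cast_ofNat, CharP.cast_eq_zero, neg_zero, Real.exp_zero,
      div_one]
    rw [Real.exp_le_one_iff]
    nlinarith [mul_nonneg hc.le hu]
  -- (c*u/k)^k ≤ exp (c*u - k)
  have hkR : (0:ℝ) < k := by exact_mod_cast hk
  have key : (c * u) ^ k ≤ (k:ℝ) ^ k * Real.exp (c * u - k) := by
    have t := Real.add_one_le_exp ((c * u) / k - 1)
    have h1 : (c * u) / k ≤ Real.exp ((c * u) / k - 1) := by linarith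
    have h2 : ((c * u) / k) ^ k ≤ Real.exp ((c * u) / k - 1) ^ k :=
      pow_le_pow_left₀ (by positivity) h1 k
    have h3 : Real.exp ((c * u) / k - 1) ^ k = Real.exp (((c * u) / k - 1) * k) := by
      rw [← Real.exp_nat_mul]; ring_nf
    have h4 : (((c * u) / k - 1) * k) = c * u - k := by field_simp
    have h5 : ((c * u) / k) ^ k = (c * u) ^ k / (k:ℝ) ^ k := div_pow _ _ _
    rw [h5, h3, h4] at h2
    calc (c*u)^k = (k:ℝ)^k * ((c*u)^k / (k:ℝ)^k) := by field_simp
      _ ≤ (k:ℝ)^k * Real.exp (c*u - k) := by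
          exact mul_le_mul_of_nonneg_left h2 (by positivity)
  have hcu : (c*u)^k = c^k * u^k := mul_pow c u k
  have := mul_le_mul_of_nonneg_right key (Real.exp_pos (-(c*u))).le
  rw [hcu] at this
  have h6 : Real.exp (c*u - k) * Real.exp (-(c*u)) = Real.exp (-(k:ℝ)) := by
    rw [← Real.exp_add]; ring_nf
  have h7 : c^k * u^k * Real.exp (-(c*u)) ≤ (k:ℝ)^k * Real.exp (-(k:ℝ)) := by
    calc c^k * u^k * Real.exp (-(c*u)) = c^k * u^k * Real.exp (-(c*u)) := rfl
      _ ≤ (k:ℝ)^k * Real.exp (c*u-k) * Real.exp (-(c*u)) := this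
      _ = (k:ℝ)^k * (Real.exp (c*u-k) * Real.exp (-(c*u))) := by ring
      _ = (k:ℝ)^k * Real.exp (-(k:ℝ)) := by rw [h6]
  rw [le_div_iff₀ (by positivity)]
  calc u^k * Real.exp (-(c*u)) * c^k = c^k * u^k * Real.exp (-(c*u)) := by ring
    _ ≤ (k:ℝ)^k * Real.exp (-(k:ℝ)) := h7

/-- `φ` is monotone on `(0, k/c]`. -/
lemma phi_mono {k : ℕ} {c : ℝ} (hc : 0 < c) {u v : ℝ} (hu : 0 < u) (huv : u ≤ v)
    (hv : v ≤ (k : ℝ) / c) : phi k c u ≤ phi k c v := by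
  have hv0 : 0 < v := lt_of_lt_of_le hu huv
  -- exp (c (v-u)) ≤ (v/u)^k
  have hck : c ≤ (k:ℝ) / v := by
    rw [le_div_iff₀ hv0]
    nlinarith [(le_div_iff₀ hc).mp hv]
  have h1 : Real.log (u / v) ≤ u / v - 1 := Real.log_le_sub_one_of_pos (by positivity)
  have h2 : (v - u) / v ≤ Real.log (v / u) := by
    have : Real.log (v / u) = - Real.log (u / v) := by
      rw [← Real.log_inv]; congr 1; field_simp
    rw [this]
    have h3 : u / v - 1 = -((v - u)/v) := by field_simp; ring
    linarith
  have h4 : c * (v - u) ≤ (k:ℝ) * Real.log (v / u) := by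
    have h5 : c * (v - u) ≤ ((k:ℝ)/v) * (v - u) :=
      mul_le_mul_of_nonneg_right hck (by linarith)
    have h6 : ((k:ℝ)/v) * (v-u) = (k:ℝ) * ((v-u)/v) := by ring
    have h7 : (k:ℝ) * ((v-u)/v) ≤ (k:ℝ) * Real.log (v/u) :=
      mul_le_mul_of_nonneg_left h2 (by positivity)
    linarith
  have h8 : Real.exp (c * (v - u)) ≤ (v / u) ^ k := by
    have := Real.exp_le_exp.mpr h4
    rwa [Real.exp_nat_mul, Real.exp_log (by positivity)] at this
  unfold phi
  have key : u ^ k * Real.exp (c * (v - u)) ≤ v ^ k := by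
    have := mul_le_mul_of_nonneg_left h8 (pow_nonneg hu.le k)
    calc u^k * Real.exp (c*(v-u)) ≤ u^k * (v/u)^k := this
      _ = v^k := by rw [div_pow]; field_simp
  have : u ^ k * Real.exp (-(c*u)) = u^k * Real.exp (c*(v-u)) * Real.exp (-(c*v)) := by
    rw [mul_assoc, ← Real.exp_add]; ring_nf
  rw [this]
  exact mul_le_mul_of_nonneg_right key (Real.exp_pos _).le

/-- `φ` is antitone on `[k/c, ∞)`. -/
lemma phi_anti {k : ℕ} {c : ℝ} (hc : 0 < c) {u v : ℝ} (hu : (k : ℝ) / c ≤ u) (huv : u ≤ v) :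
    phi k c v ≤ phi k c u := by
  rcases Nat.eq_zero_or_pos k with rfl | hk
  · unfold phi
    simp only [pow_zero, one_mul]
    exact Real.exp_le_exp.mpr (by nlinarith)
  have hkR : (0:ℝ) < k := by exact_mod_cast hk
  have hu0 : 0 < u := lt_of_lt_of_le (by positivity) hu
  have hv0 : 0 < v := lt_of_lt_of_le hu0 huv
  -- (v/u)^k ≤ exp(c(v-u))
  have hcu : (k:ℝ) / u ≤ c := by
    rw [div_le_iff₀ hu0]
    rw [div_le_iff₀ hc] at hu
    linarith
  have h1 : v / u ≤ Real.exp ((v - u)/u) := by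
    have := Real.add_one_le_exp ((v - u)/u)
    have h2 : (v-u)/u + 1 = v/u := by field_simp; ring
    linarith
  have h3 : (v/u)^k ≤ Real.exp ((k:ℝ) * ((v-u)/u)) := by
    have := pow_le_pow_left₀ (by positivity) h1 k
    rwa [← Real.exp_nat_mul] at this
  have h4 : (k:ℝ) * ((v-u)/u) ≤ c * (v-u) := by
    have h5 : (k:ℝ) * ((v-u)/u) = ((k:ℝ)/u) * (v-u) := by ring
    rw [h5]
    exact mul_le_mul_of_nonneg_right hcu (by linarith)
  have h6 : (v/u)^k ≤ Real.exp (c * (v-u)) := h3.trans (Real.exp_le_exp.mpr h4)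
  unfold phi
  have key : v ^ k ≤ u ^ k * Real.exp (c * (v-u)) := by
    have := mul_le_mul_of_nonneg_left h6 (pow_nonneg hu0.le k)
    calc v^k = u^k * (v/u)^k := by rw [div_pow]; field_simp
      _ ≤ u^k * Real.exp (c*(v-u)) := this
  calc v^k * Real.exp (-(c*v)) ≤ u^k * Real.exp (c*(v-u)) * Real.exp (-(c*v)) :=
        mul_le_mul_of_nonneg_right key (Real.exp_pos _).le
    _ = u^k * Real.exp (-(c*u)) := by rw [mul_assoc, ← Real.exp_add]; ring_nf


lemma phi_integrableOn (k : ℕ) {c : ℝ} (hc : 0 < c) :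
    IntegrableOn (phi k c) (Ioi 0) := by
  have h := integrableOn_rpow_mul_exp_neg_mul_rpow (p := 1) (s := (k:ℝ)) (b := c)
    (neg_one_lt_zero.trans_le (Nat.cast_nonneg k)) one_pos hc
  have : (fun x : ℝ => x ^ (k:ℝ) * Real.exp (-c * x ^ (1:ℝ))) = phi k c := by
    funext x
    rw [Real.rpow_one, Real.rpow_natCast]
    unfold phi
    ring_nf
  rwa [this] at h

lemma phi_integral (k : ℕ) {c : ℝ} (hc : 0 < c) :
    ∫ u in Ioi (0:ℝ), phi k c u = (Nat.factorial k : ℝ) / c ^ (k + 1) := by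
  have h := Real.integral_rpow_mul_exp_neg_mul_Ioi (a := (k:ℝ) + 1) (r := c)
    (by positivity) hc
  have heq : ∀ u ∈ Ioi (0:ℝ), u ^ ((k:ℝ) + 1 - 1) * Real.exp (-(c * u)) = phi k c u := by
    intro u _
    rw [show (k:ℝ) + 1 - 1 = (k:ℝ) by ring, Real.rpow_natCast]
    rfl
  rw [setIntegral_congr_fun measurableSet_Ioi heq] at h
  rw [h, Real.Gamma_nat_eq_factorial,
    show ((k:ℝ)+1) = ((k+1:ℕ):ℝ) by push_cast; ring, Real.rpow_natCast]
  rw [one_div, inv_pow]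
  field_simp


lemma integral_ge_const (k : ℕ) (c : ℝ) {a b C : ℝ} (hab : a ≤ b)
    (hC : ∀ x ∈ Icc a b, C ≤ phi k c x) :
    (b - a) * C ≤ ∫ u in a..b, phi k c u := by
  have h := intervalIntegral.integral_mono_on (μ := volume) (f := fun _ => C)
    (g := phi k c) hab intervalIntegrable_const
    ((phi_cont k c).intervalIntegrable a b) hC
  simpa [intervalIntegral.integral_const, smul_eq_mul] using h

/-- value of `g` at `m ≥ 2` equals `phi (log m) / m`. -/
lemma g_eq {k : ℕ} {s : ℝ} (hs : 1 < s) {m : ℝ} (hm : 1 ≤ m) :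
    (Real.log m) ^ k * m ^ (-s) = phi k (s - 1) (Real.log m) / m := by
  have hm0 : 0 < m := by linarith
  have h1 : m ^ (-s) = m ^ (-(s-1)) * m ^ (-(1:ℝ)) := by
    rw [← Real.rpow_add hm0]; ring_nf
  have h2 : m ^ (-(s-1)) = Real.exp (-((s-1) * Real.log m)) := by
    rw [Real.rpow_def_of_pos hm0]; ring_nf
  rw [h1, h2, Real.rpow_neg_one]
  unfold phi
  field_simp

/-- tail step : for `2 ≤ m` with `k/c ≤ log (m-1)`,
`phi (log m) / m ≤ ∫_{log (m-1)}^{log m} phi`. -/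
lemma tail_step {k : ℕ} {c : ℝ} (hc : 0 < c) {m : ℝ} (hm : 2 ≤ m)
    (hK : (k : ℝ) / c ≤ Real.log (m - 1)) :
    phi k c (Real.log m) / m ≤ ∫ u in (Real.log (m-1))..(Real.log m), phi k c u := by
  have hm1 : 1 ≤ m - 1 := by linarith
  have hgap : 1 / m ≤ Real.log m - Real.log (m - 1) := by
    have := log_gap hm1
    have h : m - 1 + 1 = m := by ring
    rwa [h] at this
  have hle : Real.log (m - 1) ≤ Real.log m :=
    Real.log_le_log (by linarith) (by linarith)
  have hmin : ∀ x ∈ Icc (Real.log (m-1)) (Real.log m), phi k c (Real.log m) ≤ phi k c x := by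
    intro x hx
    exact phi_anti hc (hK.trans hx.1) hx.2
  have h1 := integral_ge_const k c hle hmin
  have hphin : 0 ≤ phi k c (Real.log m) :=
    phi_nonneg (Real.log_nonneg (by linarith))
  have h2 : phi k c (Real.log m) / m ≤ (Real.log m - Real.log (m-1)) * phi k c (Real.log m) := by
    rw [div_eq_mul_one_div]
    calc phi k c (Real.log m) * (1/m) = (1/m) * phi k c (Real.log m) := by ring
      _ ≤ (Real.log m - Real.log (m-1)) * phi k c (Real.log m) :=
        mul_le_mul_of_nonneg_right hgap hphin
  exact h2.trans h1

/-- head step : for `2 ≤ m` with `log (m+1) ≤ k/c`,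
`phi (log m) / m ≤ ∫_{log m}^{log (m+1)} phi + Msup/(m(m+1))`. -/
lemma head_step {k : ℕ} {c : ℝ} (hc : 0 < c) {m : ℝ} (hm : 2 ≤ m)
    (hK : Real.log (m + 1) ≤ (k : ℝ) / c) :
    phi k c (Real.log m) / m ≤ (∫ u in (Real.log m)..(Real.log (m+1)), phi k c u)
      + ((k : ℝ) ^ k * Real.exp (-(k : ℝ)) / c ^ k) / (m * (m + 1)) := by
  have hgap : 1 / (m+1) ≤ Real.log (m+1) - Real.log m := log_gap (by linarith)
  have hle : Real.log m ≤ Real.log (m+1) := Real.log_le_log (by linarith) (by linarith)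
  have hlm : 0 < Real.log m := Real.log_pos (by linarith)
  have hmin : ∀ x ∈ Icc (Real.log m) (Real.log (m+1)), phi k c (Real.log m) ≤ phi k c x := by
    intro x hx
    rcases eq_or_lt_of_le hx.1 with h | h
    · rw [← h]
    · exact phi_mono hc hlm hx.1 (hx.2.trans hK)
  have h1 := integral_ge_const k c hle hmin
  have hphin : 0 ≤ phi k c (Real.log m) := phi_nonneg hlm.le
  have hsup := phi_sup hc hlm.le (k := k)
  have h2 : (1/(m+1)) * phi k c (Real.log m)
      ≤ (Real.log (m+1) - Real.log m) * phi k c (Real.log m) :=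
    mul_le_mul_of_nonneg_right hgap hphin
  have h3 : phi k c (Real.log m) / m
      = (1/(m+1)) * phi k c (Real.log m) + phi k c (Real.log m) / (m * (m+1)) := by
    field_simp
  have h4 : phi k c (Real.log m) / (m * (m+1))
      ≤ ((k : ℝ) ^ k * Real.exp (-(k : ℝ)) / c ^ k) / (m * (m+1)) := by
    apply div_le_div_of_nonneg_right hsup  -- probably wrong name/arg order
    nlinarith
  rw [h3]
  have := add_le_add (h2.trans h1) h4
  linarith [this]


/-- The tail sum bound. -/
lemma tail_sum {k : ℕ} {c : ℝ} (hc : 0 < c) {K0 : ℝ} (hK0 : 0 ≤ K0) (n₀ M : ℕ)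
    (hK : (k : ℝ) / c ≤ Real.log ((n₀ : ℝ) + 1)) (hK0' : K0 ≤ Real.log ((n₀ : ℝ) + 1)) :
    ∑ n ∈ Finset.Ico n₀ M, phi k c (Real.log ((n:ℝ)+2)) / ((n:ℝ)+2)
      ≤ ∫ u in Ioi K0, phi k c u := by
  rcases le_or_gt M n₀ with h | h
  · rw [Finset.Ico_eq_empty (by omega)]
    simp only [Finset.sum_empty]
    apply setIntegral_nonneg measurableSet_Ioi
    intro x hx
    exact phi_nonneg (hK0.trans (le_of_lt hx))
  set a : ℕ → ℝ := fun i => Real.log ((n₀ : ℝ) + i + 1) with ha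
  have amono : Monotone a := by
    intro i j hij
    apply Real.log_le_log (by positivity)
    have : (i:ℝ) ≤ j := by exact_mod_cast hij
    linarith
  have ha0 : 0 ≤ a 0 := by
    apply Real.log_nonneg; push_cast; linarith
  have step : ∀ i : ℕ, phi k c (Real.log ((n₀:ℝ) + i + 2)) / ((n₀:ℝ) + i + 2)
      ≤ ∫ u in (a i)..(a (i+1)), phi k c u := by
    intro i
    have h2 : (2:ℝ) ≤ (n₀:ℝ) + i + 2 := by
      have := Nat.cast_nonneg (α:=ℝ) n₀; have := Nat.cast_nonneg (α:=ℝ) i; linarith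
    have hKi : (k : ℝ) / c ≤ Real.log ((n₀:ℝ) + i + 2 - 1) := by
      apply hK.trans
      apply Real.log_le_log (by positivity)
      push_cast; linarith
    have := tail_step hc h2 hKi
    have e1 : (n₀:ℝ) + i + 2 - 1 = (n₀ : ℝ) + i + 1 := by ring
    rw [e1] at this
    have e2 : a (i+1) = Real.log ((n₀:ℝ) + i + 2) := by
      rw [ha]; push_cast; ring_nf
    rw [e2]
    exact this
  have hsum : ∑ n ∈ Finset.Ico n₀ M, phi k c (Real.log ((n:ℝ)+2)) / ((n:ℝ)+2)
      = ∑ i ∈ Finset.range (M - n₀), phi k c (Real.log ((n₀:ℝ) + i + 2)) / ((n₀:ℝ) + i + 2) := by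
    rw [Finset.sum_Ico_eq_sum_range]
    apply Finset.sum_congr rfl
    intro i _
    push_cast
    ring_nf
  rw [hsum]
  have hint : ∀ i : ℕ, IntervalIntegrable (phi k c) volume (a i) (a (i+1)) :=
    fun i => (phi_cont k c).intervalIntegrable _ _
  calc ∑ i ∈ Finset.range (M - n₀), phi k c (Real.log ((n₀:ℝ) + i + 2)) / ((n₀:ℝ) + i + 2)
      ≤ ∑ i ∈ Finset.range (M - n₀), ∫ u in (a i)..(a (i+1)), phi k c u :=
        Finset.sum_le_sum (fun i _ => step i)
    _ = ∫ u in (a 0)..(a (M - n₀)), phi k c u :=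
        intervalIntegral.sum_integral_adjacent_intervals (fun i _ => hint i)
    _ = ∫ u in Ioc (a 0) (a (M - n₀)), phi k c u :=
        intervalIntegral.integral_of_le (amono (Nat.zero_le _))
    _ ≤ ∫ u in Ioi K0, phi k c u := by
        apply setIntegral_mono_set
        · exact (phi_integrableOn k hc).mono_set (fun x hx => lt_of_le_of_lt hK0 hx)
        · filter_upwards [self_mem_ae_restrict measurableSet_Ioi] with x hx
          exact phi_nonneg (hK0.trans hx.le)
        · apply HasSubset.Subset.eventuallyLE
          intro x hx
          have : K0 ≤ a 0 := by
            rw [ha]; simpa using hK0'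
          exact lt_of_le_of_lt this hx.1

/-- The head sum bound. -/
lemma head_sum {k : ℕ} {c : ℝ} (hc : 0 < c) (h : ℕ)
    (hK : Real.log ((h : ℝ) + 2) ≤ (k:ℝ) / c) :
    ∑ n ∈ Finset.range h, phi k c (Real.log ((n:ℝ)+2)) / ((n:ℝ)+2)
      ≤ (∫ u in Ioc 0 ((k:ℝ)/c), phi k c u)
        + ((k : ℝ) ^ k * Real.exp (-(k : ℝ)) / c ^ k) / 2 := by
  set Ms : ℝ := (k : ℝ) ^ k * Real.exp (-(k : ℝ)) / c ^ k with hMs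
  have hMs0 : 0 ≤ Ms := by positivity
  set a : ℕ → ℝ := fun i => Real.log ((i:ℝ) + 2) with ha
  have amono : Monotone a := by
    intro i j hij
    apply Real.log_le_log (by positivity)
    have : (i:ℝ) ≤ j := by exact_mod_cast hij
    linarith
  have step : ∀ i : ℕ, i < h → phi k c (Real.log ((i:ℝ) + 2)) / ((i:ℝ) + 2)
      ≤ (∫ u in (a i)..(a (i+1)), phi k c u) + Ms / (((i:ℝ)+2) * ((i:ℝ)+3)) := by
    intro i hi
    have h2 : (2:ℝ) ≤ (i:ℝ) + 2 := by
      have := Nat.cast_nonneg (α:=ℝ) i; linarith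
    have hKi : Real.log ((i:ℝ) + 2 + 1) ≤ (k:ℝ) / c := by
      refine le_trans ?_ hK
      apply Real.log_le_log (by positivity)
      have : (i:ℝ) + 1 ≤ h := by exact_mod_cast hi
      linarith
    have := head_step hc h2 hKi
    have e2 : a (i+1) = Real.log ((i:ℝ) + 2 + 1) := by
      rw [ha]; push_cast; ring_nf
    rw [e2]
    have e3 : ((i:ℝ)+2) * ((i:ℝ)+2+1) = ((i:ℝ)+2) * ((i:ℝ)+3) := by ring
    rw [e3] at this
    exact this
  have hint : ∀ i : ℕ, IntervalIntegrable (phi k c) volume (a i) (a (i+1)) :=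
    fun i => (phi_cont k c).intervalIntegrable _ _
  have htel : ∑ i ∈ Finset.range h, Ms / (((i:ℝ)+2) * ((i:ℝ)+3)) ≤ Ms / 2 := by
    have e : ∀ i : ℕ, Ms / (((i:ℝ)+2) * ((i:ℝ)+3)) = Ms / ((i:ℝ)+2) - Ms / ((i:ℝ)+3) := by
      intro i
      field_simp
      ring
    calc ∑ i ∈ Finset.range h, Ms / (((i:ℝ)+2) * ((i:ℝ)+3))
        = ∑ i ∈ Finset.range h, (Ms / ((i:ℝ)+2) - Ms / (((i+1:ℕ):ℝ)+2)) := by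
          apply Finset.sum_congr rfl
          intro i _
          rw [e i]
          push_cast
          ring_nf
      _ = Ms / (((0:ℕ):ℝ)+2) - Ms / (((h:ℕ):ℝ)+2) :=
          Finset.sum_range_sub' (fun i => Ms / ((i:ℝ)+2)) h
      _ ≤ Ms / 2 := by
          push_cast
          have : 0 ≤ Ms / ((h:ℝ)+2) := by positivity
          norm_num
          linarith
  calc ∑ n ∈ Finset.range h, phi k c (Real.log ((n:ℝ)+2)) / ((n:ℝ)+2)
      ≤ ∑ i ∈ Finset.range h, ((∫ u in (a i)..(a (i+1)), phi k c u)
          + Ms / (((i:ℝ)+2) * ((i:ℝ)+3))) :=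
        Finset.sum_le_sum (fun i hi => step i (Finset.mem_range.mp hi))
    _ = (∑ i ∈ Finset.range h, ∫ u in (a i)..(a (i+1)), phi k c u)
          + ∑ i ∈ Finset.range h, Ms / (((i:ℝ)+2) * ((i:ℝ)+3)) := Finset.sum_add_distrib
    _ ≤ (∫ u in (a 0)..(a h), phi k c u) + Ms / 2 := by
        rw [intervalIntegral.sum_integral_adjacent_intervals (fun i _ => hint i)]
        exact add_le_add_right htel _
    _ ≤ (∫ u in Ioc 0 ((k:ℝ)/c), phi k c u) + Ms / 2 := by
        apply add_le_add_left
        rw [intervalIntegral.integral_of_le (amono (Nat.zero_le _))]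
        apply setIntegral_mono_set
        · exact (phi_integrableOn k hc).mono_set Ioc_subset_Ioi_self
        · filter_upwards [self_mem_ae_restrict measurableSet_Ioc] with x hx
          exact phi_nonneg hx.1.le
        · apply HasSubset.Subset.eventuallyLE
          intro x hx
          refine ⟨lt_of_le_of_lt ?_ hx.1, hx.2.trans ?_⟩
          · rw [ha]; apply Real.log_nonneg; norm_num
          · rw [ha]
            exact hK
  

/-- zero case: `∑_{n<M} (n+2)^{-s} ≤ 1/(s-1)`. -/
lemma zero_sum {s : ℝ} (hs : 1 < s) (M : ℕ) :
    ∑ n ∈ Finset.range M, ((n:ℝ)+2) ^ (-s) ≤ 1 / (s-1) := by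
  have hc : 0 < s - 1 := by linarith
  have he : ∀ n : ℕ, ((n:ℝ)+2) ^ (-s) = phi 0 (s-1) (Real.log ((n:ℝ)+2)) / ((n:ℝ)+2) := by
    intro n
    have := g_eq (k := 0) hs (m := (n:ℝ)+2) (by have := Nat.cast_nonneg (α:=ℝ) n; linarith)
    simpa using this
  calc ∑ n ∈ Finset.range M, ((n:ℝ)+2) ^ (-s)
      = ∑ n ∈ Finset.Ico 0 M, phi 0 (s-1) (Real.log ((n:ℝ)+2)) / ((n:ℝ)+2) := by
        rw [Finset.range_eq_Ico]
        exact Finset.sum_congr rfl (fun n _ => he n)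
    _ ≤ ∫ u in Ioi (0:ℝ), phi 0 (s-1) u := by
        apply tail_sum hc le_rfl 0 M <;> simp
    _ = 1 / (s-1) := by rw [phi_integral 0 hc]; norm_num

/-- main case `k ≥ 1`: `∑_{n<M} (log (n+2))^k (n+2)^{-s} ≤ k! * s / (s-1)^{k+1}`. -/
lemma main_sum {k : ℕ} (hk : 1 ≤ k) {s : ℝ} (hs : 1 < s) (M : ℕ) :
    ∑ n ∈ Finset.range M, (Real.log ((n:ℝ)+2)) ^ k * ((n:ℝ)+2) ^ (-s)
      ≤ (Nat.factorial k : ℝ) * s / (s-1) ^ (k+1) := by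
  have hc : 0 < s - 1 := by linarith
  set c := s - 1 with hcdef
  set K : ℝ := (k:ℝ) / c with hK
  have hK0 : 0 ≤ K := by positivity
  set Ms : ℝ := (k : ℝ) ^ k * Real.exp (-(k : ℝ)) / c ^ k with hMs
  have hMs0 : 0 ≤ Ms := by positivity
  set P : ℕ := Nat.floor (Real.exp K) with hP
  have hP1 : 1 ≤ P := by
    rw [hP]
    exact (Nat.le_floor_iff (Real.exp_pos K).le).mpr
      (by exact_mod_cast Real.one_le_exp hK0)
  set h : ℕ := P - 2 with hh
  set t : ℕ := h + 2 with ht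
  set M' : ℕ := max M t with hM'
  set g : ℕ → ℝ := fun n => phi k c (Real.log ((n:ℝ)+2)) / ((n:ℝ)+2) with hg
  have hgnn : ∀ n, 0 ≤ g n := by
    intro n
    have h2 : (0:ℝ) < (n:ℝ)+2 := by positivity
    apply div_nonneg _ h2.le
    apply phi_nonneg
    apply Real.log_nonneg
    linarith
  have he : ∀ n : ℕ, (Real.log ((n:ℝ)+2)) ^ k * ((n:ℝ)+2) ^ (-s) = g n := by
    intro n
    exact g_eq hs (by have := Nat.cast_nonneg (α:=ℝ) n; linarith)
  rw [Finset.sum_congr rfl (fun n _ => he n)]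
  have hsub : ∑ n ∈ Finset.range M, g n ≤ ∑ n ∈ Finset.range M', g n := by
    apply Finset.sum_le_sum_of_subset_of_nonneg
    · exact Finset.range_subset_range.mpr (le_max_left _ _)
    · exact fun i _ _ => hgnn i
  refine hsub.trans ?_
  -- split range M' into [0,h) ∪ [h,t) ∪ [t,M')
  have hht : h ≤ t := by omega
  have htM : t ≤ M' := le_max_right _ _
  have hsplit : ∑ n ∈ Finset.range M', g n
      = (∑ n ∈ Finset.range h, g n) + (∑ n ∈ Finset.Ico h t, g n)
        + (∑ n ∈ Finset.Ico t M', g n) := by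
    rw [Finset.range_eq_Ico, ← Finset.sum_Ico_consecutive g (Nat.zero_le h) (hht.trans htM),
      ← Finset.sum_Ico_consecutive g hht htM]
    rw [Finset.range_eq_Ico]
    ring
  rw [hsplit]
  -- head bound
  have hhead : ∑ n ∈ Finset.range h, g n ≤ (∫ u in Ioc 0 K, phi k c u) + Ms / 2 := by
    rcases Nat.eq_zero_or_pos h with h0 | hpos
    · rw [h0]
      simp only [Finset.range_zero, Finset.sum_empty]
      have : 0 ≤ ∫ u in Ioc 0 K, phi k c u := by
        apply setIntegral_nonneg measurableSet_Ioc
        intro x hx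
        exact phi_nonneg hx.1.le
      linarith
    · apply head_sum hc
      have hP3 : 3 ≤ P := by omega
      have : (h:ℝ) + 2 = (P:ℝ) := by
        have : h + 2 = P := by omega
        exact_mod_cast congrArg (Nat.cast : ℕ → ℝ) this
      rw [this]
      have hPpos : (0:ℝ) < (P:ℝ) := by exact_mod_cast hP1
      rw [Real.log_le_iff_le_exp hPpos]
      exact Nat.floor_le (Real.exp_pos K).le
  -- bad bound
  have hbad : ∑ n ∈ Finset.Ico h t, g n ≤ Ms := by
    have hcard : (Finset.Ico h t).card = 2 := by
      rw [Nat.card_Ico]; omega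
    have hb : ∀ n ∈ Finset.Ico h t, g n ≤ Ms / 2 := by
      intro n _
      have h2 : (2:ℝ) ≤ (n:ℝ) + 2 := by have := Nat.cast_nonneg (α:=ℝ) n; linarith
      have hlog : 0 ≤ Real.log ((n:ℝ)+2) := Real.log_nonneg (by linarith)
      calc g n ≤ Ms / ((n:ℝ)+2) := by
            apply div_le_div_of_nonneg_right (phi_sup hc hlog)
            linarith
        _ ≤ Ms / 2 := by
            apply div_le_div_of_nonneg_left hMs0 (by linarith) h2
    calc ∑ n ∈ Finset.Ico h t, g n ≤ ∑ _n ∈ Finset.Ico h t, Ms / 2 :=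
          Finset.sum_le_sum hb
      _ = 2 * (Ms / 2) := by rw [Finset.sum_const, hcard]; push_cast; ring
      _ = Ms := by ring
  -- tail bound
  have htail : ∑ n ∈ Finset.Ico t M', g n ≤ ∫ u in Ioi K, phi k c u := by
    apply tail_sum hc hK0 t M'
    · rw [Real.le_log_iff_exp_le (by positivity)]
      have h1 : Real.exp K < (P:ℝ) + 1 := Nat.lt_floor_add_one _
      have h2 : (P:ℝ) + 1 ≤ (t:ℝ) + 1 := by
        have : P ≤ t := by omega
        have := (Nat.cast_le (α := ℝ)).mpr this
        linarith
      linarith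
    · rw [Real.le_log_iff_exp_le (by positivity)]
      have h1 : Real.exp K < (P:ℝ) + 1 := Nat.lt_floor_add_one _
      have h2 : (P:ℝ) + 1 ≤ (t:ℝ) + 1 := by
        have : P ≤ t := by omega
        have := (Nat.cast_le (α := ℝ)).mpr this
        linarith
      linarith
  -- combine
  have hcomb : (∫ u in Ioc 0 K, phi k c u) + (∫ u in Ioi K, phi k c u)
      = (Nat.factorial k : ℝ) / c ^ (k+1) := by
    rw [← phi_integral k hc]
    rw [← setIntegral_union (Set.Ioc_disjoint_Ioi le_rfl) measurableSet_Ioi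
      ((phi_integrableOn k hc).mono_set Ioc_subset_Ioi_self)
      ((phi_integrableOn k hc).mono_set (fun x hx => lt_of_le_of_lt hK0 hx))]
    rw [Set.Ioc_union_Ioi_eq_Ioi hK0]
  -- numeric: (3/2) Ms ≤ k!/c^k
  have hnum : Ms * (3/2) ≤ (Nat.factorial k : ℝ) / c ^ k := by
    have h1 := pow_self_le k hk
    have e1 : Real.exp ((k:ℝ)-1) * Real.exp (-(k:ℝ)) * Real.exp 1 = 1 := by
      rw [← Real.exp_add, ← Real.exp_add]
      norm_num [show (k:ℝ) - 1 + -(k:ℝ) + 1 = 0 by ring]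
    have h2 : (k:ℝ)^k * Real.exp (-(k:ℝ)) * Real.exp 1 ≤ (Nat.factorial k : ℝ) := by
      calc (k:ℝ)^k * Real.exp (-(k:ℝ)) * Real.exp 1
          ≤ (Real.exp ((k:ℝ)-1) * (Nat.factorial k : ℝ)) * Real.exp (-(k:ℝ)) * Real.exp 1 := by
            apply mul_le_mul_of_nonneg_right
              (mul_le_mul_of_nonneg_right h1 (Real.exp_pos _).le) (Real.exp_pos _).le
        _ = (Real.exp ((k:ℝ)-1) * Real.exp (-(k:ℝ)) * Real.exp 1) * (Nat.factorial k : ℝ) := by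
            ring
        _ = (Nat.factorial k : ℝ) := by rw [e1]; ring
    have hexp2 : (3/2 : ℝ) ≤ Real.exp 1 := by
      have := Real.add_one_le_exp (1:ℝ); linarith
    have h5 : (k:ℝ)^k * Real.exp (-(k:ℝ)) * (3/2) ≤ (Nat.factorial k : ℝ) := by
      have hx : (0:ℝ) ≤ (k:ℝ)^k * Real.exp (-(k:ℝ)) := by positivity
      nlinarith [h2]
    rw [hMs, div_mul_eq_mul_div]
    apply div_le_div_of_nonneg_right h5
    positivity
  have hfin : (Nat.factorial k : ℝ) * s / (s-1) ^ (k+1)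
      = (Nat.factorial k : ℝ)/c^(k+1) + (Nat.factorial k : ℝ)/c^k := by
    have hs2 : s = c + 1 := by rw [hcdef]; ring
    rw [hs2]
    have hc0 : c ≠ 0 := ne_of_gt hc
    field_simp
    ring
  calc (∑ n ∈ Finset.range h, g n) + (∑ n ∈ Finset.Ico h t, g n)
        + (∑ n ∈ Finset.Ico t M', g n)
      ≤ ((∫ u in Ioc 0 K, phi k c u) + Ms / 2) + Ms + (∫ u in Ioi K, phi k c u) :=
        add_le_add (add_le_add hhead hbad) htail
    _ = ((∫ u in Ioc 0 K, phi k c u) + (∫ u in Ioi K, phi k c u)) + Ms * (3/2) := by ring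
    _ ≤ (Nat.factorial k : ℝ)/c^(k+1) + (Nat.factorial k : ℝ)/c^k := by
        rw [hcomb]
        exact add_le_add_right hnum _
    _ = (Nat.factorial k : ℝ) * s / (s-1) ^ (k+1) := hfin.symm


local notation "Hsp" => lp (fun _ : ℕ => ℂ) 2

lemma two_toReal : ((2 : ℝ≥0∞)).toReal = (2:ℝ) := by norm_num

lemma rpow_two_eq (x : ℝ) : x ^ ((2 : ℝ≥0∞)).toReal = x ^ (2:ℕ) := by
  rw [two_toReal, ← Real.rpow_natCast x 2]
  norm_num

/-- Build the bounded operator from a matrix with ℓ²-bounded rows. -/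
lemma exists_op (a : ℕ → ℕ → ℂ) (C : ℕ → ℝ) (hC0 : ∀ i, 0 ≤ C i)
    (hC : ∀ i (F : Finset ℕ), ∑ j ∈ F, ‖a i j‖ ^ (2:ℕ) ≤ C i)
    (hCsum : Summable C) :
    ∃ T : Hsp →L[ℂ] Hsp, (∀ x : Hsp, ∀ i : ℕ, T x i = ∑' j : ℕ, a i j * x j)
      ∧ ‖T‖ ≤ Real.sqrt (∑' i, C i) := by
  have hCt0 : 0 ≤ ∑' i, C i := tsum_nonneg hC0
  -- rows
  have hrowmem : ∀ i, Memℓp (fun j => (starRingEnd ℂ) (a i j)) 2 := by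
    intro i
    apply memℓp_gen' (C := C i)
    intro F
    calc ∑ j ∈ F, ‖(starRingEnd ℂ) (a i j)‖ ^ (2:ℝ≥0∞).toReal
        = ∑ j ∈ F, ‖a i j‖ ^ (2:ℕ) := by
          apply Finset.sum_congr rfl
          intro j _
          rw [rpow_two_eq, RCLike.norm_conj]
      _ ≤ C i := hC i F
  set row : ℕ → Hsp := fun i => ⟨fun j => (starRingEnd ℂ) (a i j), hrowmem i⟩ with hrow
  have hrow_sq : ∀ i, ‖row i‖ ^ (2:ℕ) ≤ C i := by
    intro i
    have h := lp.norm_rpow_eq_tsum (p := 2) (by norm_num) (row i)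
    have h2 : ‖row i‖ ^ (2:ℕ) = ∑' j, ‖a i j‖ ^ (2:ℕ) := by
      rw [← rpow_two_eq, h]
      congr 1
      funext j
      rw [rpow_two_eq]
      show ‖(starRingEnd ℂ) (a i j)‖ ^ (2:ℕ) = _
      rw [RCLike.norm_conj]
    rw [h2]
    apply tsum_le_of_sum_range_le (fun n => by positivity)
    intro n
    exact hC i _
  have hrownn : ∀ i, (0:ℝ) ≤ ‖row i‖ := fun i => norm_nonneg _
  -- membership of the image
  have hmem : ∀ x : Hsp, Memℓp (fun i => (inner ℂ (row i) x : ℂ)) 2 := by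
    intro x
    apply memℓp_gen' (C := (∑' i, C i) * ‖x‖ ^ (2:ℕ))
    intro F
    calc ∑ i ∈ F, ‖(inner ℂ (row i) x : ℂ)‖ ^ (2:ℝ≥0∞).toReal
        = ∑ i ∈ F, ‖(inner ℂ (row i) x : ℂ)‖ ^ (2:ℕ) := by
          exact Finset.sum_congr rfl (fun i _ => rpow_two_eq _)
      _ ≤ ∑ i ∈ F, C i * ‖x‖ ^ (2:ℕ) := by
          apply Finset.sum_le_sum
          intro i _
          have h1 : ‖(inner ℂ (row i) x : ℂ)‖ ≤ ‖row i‖ * ‖x‖ := norm_inner_le_norm _ _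
          have h2 : ‖(inner ℂ (row i) x : ℂ)‖ ^ (2:ℕ) ≤ (‖row i‖ * ‖x‖) ^ (2:ℕ) :=
            pow_le_pow_left₀ (norm_nonneg _) h1 2
          have h3 : (‖row i‖ * ‖x‖) ^ (2:ℕ) = ‖row i‖ ^ (2:ℕ) * ‖x‖ ^ (2:ℕ) := mul_pow _ _ _
          have h4 := mul_le_mul_of_nonneg_right (hrow_sq i) (by positivity : (0:ℝ) ≤ ‖x‖ ^ (2:ℕ))
          calc ‖(inner ℂ (row i) x : ℂ)‖ ^ (2:ℕ) ≤ ‖row i‖ ^ (2:ℕ) * ‖x‖ ^ (2:ℕ) := by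
                rw [← h3]; exact h2
            _ ≤ C i * ‖x‖ ^ (2:ℕ) := h4
      _ = (∑ i ∈ F, C i) * ‖x‖ ^ (2:ℕ) := by rw [Finset.sum_mul]
      _ ≤ (∑' i, C i) * ‖x‖ ^ (2:ℕ) := by
          apply mul_le_mul_of_nonneg_right _ (by positivity)
          exact Summable.sum_le_tsum F (fun i _ => hC0 i) hCsum
  -- the linear map
  set L : Hsp →ₗ[ℂ] Hsp :=
    { toFun := fun x => ⟨fun i => (inner ℂ (row i) x : ℂ), hmem x⟩
      map_add' := by
        intro x y
        apply lp.ext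
        funext i
        show (inner ℂ (row i) (x + y) : ℂ) = _
        rw [inner_add_right]
        rfl
      map_smul' := by
        intro c x
        apply lp.ext
        funext i
        show (inner ℂ (row i) (c • x) : ℂ) = _
        rw [inner_smul_right]
        rfl } with hL
  have hLval : ∀ x : Hsp, ∀ i : ℕ, L x i = (inner ℂ (row i) x : ℂ) := fun x i => rfl
  have hbound : ∀ x : Hsp, ‖L x‖ ≤ Real.sqrt (∑' i, C i) * ‖x‖ := by
    intro x
    have hsq : ‖L x‖ ^ (2:ℕ) ≤ (∑' i, C i) * ‖x‖ ^ (2:ℕ) := by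
      have h := lp.norm_rpow_eq_tsum (p := 2) (by norm_num) (L x)
      have h2 : ‖L x‖ ^ (2:ℕ) = ∑' i, ‖(inner ℂ (row i) x : ℂ)‖ ^ (2:ℕ) := by
        rw [← rpow_two_eq, h]
        congr 1
        funext i
        rw [rpow_two_eq]
        rfl
      rw [h2]
      have hsumm : Summable (fun i => ‖(inner ℂ (row i) x : ℂ)‖ ^ (2:ℕ)) := by
        have := lp.memℓp (L x)
        have h3 := (memℓp_gen_iff (p := 2) (by norm_num)).mp this
        have h4 : (fun i => ‖L x i‖ ^ (2:ℝ≥0∞).toReal)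
            = fun i => ‖(inner ℂ (row i) x : ℂ)‖ ^ (2:ℕ) := by
          funext i
          rw [rpow_two_eq]
          rfl
        rwa [h4] at h3
      calc ∑' i, ‖(inner ℂ (row i) x : ℂ)‖ ^ (2:ℕ)
          ≤ ∑' i, C i * ‖x‖ ^ (2:ℕ) := by
            apply Summable.tsum_le_tsum _ hsumm (hCsum.mul_right _)
            intro i
            have h1 : ‖(inner ℂ (row i) x : ℂ)‖ ≤ ‖row i‖ * ‖x‖ := norm_inner_le_norm _ _
            have h2' : ‖(inner ℂ (row i) x : ℂ)‖ ^ (2:ℕ) ≤ ‖row i‖ ^ (2:ℕ) * ‖x‖ ^ (2:ℕ) := by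
              rw [← mul_pow]
              exact pow_le_pow_left₀ (norm_nonneg _) h1 2
            exact h2'.trans (mul_le_mul_of_nonneg_right (hrow_sq i) (by positivity))
        _ = (∑' i, C i) * ‖x‖ ^ (2:ℕ) := tsum_mul_right
    have := Real.sqrt_le_sqrt hsq
    rwa [Real.sqrt_sq (norm_nonneg _), Real.sqrt_mul hCt0, Real.sqrt_sq (norm_nonneg _)] at this
  refine ⟨L.mkContinuous _ hbound, ?_, ?_⟩
  · intro x i
    show L x i = _
    rw [hLval]
    rw [lp.inner_eq_tsum]
    congr 1
    funext j
    show inner ℂ ((starRingEnd ℂ) (a i j)) (x j) = _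
    rw [RCLike.inner_apply', Complex.conj_conj]
  · exact L.mkContinuous_norm_le (Real.sqrt_nonneg _) hbound

/-- rank of an operator supported on coordinates `< N`. -/
lemma rank_le_of_vanish (R : Hsp →L[ℂ] Hsp) (N : ℕ)
    (hR : ∀ x : Hsp, ∀ i : ℕ, N ≤ i → R x i = 0) :
    LinearMap.rank (R : Hsp →ₗ[ℂ] Hsp) ≤ N := by
  classical
  set v : Fin N → Hsp := fun i => lp.single 2 (i : ℕ) (1 : ℂ) with hv
  have hsub : LinearMap.range (R : Hsp →ₗ[ℂ] Hsp) ≤ Submodule.span ℂ (Set.range v) := by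
    rintro y ⟨x, rfl⟩
    have hy : R x = ∑ i ∈ Finset.range N, (R x i) • lp.single 2 i (1:ℂ) := by
      apply lp.ext
      funext j
      rw [lp.coeFn_sum, Finset.sum_apply]
      simp only [lp.coeFn_smul, Pi.smul_apply, smul_eq_mul]
      rcases lt_or_ge j N with hj | hj
      · rw [Finset.sum_eq_single j]
        · rw [lp.single_apply_self, mul_one]
        · intro i _ hij
          rw [lp.single_apply_ne 2 i _ (Ne.symm hij), mul_zero]
        · intro hj'
          exact absurd (Finset.mem_range.mpr hj) hj'
      · rw [hR x j hj]
        symm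
        apply Finset.sum_eq_zero
        intro i hi
        have hij : j ≠ i := by
          have := Finset.mem_range.mp hi
          omega
        rw [lp.single_apply_ne 2 i _ hij, mul_zero]
    show (R x) ∈ _
    rw [hy]
    apply Submodule.sum_mem
    intro i hi
    apply Submodule.smul_mem
    apply Submodule.subset_span
    exact ⟨⟨i, Finset.mem_range.mp hi⟩, rfl⟩
  calc LinearMap.rank (R : Hsp →ₗ[ℂ] Hsp)
      ≤ Module.rank ℂ (Submodule.span ℂ (Set.range v)) := Submodule.rank_mono hsub
    _ ≤ #(Set.range v) := rank_span_le _
    _ ≤ #(Fin N) := Cardinal.mk_range_le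
    _ = N := Cardinal.mk_fin N



lemma norm_entry (c₁ c₂ : ℂ) (i n : ℕ) :
    ‖compMatrix c₁ c₂ i (n+1)‖
      = ((n:ℝ)+2) ^ (-c₁.re) * (‖c₂‖ * Real.log ((n:ℝ)+2)) ^ i
        / (Nat.factorial i : ℝ) := by
  have hb : (((n+1 : ℕ) : ℂ) + 1) = ((((n:ℝ)+2) : ℝ) : ℂ) := by push_cast; ring
  have hl : ((n+1 : ℕ) : ℝ) + 1 = (n:ℝ)+2 := by push_cast; ring
  have hpos : (0:ℝ) < (n:ℝ)+2 := by positivity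
  rw [compMatrix, if_neg (Nat.succ_ne_zero n), hb, hl]
  rw [norm_div, norm_mul, norm_pow]
  congr 1
  congr 1
  · rw [Complex.norm_cpow_eq_rpow_re_of_pos hpos, Complex.neg_re]
  · congr 1
    rw [norm_mul, norm_neg]
    congr 1
    rw [Complex.norm_real, Real.norm_eq_abs,
      abs_of_nonneg (Real.log_nonneg (by linarith))]
  · rw [Complex.norm_natCast]

lemma norm_sq_entry (c₁ c₂ : ℂ) (i n : ℕ) :
    ‖compMatrix c₁ c₂ i (n+1)‖ ^ (2:ℕ)
      = ((‖c₂‖)^2)^i / ((Nat.factorial i : ℝ))^2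
        * ((Real.log ((n:ℝ)+2)) ^ (2*i) * ((n:ℝ)+2) ^ (-(2*c₁.re))) := by
  have hpos : (0:ℝ) < (n:ℝ)+2 := by positivity
  rw [norm_entry]
  rw [div_pow, mul_pow]
  have h1 : (((n:ℝ)+2) ^ (-c₁.re)) ^ (2:ℕ) = ((n:ℝ)+2) ^ (-(2*c₁.re)) := by
    rw [← Real.rpow_natCast (((n:ℝ)+2) ^ (-c₁.re)) 2, ← Real.rpow_mul hpos.le]
    norm_num
    ring_nf
  have h2 : ((‖c₂‖ * Real.log ((n:ℝ)+2)) ^ i) ^ (2:ℕ)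
      = ((‖c₂‖)^2)^i * (Real.log ((n:ℝ)+2))^(2*i) := by
    rw [← pow_mul, mul_pow]
    ring
  rw [h1, h2]
  ring

variable {c₁ c₂ : ℂ}

/-- row sums bounded. -/
lemma row_summable_and_bound (hc₂ : c₂ ≠ 0)
    (hcompact : 0 < 2 * c₁.re - 2 * ‖c₂‖ - 1) (i : ℕ) :
    Summable (fun j => ‖compMatrix c₁ c₂ i j‖ ^ (2:ℕ)) ∧
    ∑' j, ‖compMatrix c₁ c₂ i j‖ ^ (2:ℕ)
      ≤ (2*c₁.re/(2*c₁.re-1)) * ((2*‖c₂‖/(2*c₁.re-1))^2)^i := by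
  set s : ℝ := 2*c₁.re with hs
  set b : ℝ := ‖c₂‖ with hbb
  have hb0 : 0 < b := by
    rw [hbb]; exact (norm_pos_iff.mpr hc₂)
  have hs1 : 1 < s := by rw [hs]; linarith
  have hsb : 2*b < s - 1 := by rw [hs, hbb]; linarith
  set q : ℝ := 2*b/(s-1) with hq
  -- tail part
  set cst : ℝ := (b^2)^i / ((Nat.factorial i : ℝ))^2 with hcst
  have hcst0 : 0 ≤ cst := by positivity
  set B : ℝ := if i = 0 then 1/(s-1) else (Nat.factorial (2*i) : ℝ) * s / (s-1)^(2*i+1) with hB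
  have htail_bound : ∀ M : ℕ, ∑ n ∈ Finset.range M, ‖compMatrix c₁ c₂ i (n+1)‖ ^ (2:ℕ)
      ≤ cst * B := by
    intro M
    have he : ∀ n : ℕ, ‖compMatrix c₁ c₂ i (n+1)‖ ^ (2:ℕ)
        = cst * ((Real.log ((n:ℝ)+2)) ^ (2*i) * ((n:ℝ)+2) ^ (-s)) := by
      intro n
      rw [norm_sq_entry, hcst, hbb, hs]
    rw [Finset.sum_congr rfl (fun n _ => he n), ← Finset.mul_sum]
    apply mul_le_mul_of_nonneg_left _ hcst0
    rcases Nat.eq_zero_or_pos i with h0 | hpos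
    · rw [hB, if_pos h0, h0]
      have : ∀ n : ℕ, (Real.log ((n:ℝ)+2)) ^ (2*0) * ((n:ℝ)+2) ^ (-s) = ((n:ℝ)+2) ^ (-s) := by
        intro n; norm_num
      rw [Finset.sum_congr rfl (fun n _ => this n)]
      exact zero_sum hs1 M
    · rw [hB, if_neg (by omega)]
      exact main_sum (by omega) hs1 M
  have hterm_nonneg : ∀ n : ℕ, 0 ≤ ‖compMatrix c₁ c₂ i (n+1)‖ ^ (2:ℕ) :=
    fun n => by positivity
  have htail_summable : Summable (fun n => ‖compMatrix c₁ c₂ i (n+1)‖ ^ (2:ℕ)) :=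
    summable_of_sum_range_le hterm_nonneg htail_bound
  have htail_tsum : ∑' n, ‖compMatrix c₁ c₂ i (n+1)‖ ^ (2:ℕ) ≤ cst * B :=
    Real.tsum_le_of_sum_range_le hterm_nonneg htail_bound
  have hsummable : Summable (fun j => ‖compMatrix c₁ c₂ i j‖ ^ (2:ℕ)) :=
    (summable_nat_add_iff 1).mp htail_summable
  refine ⟨hsummable, ?_⟩
  rw [Summable.tsum_eq_zero_add hsummable]
  -- |a i 0|²
  have hzero : ‖compMatrix c₁ c₂ i 0‖ ^ (2:ℕ) = if i = 0 then 1 else 0 := by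
    rw [compMatrix, if_pos rfl]
    rcases Nat.eq_zero_or_pos i with h0 | hpos
    · rw [if_pos h0, if_pos h0]; simp
    · rw [if_neg (by omega), if_neg (by omega)]; simp
  rw [hzero]
  -- numeric endgame
  have hfact : (Nat.factorial (2*i) : ℝ) ≤ 4^i * ((Nat.factorial i : ℝ))^2 := by
    have h1 : (2*i).choose i * Nat.factorial i * Nat.factorial (2*i - i) = Nat.factorial (2*i) :=
      Nat.choose_mul_factorial_mul_factorial (by omega)
    have h2 : 2*i - i = i := by omega
    rw [h2] at h1
    have h3 : (2*i).choose i ≤ 4^i := by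
      calc (2*i).choose i ≤ (2*i+1).choose i := Nat.choose_le_choose i (by omega)
        _ ≤ 4^i := Nat.choose_middle_le_pow i
    have h4 : Nat.factorial (2*i) ≤ 4^i * Nat.factorial i * Nat.factorial i := by
      rw [← h1]
      exact Nat.mul_le_mul_right _ (Nat.mul_le_mul_right _ h3)
    calc (Nat.factorial (2*i) : ℝ) ≤ ((4^i * Nat.factorial i * Nat.factorial i : ℕ) : ℝ) := by
          exact_mod_cast h4
      _ = 4^i * ((Nat.factorial i : ℝ))^2 := by push_cast; ring
  have hs10 : (0:ℝ) < s - 1 := by linarith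
  have hfac0 : (0:ℝ) < (Nat.factorial i : ℝ) := by exact_mod_cast Nat.factorial_pos i
  have hq2 : (q^2)^i = 4^i * (b^2)^i / (s-1)^(2*i) := by
    have e1 : q^2 = 4 * b^2 / (s-1)^2 := by
      rw [hq, div_pow]
      congr 1
      ring
    rw [e1, div_pow, mul_pow]
    congr 1
    rw [← pow_mul]
  rcases Nat.eq_zero_or_pos i with h0 | hpos
  · -- i = 0
    subst h0
    rw [if_pos rfl]
    have hcst1 : cst = 1 := by rw [hcst]; simp [Nat.factorial]
    have hB1 : B = 1/(s-1) := by rw [hB]; simp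
    have hfrac : s/(s-1) = 1 + 1/(s-1) := by field_simp; ring
    have h1 : (1:ℝ) + cst * B ≤ s/(s-1) * ((q^2)^0) := by
      rw [hcst1, hB1, pow_zero, mul_one, hfrac]
      linarith
    calc (1:ℝ) + ∑' n, ‖compMatrix c₁ c₂ 0 (n+1)‖ ^ (2:ℕ)
        ≤ 1 + cst * B := by linarith [htail_tsum]
      _ ≤ s/(s-1) * ((q^2)^0) := h1
  · rw [if_neg (by omega)]
    have key : cst * B ≤ (s/(s-1)) * (q^2)^i := by
      rw [hcst, hB, if_neg (by omega), hq2]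
      have hnn : (0:ℝ) ≤ (b^2)^i * s / (((Nat.factorial i : ℝ))^2 * (s-1)^(2*i+1)) := by
        positivity
      have h := mul_le_mul_of_nonneg_right hfact hnn
      calc (b^2)^i / ((Nat.factorial i : ℝ))^2 * ((Nat.factorial (2*i) : ℝ) * s / (s-1)^(2*i+1))
          = (Nat.factorial (2*i) : ℝ)
            * ((b^2)^i * s / (((Nat.factorial i : ℝ))^2 * (s-1)^(2*i+1))) := by
            field_simp
        _ ≤ (4^i * ((Nat.factorial i : ℝ))^2)
            * ((b^2)^i * s / (((Nat.factorial i : ℝ))^2 * (s-1)^(2*i+1))) := h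
        _ = s/(s-1) * (4^i * (b^2)^i / (s-1)^(2*i)) := by
            rw [pow_succ]
            field_simp
            ring
    calc (0:ℝ) + ∑' n, ‖compMatrix c₁ c₂ i (n+1)‖ ^ (2:ℕ)
        ≤ cst * B := by linarith [htail_tsum]
      _ ≤ s/(s-1) * ((q^2)^i) := key


lemma tsum_CN (s b : ℝ) (hs1 : 1 < s) (hb0 : 0 ≤ b) (hsb : 2*b < s-1) (N : ℕ) :
    Summable (fun i => if i < N then (0:ℝ) else (s/(s-1)) * ((2*b/(s-1))^2)^i) ∧
    Real.sqrt (∑' i, if i < N then (0:ℝ) else (s/(s-1)) * ((2*b/(s-1))^2)^i)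
      = Real.sqrt ((s-1)*s/((s-1)^2 - (2*b)^2)) * (2*b/(s-1))^N := by
  have hs0 : (0:ℝ) < s - 1 := by linarith
  set q : ℝ := 2*b/(s-1) with hq
  have hq0 : 0 ≤ q := by positivity
  have hq1 : q < 1 := by
    rw [hq, div_lt_one hs0]; linarith
  have hq2 : q^2 < 1 := by nlinarith
  have hq20 : 0 ≤ q^2 := by positivity
  have hgeom : Summable (fun i : ℕ => (s/(s-1)) * (q^2)^i) :=
    (summable_geometric_of_lt_one hq20 hq2).mul_left _
  have hCN0 : ∀ i : ℕ, 0 ≤ (if i < N then (0:ℝ) else (s/(s-1)) * (q^2)^i) := by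
    intro i
    split
    · exact le_refl 0
    · positivity
  have hsummable : Summable (fun i => if i < N then (0:ℝ) else (s/(s-1)) * (q^2)^i) := by
    apply Summable.of_nonneg_of_le hCN0 _ hgeom
    intro i
    split
    · positivity
    · exact le_refl _
  refine ⟨hsummable, ?_⟩
  have htsum : ∑' i, (if i < N then (0:ℝ) else (s/(s-1)) * (q^2)^i)
      = (s-1)*s/((s-1)^2 - (2*b)^2) * (q^N)^2 := by
    rw [← Summable.sum_add_tsum_nat_add N hsummable]
    have h1 : ∑ i ∈ Finset.range N, (if i < N then (0:ℝ) else (s/(s-1)) * (q^2)^i) = 0 := by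
      apply Finset.sum_eq_zero
      intro i hi
      rw [if_pos (Finset.mem_range.mp hi)]
    have h2 : ∀ i : ℕ, (if i + N < N then (0:ℝ) else (s/(s-1)) * (q^2)^(i+N))
        = ((s/(s-1)) * (q^2)^N) * (q^2)^i := by
      intro i
      rw [if_neg (by omega), pow_add]
      ring
    rw [h1, zero_add, tsum_congr h2, tsum_mul_left,
      tsum_geometric_of_lt_one hq20 hq2]
    have hD : (s-1)^2 - (2*b)^2 > 0 := by nlinarith
    have hq2D : 1 - q^2 = ((s-1)^2 - (2*b)^2)/(s-1)^2 := by
      rw [hq, div_pow]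
      field_simp
    rw [hq2D]
    have e : (q^2)^N = (q^N)^2 := by rw [← pow_mul, ← pow_mul, mul_comm]
    rw [e]
    field_simp
  rw [htsum]
  have hD0 : (0:ℝ) ≤ (s-1)*s/((s-1)^2 - (2*b)^2) := by
    have hD : (s-1)^2 - (2*b)^2 > 0 := by nlinarith
    positivity
  rw [Real.sqrt_mul hD0, Real.sqrt_sq (by positivity)]


end CompOpAux

open CompOpAux

/-- Let `φ(s) = c₁ + c₂ 2^{-s}` with `c₂ ≠ 0` and `2 Re c₁ − 2|c₂| − 1 > 0`.
Then the matrix of `C_φ` defines a bounded linear map `T : ℓ²(ℕ) → ℓ²(ℕ₀)`, and for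
every integer `N ≥ 0` there is a bounded linear map `R` of rank at most `N` with
`‖T − R‖ ≤ √((2 Re c₁ − 1)(2 Re c₁) / ((2 Re c₁ − 1)² − (2|c₂|)²)) · (2|c₂|/(2 Re c₁ − 1))^N`;
in particular the `(N+1)`-st approximation number of `T` (the distance from `T` to the
operators of rank `< N + 1`) is bounded by the same quantity. -/
theorem approximation_numbers_comp_operator (c₁ c₂ : ℂ) (hc₂ : c₂ ≠ 0)
    (hcompact : 0 < 2 * c₁.re - 2 * ‖c₂‖ - 1) :
    ∃ T : lp (fun _ : ℕ => ℂ) 2 →L[ℂ] lp (fun _ : ℕ => ℂ) 2,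
      (∀ (x : lp (fun _ : ℕ => ℂ) 2) (i : ℕ), T x i = ∑' j : ℕ, compMatrix c₁ c₂ i j * x j) ∧
      ∀ N : ℕ,
        (∃ R : lp (fun _ : ℕ => ℂ) 2 →L[ℂ] lp (fun _ : ℕ => ℂ) 2,
          LinearMap.rank (R : lp (fun _ : ℕ => ℂ) 2 →ₗ[ℂ] lp (fun _ : ℕ => ℂ) 2) ≤ N ∧
          ‖T - R‖ ≤ Real.sqrt ((2 * c₁.re - 1) * (2 * c₁.re) /
              ((2 * c₁.re - 1) ^ 2 - (2 * ‖c₂‖) ^ 2)) *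
            (2 * ‖c₂‖ / (2 * c₁.re - 1)) ^ N) ∧
        sInf {d : ℝ | ∃ R : lp (fun _ : ℕ => ℂ) 2 →L[ℂ] lp (fun _ : ℕ => ℂ) 2,
            LinearMap.rank (R : lp (fun _ : ℕ => ℂ) 2 →ₗ[ℂ] lp (fun _ : ℕ => ℂ) 2) < N + 1 ∧
            d = ‖T - R‖} ≤
          Real.sqrt ((2 * c₁.re - 1) * (2 * c₁.re) /
              ((2 * c₁.re - 1) ^ 2 - (2 * ‖c₂‖) ^ 2)) *
            (2 * ‖c₂‖ / (2 * c₁.re - 1)) ^ N := by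
  have hb0 : 0 < ‖c₂‖ := norm_pos_iff.mpr hc₂
  have hs1 : 1 < 2*c₁.re := by linarith
  have hsb : 2*‖c₂‖ < 2*c₁.re - 1 := by linarith
  -- the row bound function
  have hCrow0 : ∀ i : ℕ, 0 ≤ (2*c₁.re/(2*c₁.re-1)) * ((2*‖c₂‖/(2*c₁.re-1))^2)^i := by
    intro i
    have h1 : (0:ℝ) < 2*c₁.re - 1 := by linarith
    positivity
  have hCrowSummable : Summable (fun i : ℕ =>
      (2*c₁.re/(2*c₁.re-1)) * ((2*‖c₂‖/(2*c₁.re-1))^2)^i) := by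
    apply Summable.mul_left
    apply summable_geometric_of_lt_one (by positivity)
    have h1 : (0:ℝ) < 2*c₁.re - 1 := by linarith
    have h2 : 2*‖c₂‖/(2*c₁.re-1) < 1 := by
      rw [div_lt_one h1]; linarith
    nlinarith [div_nonneg (by linarith : (0:ℝ) ≤ 2*‖c₂‖) h1.le]
  have hC : ∀ i (F : Finset ℕ), ∑ j ∈ F, ‖compMatrix c₁ c₂ i j‖ ^ (2:ℕ)
      ≤ (2*c₁.re/(2*c₁.re-1)) * ((2*‖c₂‖/(2*c₁.re-1))^2)^i := by
    intro i F
    obtain ⟨hsumm, hbd⟩ := row_summable_and_bound hc₂ hcompact i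
    exact (Summable.sum_le_tsum F (fun j _ => by positivity) hsumm).trans hbd
  obtain ⟨T, hTform, _⟩ := exists_op (compMatrix c₁ c₂) _ hCrow0 hC hCrowSummable
  refine ⟨T, hTform, ?_⟩
  intro N
  -- tail operator
  obtain ⟨hCNsumm, hCNsqrt⟩ := tsum_CN (2*c₁.re) (‖c₂‖) hs1 hb0.le hsb N
  have hCN0 : ∀ i : ℕ, 0 ≤ (if i < N then (0:ℝ)
      else (2*c₁.re/(2*c₁.re-1)) * ((2*‖c₂‖/(2*c₁.re-1))^2)^i) := by
    intro i
    split
    · exact le_refl 0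
    · exact hCrow0 i
  have hCN : ∀ i (F : Finset ℕ),
      ∑ j ∈ F, ‖(fun i j => if i < N then 0 else compMatrix c₁ c₂ i j) i j‖ ^ (2:ℕ)
      ≤ (if i < N then (0:ℝ)
          else (2*c₁.re/(2*c₁.re-1)) * ((2*‖c₂‖/(2*c₁.re-1))^2)^i) := by
    intro i F
    by_cases hi : i < N
    · simp only [if_pos hi]
      simp
    · simp only [if_neg hi]
      exact hC i F
  obtain ⟨S, hSform, hSnorm⟩ := exists_op (fun i j => if i < N then 0 else compMatrix c₁ c₂ i j)
    _ hCN0 hCN hCNsumm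
  set R := T - S with hR
  have hvanish : ∀ x : lp (fun _ : ℕ => ℂ) 2, ∀ i : ℕ, N ≤ i → R x i = 0 := by
    intro x i hi
    have h1 : R x = T x - S x := by rw [hR]; rfl
    have h2 : (R x : ℕ → ℂ) i = T x i - S x i := by
      rw [h1, lp.coeFn_sub, Pi.sub_apply]
    rw [h2, hTform, hSform]
    have h3 : ∀ j : ℕ, (if i < N then 0 else compMatrix c₁ c₂ i j) * x j
        = compMatrix c₁ c₂ i j * x j := by
      intro j
      rw [if_neg (by omega)]
    rw [tsum_congr h3]
    exact sub_self _
  have hrank : LinearMap.rank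
      (R : lp (fun _ : ℕ => ℂ) 2 →ₗ[ℂ] lp (fun _ : ℕ => ℂ) 2) ≤ N :=
    rank_le_of_vanish R N hvanish
  have hTR : T - R = S := sub_sub_cancel T S
  have hnorm : ‖T - R‖ ≤ Real.sqrt ((2 * c₁.re - 1) * (2 * c₁.re) /
      ((2 * c₁.re - 1) ^ 2 - (2 * ‖c₂‖) ^ 2)) *
      (2 * ‖c₂‖ / (2 * c₁.re - 1)) ^ N := by
    rw [hTR]
    exact hSnorm.trans (le_of_eq hCNsqrt)
  have hlt : LinearMap.rank (R : lp (fun _ : ℕ => ℂ) 2 →ₗ[ℂ] lp (fun _ : ℕ => ℂ) 2)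
      < (N : Cardinal) + 1 := by
    calc LinearMap.rank (R : lp (fun _ : ℕ => ℂ) 2 →ₗ[ℂ] lp (fun _ : ℕ => ℂ) 2)
        ≤ (N : Cardinal) := hrank
      _ < (N : Cardinal) + 1 := by
          norm_cast
          omega
  refine ⟨⟨R, hrank, hnorm⟩, le_trans (csInf_le ?_ ?_) hnorm⟩
  · refine ⟨0, ?_⟩
    rintro d ⟨R', _, rfl⟩
    exact norm_nonneg _
  · exact ⟨R, hlt, rfl⟩
end
end
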